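/- arXiv:1008.0595 — 16 statements merged into one kernel-verified Lean document; each statement's English description precedes it below -/
import Mathlib

section
/- Let n ≥ 1 and k ≥ 3, and let S_1, …, S_k be k pairwise distinct n-element finite sets such that every two of them share an immediate subset (i.e., |S_i ∩ S_j| = n − 1 for all i ≠ j). Then either |S_1 ∩ ⋯ ∩ S_k| = n − 1 or |S_1 ∪ ⋯ ∪ S_k| = n + 1, but not both. -/
/-- Let `n ≥ 1`, `k ≥ 3`, and `S 1, …, S k` be pairwise distinct `n`-element
finite sets such that every two of them share an immediate subset
(`|S i ∩ S j| = n - 1` for `i ≠ j`).  Then either the intersection of all of them has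
`n - 1` elements, or the union of all of them has `n + 1` elements, but not both. -/
theorem immediate_subset_or_superset (n k : ℕ) (hn : 1 ≤ n) (hk : 3 ≤ k)
    (S : Fin k → Finset ℕ)
    (hcard : ∀ i, (S i).card = n)
    (hinj : Function.Injective S)
    (hpair : ∀ i j, i ≠ j → (S i ∩ S j).card = n - 1) :
    Xor'
      ((Finset.univ.inf' ⟨⟨0, by omega⟩, Finset.mem_univ _⟩ S).card = n - 1)
      ((Finset.univ.sup S).card = n + 1) := by
  obtain ⟨i0, i1, i2, h01, h02, h12⟩ :
      ∃ i0 i1 i2 : Fin k, i0 ≠ i1 ∧ i0 ≠ i2 ∧ i1 ≠ i2 :=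
    ⟨⟨0, by omega⟩, ⟨1, by omega⟩, ⟨2, by omega⟩,
      fun h => by simpa using congrArg Fin.val h,
      fun h => by simpa using congrArg Fin.val h,
      fun h => by simpa using congrArg Fin.val h⟩
  have hcAB : (S i0 ∩ S i1).card = n - 1 := hpair _ _ h01
  have hcAC : (S i0 ∩ S i2).card = n - 1 := hpair _ _ h02
  have hcBC : (S i1 ∩ S i2).card = n - 1 := hpair _ _ h12
  have hinterEq : (S i0 ∩ S i2) ∩ (S i1 ∩ S i2) = S i0 ∩ S i1 ∩ S i2 := by
    ext x; simp only [Finset.mem_inter]; tauto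
  by_cases h3 : (S i0 ∩ S i1 ∩ S i2).card = n - 1
  · -- Case A: all sets contain the common (n-1)-set T = S i0 ∩ S i1
    have hTsub2 : S i0 ∩ S i1 ∩ S i2 = S i0 ∩ S i1 :=
      Finset.eq_of_subset_of_card_le Finset.inter_subset_left (by omega)
    have hTC : S i0 ∩ S i1 ⊆ S i2 := by
      rw [← hTsub2]; exact Finset.inter_subset_right
    have hTAC : S i0 ∩ S i1 = S i0 ∩ S i2 :=
      Finset.eq_of_subset_of_card_le
        (Finset.subset_inter Finset.inter_subset_left hTC) (by omega)
    have hTBC : S i0 ∩ S i1 = S i1 ∩ S i2 :=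
      Finset.eq_of_subset_of_card_le
        (Finset.subset_inter Finset.inter_subset_right hTC) (by omega)
    -- extract the extra elements a, b, c of S i0, S i1, S i2
    have exelt : ∀ i : Fin k, S i0 ∩ S i1 ⊆ S i →
        ∃ x, x ∉ S i0 ∩ S i1 ∧ S i = insert x (S i0 ∩ S i1) := by
      intro i hi
      have hpos : 0 < (S i \ (S i0 ∩ S i1)).card := by
        rw [Finset.card_sdiff_of_subset hi, hcard, hcAB]; omega
      obtain ⟨x, hx⟩ := Finset.card_pos.mp hpos
      rw [Finset.mem_sdiff] at hx
      refine ⟨x, hx.2, (Finset.eq_of_subset_of_card_le ?_ ?_).symm⟩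
      · intro y hy
        rcases Finset.mem_insert.mp hy with rfl | hy
        · exact hx.1
        · exact hi hy
      · rw [hcard, Finset.card_insert_of_notMem hx.2, hcAB]; omega
    obtain ⟨a, haT, haA⟩ := exelt i0 Finset.inter_subset_left
    obtain ⟨b, hbT, hbB⟩ := exelt i1 Finset.inter_subset_right
    obtain ⟨c, hcT, hcC⟩ := exelt i2 hTC
    have haA' : a ∈ S i0 := by rw [haA]; exact Finset.mem_insert_self _ _
    have hbB' : b ∈ S i1 := by rw [hbB]; exact Finset.mem_insert_self _ _
    have hcC' : c ∈ S i2 := by rw [hcC]; exact Finset.mem_insert_self _ _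
    have hab : a ≠ b := by
      rintro rfl
      exact haT (Finset.mem_inter.mpr ⟨haA', hbB'⟩)
    have hac : a ≠ c := by
      rintro rfl
      exact haT (hTAC ▸ Finset.mem_inter.mpr ⟨haA', hcC'⟩)
    have hbc : b ≠ c := by
      rintro rfl
      exact hbT (hTBC ▸ Finset.mem_inter.mpr ⟨hbB', hcC'⟩)
    -- every S j contains T
    have hTall : ∀ j, S i0 ∩ S i1 ⊆ S j := by
      intro j
      by_contra hns
      obtain ⟨t, htT, htj⟩ := Finset.not_subset.mp hns
      have hn2 : 2 ≤ n := by
        have : 0 < (S i0 ∩ S i1).card := Finset.card_pos.mpr ⟨t, htT⟩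
        omega
      have hji0 : j ≠ i0 := by rintro rfl; exact hns Finset.inter_subset_left
      have hji1 : j ≠ i1 := by rintro rfl; exact hns Finset.inter_subset_right
      have hji2 : j ≠ i2 := by rintro rfl; exact hns hTC
      have hcSjT : (S j ∩ (S i0 ∩ S i1)).card ≤ n - 2 := by
        have hsub : S j ∩ (S i0 ∩ S i1) ⊆ (S i0 ∩ S i1).erase t := by
          intro x hx
          rcases Finset.mem_inter.mp hx with ⟨hx1, hx2⟩
          exact Finset.mem_erase.mpr ⟨fun h => htj (h ▸ hx1), hx2⟩
        have := Finset.card_le_card hsub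
        rw [Finset.card_erase_of_mem htT, hcAB] at this
        omega
      have key : ∀ i x, j ≠ i → S i = insert x (S i0 ∩ S i1) → x ∈ S j := by
        intro i x hji hix
        by_contra hxj
        have hsub : S j ∩ S i ⊆ S j ∩ (S i0 ∩ S i1) := by
          intro y hy
          rcases Finset.mem_inter.mp hy with ⟨hy1, hy2⟩
          rw [hix] at hy2
          rcases Finset.mem_insert.mp hy2 with rfl | hy2
          · exact absurd hy1 hxj
          · exact Finset.mem_inter.mpr ⟨hy1, hy2⟩
        have := Finset.card_le_card hsub
        rw [hpair j i hji] at this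
        omega
      have haj : a ∈ S j := key i0 a hji0 haA
      have hbj : b ∈ S j := key i1 b hji1 hbB
      have hcj : c ∈ S j := key i2 c hji2 hcC
      have hge : n - 2 ≤ (S j ∩ (S i0 ∩ S i1)).card := by
        have hsub2 : S j ∩ S i0 ⊆ insert a (S j ∩ (S i0 ∩ S i1)) := by
          intro y hy
          rcases Finset.mem_inter.mp hy with ⟨hy1, hy2⟩
          rw [haA] at hy2
          rcases Finset.mem_insert.mp hy2 with rfl | hy2
          · exact Finset.mem_insert_self _ _
          · exact Finset.mem_insert_of_mem (Finset.mem_inter.mpr ⟨hy1, hy2⟩)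
        have h1 := Finset.card_le_card hsub2
        have h2 := Finset.card_insert_le a (S j ∩ (S i0 ∩ S i1))
        rw [hpair j i0 hji0] at h1
        omega
      have habc : ({a, b, c} : Finset ℕ) ⊆ S j \ (S i0 ∩ S i1) := by
        intro x hx
        simp only [Finset.mem_insert, Finset.mem_singleton] at hx
        rcases hx with rfl | rfl | rfl
        · exact Finset.mem_sdiff.mpr ⟨haj, haT⟩
        · exact Finset.mem_sdiff.mpr ⟨hbj, hbT⟩
        · exact Finset.mem_sdiff.mpr ⟨hcj, hcT⟩
      have hcabc : ({a, b, c} : Finset ℕ).card = 3 := by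
        rw [Finset.card_insert_of_notMem (by simp [hab, hac]),
          Finset.card_insert_of_notMem (by simp [hbc]), Finset.card_singleton]
      have hsdiff : 3 ≤ (S j \ (S i0 ∩ S i1)).card := by
        rw [← hcabc]; exact Finset.card_le_card habc
      have hsplit := Finset.card_inter_add_card_sdiff (S j) (S i0 ∩ S i1)
      rw [hcard] at hsplit
      omega
    -- the infimum equals T
    have hInf : ∀ H : (Finset.univ : Finset (Fin k)).Nonempty,
        Finset.univ.inf' H S = S i0 ∩ S i1 := by
      intro H
      apply le_antisymm
      · exact le_inf (Finset.inf'_le S (Finset.mem_univ i0))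
          (Finset.inf'_le S (Finset.mem_univ i1))
      · exact Finset.le_inf' H S fun j _ => hTall j
    -- the union is too big
    have hsupbig : n + 2 ≤ (Finset.univ.sup S).card := by
      have hsub : insert a (insert b (insert c (S i0 ∩ S i1))) ⊆ Finset.univ.sup S := by
        intro x hx
        rcases Finset.mem_insert.mp hx with rfl | hx
        · exact Finset.mem_sup.mpr ⟨i0, Finset.mem_univ _, haA'⟩
        rcases Finset.mem_insert.mp hx with rfl | hx
        · exact Finset.mem_sup.mpr ⟨i1, Finset.mem_univ _, hbB'⟩
        rcases Finset.mem_insert.mp hx with rfl | hx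
        · exact Finset.mem_sup.mpr ⟨i2, Finset.mem_univ _, hcC'⟩
        · exact Finset.mem_sup.mpr ⟨i0, Finset.mem_univ _,
            Finset.inter_subset_left hx⟩
      have hc : (insert a (insert b (insert c (S i0 ∩ S i1)))).card = n + 2 := by
        rw [Finset.card_insert_of_notMem (by simp [hab, hac, haT]),
          Finset.card_insert_of_notMem (by simp [hbc, hbT]),
          Finset.card_insert_of_notMem hcT, hcAB]
        omega
      rw [← hc]; exact Finset.card_le_card hsub
    refine Or.inl ⟨?_, by omega⟩
    exact (congrArg Finset.card (hInf _)).trans hcAB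
  · -- Case B: all sets are contained in U = S i0 ∪ S i1 ∪ S i2, which has n+1 elements
    have hn2 : 2 ≤ n := by
      by_contra hc
      apply h3
      have hAB0 : S i0 ∩ S i1 = ∅ := Finset.card_eq_zero.mp (by omega)
      rw [hAB0, Finset.empty_inter, Finset.card_empty]
      omega
    have hABCle : (S i0 ∩ S i1 ∩ S i2).card ≤ n - 1 := by
      have : (S i0 ∩ S i1 ∩ S i2).card ≤ (S i0 ∩ S i1).card :=
        Finset.card_le_card Finset.inter_subset_left
      omega
    have hACBC := Finset.card_union_add_card_inter (S i0 ∩ S i2) (S i1 ∩ S i2)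
    rw [hinterEq, hcAC, hcBC] at hACBC
    have hsubC : (S i0 ∩ S i2) ∪ (S i1 ∩ S i2) ⊆ S i2 :=
      Finset.union_subset Finset.inter_subset_right Finset.inter_subset_right
    have hsubCcard := Finset.card_le_card hsubC
    rw [hcard] at hsubCcard
    have hABC : (S i0 ∩ S i1 ∩ S i2).card = n - 2 := by omega
    -- card of U
    have hU1 := Finset.card_union_add_card_inter (S i0) (S i1)
    rw [hcAB, hcard, hcard] at hU1
    have hU2 := Finset.card_union_add_card_inter (S i0 ∪ S i1) (S i2)
    rw [Finset.union_inter_distrib_right, hcard] at hU2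
    have hUcard : (S i0 ∪ S i1 ∪ S i2).card = n + 1 := by omega
    -- every S j is contained in U
    have hsubU : ∀ j, S j ⊆ S i0 ∪ S i1 ∪ S i2 := by
      intro j
      by_cases hj0 : j = i0
      · subst hj0; exact Finset.subset_union_left.trans Finset.subset_union_left
      by_cases hj1 : j = i1
      · subst hj1; exact Finset.subset_union_right.trans Finset.subset_union_left
      by_cases hj2 : j = i2
      · subst hj2; exact Finset.subset_union_right
      have step : ∀ p q : Fin k, j ≠ p → j ≠ q →
          (S j ∩ (S p ∩ S q)).card ≠ n - 1 → S j ⊆ S p ∪ S q := by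
        intro p q hjp hjq hne
        have hle : (S j ∩ (S p ∩ S q)).card ≤ n - 1 := by
          have hsub : S j ∩ (S p ∩ S q) ⊆ S j ∩ S p := by
            intro x hx
            rcases Finset.mem_inter.mp hx with ⟨hx1, hx2⟩
            exact Finset.mem_inter.mpr ⟨hx1, (Finset.mem_inter.mp hx2).1⟩
          have := Finset.card_le_card hsub
          rw [hpair j p hjp] at this
          exact this
        have hpq := Finset.card_union_add_card_inter (S j ∩ S p) (S j ∩ S q)
        rw [hpair j p hjp, hpair j q hjq] at hpq
        have he1 : (S j ∩ S p) ∪ (S j ∩ S q) = S j ∩ (S p ∪ S q) :=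
          (Finset.inter_union_distrib_left _ _ _).symm
        have he2 : (S j ∩ S p) ∩ (S j ∩ S q) = S j ∩ (S p ∩ S q) := by
          ext x; simp only [Finset.mem_inter]; tauto
        rw [he1, he2] at hpq
        have hcard_ge : n ≤ (S j ∩ (S p ∪ S q)).card := by omega
        have heq : S j ∩ (S p ∪ S q) = S j :=
          Finset.eq_of_subset_of_card_le Finset.inter_subset_left
            (by rw [hcard]; exact hcard_ge)
        intro x hx
        rw [← heq] at hx
        exact (Finset.mem_inter.mp hx).2
      by_cases c1 : (S j ∩ (S i0 ∩ S i1)).card = n - 1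
      · by_cases c2 : (S j ∩ (S i0 ∩ S i2)).card = n - 1
        · exfalso
          have hABj : S i0 ∩ S i1 ⊆ S j := by
            have : S j ∩ (S i0 ∩ S i1) = S i0 ∩ S i1 :=
              Finset.eq_of_subset_of_card_le Finset.inter_subset_right
                (by rw [c1, hcAB])
            rw [← this]; exact Finset.inter_subset_left
          have hACj : S i0 ∩ S i2 ⊆ S j := by
            have : S j ∩ (S i0 ∩ S i2) = S i0 ∩ S i2 :=
              Finset.eq_of_subset_of_card_le Finset.inter_subset_right
                (by rw [c2, hcAC])
            rw [← this]; exact Finset.inter_subset_left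
          have hiABAC : (S i0 ∩ S i1) ∩ (S i0 ∩ S i2) = S i0 ∩ S i1 ∩ S i2 := by
            ext x; simp only [Finset.mem_inter]; tauto
          have hABAC := Finset.card_union_add_card_inter (S i0 ∩ S i1) (S i0 ∩ S i2)
          rw [hiABAC, hcAB, hcAC, hABC] at hABAC
          have hunion_eq_A : (S i0 ∩ S i1) ∪ (S i0 ∩ S i2) = S i0 :=
            Finset.eq_of_subset_of_card_le
              (Finset.union_subset Finset.inter_subset_left Finset.inter_subset_left)
              (by rw [hcard]; omega)
          have hAj : S i0 ⊆ S j := hunion_eq_A ▸ Finset.union_subset hABj hACj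
          have hAe : S i0 = S j :=
            Finset.eq_of_subset_of_card_le hAj (by rw [hcard, hcard])
          exact hj0 (hinj hAe).symm
        · refine (step i0 i2 hj0 hj2 c2).trans ?_
          exact Finset.union_subset
            (Finset.subset_union_left.trans Finset.subset_union_left)
            Finset.subset_union_right
      · exact (step i0 i1 hj0 hj1 c1).trans Finset.subset_union_left
    -- the sup equals U
    have hSup : Finset.univ.sup S = S i0 ∪ S i1 ∪ S i2 := by
      apply le_antisymm
      · exact Finset.sup_le fun j _ => hsubU j
      · refine Finset.union_subset (Finset.union_subset ?_ ?_) ?_ <;>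
          exact fun x hx => Finset.mem_sup.mpr ⟨_, Finset.mem_univ _, hx⟩
    -- the inf is too small
    have hInfSmall : ∀ H : (Finset.univ : Finset (Fin k)).Nonempty,
        (Finset.univ.inf' H S).card ≤ n - 2 := by
      intro H
      have hsub : Finset.univ.inf' H S ⊆ S i0 ∩ S i1 ∩ S i2 :=
        le_inf (le_inf (Finset.inf'_le S (Finset.mem_univ i0))
          (Finset.inf'_le S (Finset.mem_univ i1)))
          (Finset.inf'_le S (Finset.mem_univ i2))
      have := Finset.card_le_card hsub
      omega
    refine Or.inr ⟨by rw [hSup, hUcard], ?_⟩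
    have := hInfSmall ⟨⟨0, by omega⟩, Finset.mem_univ _⟩
    omega
end

section
/- Suppose G is a JIS graph and L and L' are two distinct maxcliques in G. Then L and L' share at most two vertices, i.e., |V(L) ∩ V(L')| ≤ 2. -/
/-- A finite simple graph `G` is JIS (isomorphic to an induced subgraph of a Johnson graph)
if for some positive integer `n` there is an injective assignment `v ↦ S v` of `n`-element
finite subsets of `ℕ` to the vertices of `G` such that two distinct vertices `v` and `w`
are adjacent if and only if `|S v ∩ S w| = n - 1`. -/
def IsJIS {V : Type*} [Fintype V] (G : SimpleGraph V) : Prop :=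
  ∃ n : ℕ, 0 < n ∧ ∃ S : V → Finset ℕ, Function.Injective S ∧
    (∀ v, (S v).card = n) ∧
    ∀ v w : V, v ≠ w → (G.Adj v w ↔ (S v ∩ S w).card = n - 1)

/-- A maxclique of `G` is a set of vertices that is a clique and is maximal under
inclusion among cliques of `G`. -/
def IsMaxClique {V : Type*} (G : SimpleGraph V) (L : Set V) : Prop :=
  G.IsClique L ∧ ∀ L' : Set V, G.IsClique L' → L ⊆ L' → L' = L

open Finset

/-- If two distinct `(m+1)`-sets both contain an `m`-set `A`, they intersect in exactly
`m` elements. -/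
lemma sun_adj {m : ℕ} {A Sx Sy : Finset ℕ} (hA : A.card = m)
    (hx : Sx.card = m + 1) (hy : Sy.card = m + 1) (hAx : A ⊆ Sx) (hAy : A ⊆ Sy)
    (hne : Sx ≠ Sy) : (Sx ∩ Sy).card = m := by
  have h1 : m ≤ (Sx ∩ Sy).card := hA ▸ card_le_card (subset_inter hAx hAy)
  have h2 : (Sx ∩ Sy).card ≤ m + 1 := hx ▸ card_le_card inter_subset_left
  rcases Nat.lt_or_ge (Sx ∩ Sy).card (m + 1) with h | h
  · omega
  · exfalso
    have hxe : Sx ∩ Sy = Sx :=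
      eq_of_subset_of_card_le (inter_subset_left : Sx ∩ Sy ⊆ Sx) (by omega) |>.symm.symm
    have hye : Sx ∩ Sy = Sy :=
      eq_of_subset_of_card_le (inter_subset_right : Sx ∩ Sy ⊆ Sy) (by omega) |>.symm.symm
    exact hne (hxe ▸ hye)

/-- If two distinct `(m+1)`-sets are both contained in an `(m+2)`-set `B`, they
intersect in exactly `m` elements. -/
lemma moon_adj {m : ℕ} {B Sx Sy : Finset ℕ} (hB : B.card = m + 2)
    (hx : Sx.card = m + 1) (hy : Sy.card = m + 1) (hBx : Sx ⊆ B) (hBy : Sy ⊆ B)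
    (hne : Sx ≠ Sy) : (Sx ∩ Sy).card = m := by
  have hsum : (Sx ∪ Sy).card + (Sx ∩ Sy).card = (m + 1) + (m + 1) := by
    rw [card_union_add_card_inter, hx, hy]
  have h2 : (Sx ∪ Sy).card ≤ m + 2 := hB ▸ card_le_card (union_subset hBx hBy)
  have h3 : m + 1 ≤ (Sx ∪ Sy).card := hx ▸ card_le_card subset_union_left
  rcases Nat.lt_or_ge (m + 1) (Sx ∪ Sy).card with h | h
  · omega
  · exfalso
    have hxe : Sx = Sx ∪ Sy :=
      eq_of_subset_of_card_le subset_union_left (by omega)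
    have hye : Sy = Sx ∪ Sy :=
      eq_of_subset_of_card_le subset_union_right (by omega)
    exact hne (hxe.trans hye.symm)

/-- Sun lemma: if three pairwise-distinct `(m+1)`-sets all contain a common `m`-set `A`,
and `Sz` is an `(m+1)`-set intersecting each of them in `m` elements, then `A ⊆ Sz`. -/
lemma sun_lemma {m : ℕ} {A Su Sv Sw Sz : Finset ℕ}
    (hA : A.card = m)
    (hSu : Su.card = m + 1) (hSv : Sv.card = m + 1) (hSw : Sw.card = m + 1)
    (hSz : Sz.card = m + 1)
    (hAu : A ⊆ Su) (hAv : A ⊆ Sv) (hAw : A ⊆ Sw)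
    (huv : Su ≠ Sv) (huw : Su ≠ Sw) (hvw : Sv ≠ Sw)
    (hzu : (Sz ∩ Su).card = m) (hzv : (Sz ∩ Sv).card = m) (hzw : (Sz ∩ Sw).card = m) :
    A ⊆ Sz := by
  by_contra h
  obtain ⟨t, htA, htz⟩ := not_subset.mp h
  have hm : 1 ≤ m := by
    have : 0 < A.card := card_pos.mpr ⟨t, htA⟩
    omega
  have hAz : (A ∩ Sz).card ≤ m - 1 := by
    have hss : A ∩ Sz ⊂ A := by
      refine ⟨inter_subset_left, fun hsub => htz ?_⟩
      exact (mem_inter.mp (hsub htA)).2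
    have := card_lt_card hss
    omega
  have key : ∀ S : Finset ℕ, S.card = m + 1 → A ⊆ S → (Sz ∩ S).card = m →
      ∃ a, a ∉ A ∧ S = insert a A ∧ a ∈ Sz := by
    intro S hS hAS hzS
    have hd : (S \ A).card = 1 := by rw [card_sdiff_of_subset hAS, hS, hA]; omega
    obtain ⟨a, ha⟩ := card_eq_one.mp hd
    have haSA : a ∈ S \ A := ha ▸ mem_singleton_self a
    have haA : a ∉ A := (mem_sdiff.mp haSA).2
    have hSeq : S = insert a A := by
      apply Subset.antisymm
      · intro x hx
        by_cases hxA : x ∈ A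
        · exact mem_insert_of_mem hxA
        · have hx' : x ∈ S \ A := mem_sdiff.mpr ⟨hx, hxA⟩
          rw [ha, mem_singleton] at hx'
          rw [hx']; exact mem_insert_self a A
      · intro x hx
        rcases mem_insert.mp hx with h1 | h2
        · exact h1 ▸ (mem_sdiff.mp haSA).1
        · exact hAS h2
    refine ⟨a, haA, hSeq, ?_⟩
    by_contra haz
    have hsub : Sz ∩ S ⊆ A ∩ Sz := by
      intro x hx
      rcases mem_inter.mp hx with ⟨hx1, hx2⟩
      rw [hSeq] at hx2
      rcases mem_insert.mp hx2 with h1 | h2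
      · exact absurd (h1 ▸ hx1) haz
      · exact mem_inter.mpr ⟨h2, hx1⟩
    have := card_le_card hsub
    omega
  obtain ⟨a, haA, hSueq, haz⟩ := key Su hSu hAu hzu
  obtain ⟨b, hbA, hSveq, hbz⟩ := key Sv hSv hAv hzv
  obtain ⟨c, hcA, hSweq, hcz⟩ := key Sw hSw hAw hzw
  have hab : a ≠ b := fun h => huv (by rw [hSueq, hSveq, h])
  have hac : a ≠ c := fun h => huw (by rw [hSueq, hSweq, h])
  have hbc : b ≠ c := fun h => hvw (by rw [hSveq, hSweq, h])
  -- lower bound on (A ∩ Sz).card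
  have hlow : m - 1 ≤ (A ∩ Sz).card := by
    have hsub : Sz ∩ Su ⊆ insert a (A ∩ Sz) := by
      intro x hx
      rcases mem_inter.mp hx with ⟨hx1, hx2⟩
      rw [hSueq] at hx2
      rcases mem_insert.mp hx2 with h1 | h2
      · rw [h1]; exact mem_insert_self a _
      · exact mem_insert_of_mem (mem_inter.mpr ⟨h2, hx1⟩)
    have := card_le_card hsub
    have := card_insert_le a (A ∩ Sz)
    omega
  -- the set {a,b,c} ∪ (A ∩ Sz) ⊆ Sz has too many elements
  have hD : insert a (insert b (insert c (A ∩ Sz))) ⊆ Sz := by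
    intro x hx
    rcases mem_insert.mp hx with h1 | hx
    · exact h1 ▸ haz
    rcases mem_insert.mp hx with h1 | hx
    · exact h1 ▸ hbz
    rcases mem_insert.mp hx with h1 | hx
    · exact h1 ▸ hcz
    · exact (mem_inter.mp hx).2
  have hcardD : (insert a (insert b (insert c (A ∩ Sz)))).card = (A ∩ Sz).card + 3 := by
    have hc : c ∉ A ∩ Sz := fun h => hcA (mem_inter.mp h).1
    have hb : b ∉ insert c (A ∩ Sz) := by
      intro h
      rcases mem_insert.mp h with h1 | h2
      · exact hbc h1
      · exact hbA (mem_inter.mp h2).1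
    have ha : a ∉ insert b (insert c (A ∩ Sz)) := by
      intro h
      rcases mem_insert.mp h with h1 | h
      · exact hab h1
      rcases mem_insert.mp h with h1 | h2
      · exact hac h1
      · exact haA (mem_inter.mp h2).1
    rw [card_insert_of_notMem ha, card_insert_of_notMem hb, card_insert_of_notMem hc]
  have := card_le_card hD
  omega

/-- Moon lemma: if three pairwise-distinct `(m+1)`-sets are all contained in a common
`(m+2)`-set `B`, and `Sz` is an `(m+1)`-set intersecting each of them in `m` elements,
then `Sz ⊆ B`. -/
lemma moon_lemma {m : ℕ} {B Su Sv Sw Sz : Finset ℕ}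
    (hB : B.card = m + 2)
    (hSu : Su.card = m + 1) (hSv : Sv.card = m + 1) (hSw : Sw.card = m + 1)
    (hSz : Sz.card = m + 1)
    (hBu : Su ⊆ B) (hBv : Sv ⊆ B) (hBw : Sw ⊆ B)
    (huv : Su ≠ Sv) (huw : Su ≠ Sw) (hvw : Sv ≠ Sw)
    (hzu : (Sz ∩ Su).card = m) (hzv : (Sz ∩ Sv).card = m) (hzw : (Sz ∩ Sw).card = m) :
    Sz ⊆ B := by
  by_contra h
  obtain ⟨t, htz, htB⟩ := not_subset.mp h
  have hZB : (Sz ∩ B).card ≤ m := by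
    have hss : Sz ∩ B ⊂ Sz := by
      refine ⟨inter_subset_left, fun hsub => htB ?_⟩
      exact (mem_inter.mp (hsub htz)).2
    have := card_lt_card hss
    omega
  have key : ∀ S : Finset ℕ, S.card = m + 1 → S ⊆ B → (Sz ∩ S).card = m →
      ∃ b, b ∈ B ∧ S = B.erase b ∧ b ∉ Sz := by
    intro S hS hSB hzS
    have hd : (B \ S).card = 1 := by rw [card_sdiff_of_subset hSB, hS, hB]; omega
    obtain ⟨b, hb⟩ := card_eq_one.mp hd
    have hbBS : b ∈ B \ S := hb ▸ mem_singleton_self b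
    have hbB : b ∈ B := (mem_sdiff.mp hbBS).1
    have hbS : b ∉ S := (mem_sdiff.mp hbBS).2
    have hSeq : S = B.erase b := by
      apply Subset.antisymm
      · intro x hx
        exact mem_erase.mpr ⟨fun h => hbS (h ▸ hx), hSB hx⟩
      · intro x hx
        rcases mem_erase.mp hx with ⟨hxb, hxB⟩
        by_contra hxS
        have : x ∈ B \ S := mem_sdiff.mpr ⟨hxB, hxS⟩
        rw [hb, mem_singleton] at this
        exact hxb this
    -- Sz ∩ S = Sz ∩ B
    have hsub : Sz ∩ S ⊆ Sz ∩ B := inter_subset_inter Subset.rfl hSB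
    have heq : Sz ∩ S = Sz ∩ B :=
      eq_of_subset_of_card_le hsub (by omega)
    refine ⟨b, hbB, hSeq, fun hbz => ?_⟩
    have : b ∈ Sz ∩ S := heq ▸ mem_inter.mpr ⟨hbz, hbB⟩
    exact hbS (mem_inter.mp this).2
  obtain ⟨a, haB, hSueq, haz⟩ := key Su hSu hBu hzu
  obtain ⟨b, hbB, hSveq, hbz⟩ := key Sv hSv hBv hzv
  obtain ⟨c, hcB, hSweq, hcz⟩ := key Sw hSw hBw hzw
  have hab : a ≠ b := fun h => huv (by rw [hSueq, hSveq, h])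
  have hac : a ≠ c := fun h => huw (by rw [hSueq, hSweq, h])
  have hbc : b ≠ c := fun h => hvw (by rw [hSveq, hSweq, h])
  -- Sz ∩ B avoids a, b, c
  have hZBeq : (Sz ∩ B).card = m := by
    have hsub : Sz ∩ Su ⊆ Sz ∩ B := inter_subset_inter Subset.rfl hBu
    have := card_le_card hsub
    omega
  have hsub : Sz ∩ B ⊆ ((B.erase a).erase b).erase c := by
    intro x hx
    rcases mem_inter.mp hx with ⟨hx1, hx2⟩
    have hxa : x ≠ a := fun h => haz (h ▸ hx1)
    have hxb : x ≠ b := fun h => hbz (h ▸ hx1)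
    have hxc : x ≠ c := fun h => hcz (h ▸ hx1)
    exact mem_erase.mpr ⟨hxc, mem_erase.mpr ⟨hxb, mem_erase.mpr ⟨hxa, hx2⟩⟩⟩
  have hm : 1 ≤ m := by
    have hsub3 : ({a, b, c} : Finset ℕ) ⊆ B := by
      intro x hx
      simp only [mem_insert, mem_singleton] at hx
      rcases hx with h | h | h
      · exact h ▸ haB
      · exact h ▸ hbB
      · exact h ▸ hcB
    have h3c : ({a, b, c} : Finset ℕ).card = 3 := by
      rw [card_insert_of_notMem (by simp [hab, hac]),
        card_insert_of_notMem (by simp [hbc]), card_singleton]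
    have := card_le_card hsub3
    rw [h3c, hB] at this
    omega
  have hcard3 : (((B.erase a).erase b).erase c).card + 3 = B.card := by
    have hbB' : b ∈ B.erase a := mem_erase.mpr ⟨hab.symm, hbB⟩
    have hcB' : c ∈ (B.erase a).erase b :=
      mem_erase.mpr ⟨hbc.symm, mem_erase.mpr ⟨hac.symm, hcB⟩⟩
    rw [card_erase_of_mem hcB', card_erase_of_mem hbB', card_erase_of_mem haB, hB]
    omega
  have := card_le_card hsub
  rw [hB] at hcard3
  omega

/-- two distinct maxcliques of a JIS graph share at most two vertices. -/
theorem maxcliques_share_at_most_two {V : Type*} [Fintype V] (G : SimpleGraph V)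
    (hG : IsJIS G) (L L' : Set V) (hL : IsMaxClique G L) (hL' : IsMaxClique G L')
    (hne : L ≠ L') :
    (L ∩ L').ncard ≤ 2 := by
  obtain ⟨n, hn, S, hinj, hcard, hadj⟩ := hG
  obtain ⟨m, rfl⟩ : ∃ m, n = m + 1 := ⟨n - 1, by omega⟩
  by_contra hcon
  push_neg at hcon
  rw [Set.two_lt_ncard (Set.toFinite _)] at hcon
  obtain ⟨u, hu, v, hv, w, hw, huv, huw, hvw⟩ := hcon
  -- basic facts
  have hcard' : ∀ x : V, (S x).card = m + 1 := hcard
  have madj : ∀ x y : V, x ≠ y → G.Adj x y → (S x ∩ S y).card = m := by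
    intro x y hxy h
    have := (hadj x y hxy).mp h
    simpa using this
  have huL : u ∈ L := hu.1
  have hvL : v ∈ L := hv.1
  have hwL : w ∈ L := hw.1
  have huL' : u ∈ L' := hu.2
  have hvL' : v ∈ L' := hv.2
  have hwL' : w ∈ L' := hw.2
  have hSuv : S u ≠ S v := fun h => huv (hinj h)
  have hSuw : S u ≠ S w := fun h => huw (hinj h)
  have hSvw : S v ≠ S w := fun h => hvw (hinj h)
  have hauv : (S u ∩ S v).card = m := madj u v huv (hL.1 huL hvL huv)
  have hauw : (S u ∩ S w).card = m := madj u w huw (hL.1 huL hwL huw)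
  have havw : (S v ∩ S w).card = m := madj v w hvw (hL.1 hvL hwL hvw)
  -- trichotomy
  by_cases hsun : S u ∩ S v ⊆ S w
  · -- sun case: A := S u ∩ S v
    set A : Finset ℕ := S u ∩ S v with hAdef
    have hAu : A ⊆ S u := inter_subset_left
    have hAv : A ⊆ S v := inter_subset_right
    have hAw : A ⊆ S w := hsun
    set C : Set V := {x | A ⊆ S x} with hCdef
    have hCclique : G.IsClique C := by
      intro x hx y hy hxy
      refine (hadj x y hxy).mpr ?_
      have : (S x ∩ S y).card = m :=
        sun_adj hauv (hcard' x) (hcard' y) hx hy (fun h => hxy (hinj h))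
      simpa using this
    have hmem : ∀ {M : Set V}, G.IsClique M → u ∈ M → v ∈ M → w ∈ M → M ⊆ C := by
      intro M hM huM hvM hwM x hx
      by_cases hxu : x = u
      · exact hxu ▸ hAu
      by_cases hxv : x = v
      · exact hxv ▸ hAv
      by_cases hxw : x = w
      · exact hxw ▸ hAw
      have h1 : (S x ∩ S u).card = m := madj x u hxu (hM hx huM hxu)
      have h2 : (S x ∩ S v).card = m := madj x v hxv (hM hx hvM hxv)
      have h3 : (S x ∩ S w).card = m := madj x w hxw (hM hx hwM hxw)
      exact sun_lemma hauv (hcard' u) (hcard' v) (hcard' w) (hcard' x)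
        hAu hAv hAw hSuv hSuw hSvw h1 h2 h3
    have hCL : C = L := hL.2 C hCclique (hmem hL.1 huL hvL hwL)
    have hCL' : C = L' := hL'.2 C hCclique (hmem hL'.1 huL' hvL' hwL')
    exact hne (hCL ▸ hCL')
  · -- moon case: B := S u ∪ S v
    set B : Finset ℕ := S u ∪ S v with hBdef
    have hBcard : B.card = m + 2 := by
      have h := card_union_add_card_inter (S u) (S v)
      rw [hcard' u, hcard' v, hauv, ← hBdef] at h
      omega
    have hBu : S u ⊆ B := subset_union_left
    have hBv : S v ⊆ B := subset_union_right
    have hBw : S w ⊆ B := by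
      have hwu : (S w ∩ S u).card = m := by rw [inter_comm]; exact hauw
      have hwv : (S w ∩ S v).card = m := by rw [inter_comm]; exact havw
      have hUn : (S w ∩ S u) ∪ (S w ∩ S v) = S w ∩ B := (inter_union_distrib_left _ _ _).symm
      have hIn : (S w ∩ S u) ∩ (S w ∩ S v) = S w ∩ (S u ∩ S v) := by
        ext x; simp only [mem_inter]; tauto
      have hsum := card_union_add_card_inter (S w ∩ S u) (S w ∩ S v)
      rw [hUn, hIn, hwu, hwv] at hsum
      have hwuv : (S w ∩ (S u ∩ S v)).card < m := by
        have hss : S w ∩ (S u ∩ S v) ⊂ S u ∩ S v := by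
          refine ⟨inter_subset_right, fun hsub => hsun fun x hx => ?_⟩
          exact (mem_inter.mp (hsub hx)).1
        have := card_lt_card hss
        omega
      have hle : (m : ℕ) + 1 ≤ (S w ∩ B).card := by omega
      have heq : S w ∩ B = S w :=
        eq_of_subset_of_card_le inter_subset_left (by rw [hcard' w]; omega)
      intro x hx
      exact (mem_inter.mp (heq ▸ hx)).2
    set C : Set V := {x | S x ⊆ B} with hCdef
    have hCclique : G.IsClique C := by
      intro x hx y hy hxy
      refine (hadj x y hxy).mpr ?_
      have : (S x ∩ S y).card = m :=
        moon_adj hBcard (hcard' x) (hcard' y) hx hy (fun h => hxy (hinj h))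
      simpa using this
    have hmem : ∀ {M : Set V}, G.IsClique M → u ∈ M → v ∈ M → w ∈ M → M ⊆ C := by
      intro M hM huM hvM hwM x hx
      by_cases hxu : x = u
      · exact hxu ▸ hBu
      by_cases hxv : x = v
      · exact hxv ▸ hBv
      by_cases hxw : x = w
      · exact hxw ▸ hBw
      have h1 : (S x ∩ S u).card = m := madj x u hxu (hM hx huM hxu)
      have h2 : (S x ∩ S v).card = m := madj x v hxv (hM hx hvM hxv)
      have h3 : (S x ∩ S w).card = m := madj x w hxw (hM hx hwM hxw)
      exact moon_lemma hBcard (hcard' u) (hcard' v) (hcard' w) (hcard' x)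
        hBu hBv hBw hSuv hSuw hSvw h1 h2 h3
    have hCL : C = L := hL.2 C hCclique (hmem hL.1 huL hvL hwL)
    have hCL' : C = L' := hL'.2 C hCclique (hmem hL'.1 huL' hvL' hwL')
    exact hne (hCL ▸ hCL')
end

section
/- Suppose G is a JIS graph and L and L' are two distinct maxcliques in G that share exactly two vertices. Then no vertex in V(L) \ V(L') is adjacent to any vertex in V(L') \ V(L). -/
lemma aux_dich {n : ℕ} (hn : 0 < n) {A B C : Finset ℕ}
    (hA : A.card = n) (hB : B.card = n) (hC : C.card = n)
    (hAB : (A ∩ B).card = n - 1)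
    (hCA : (C ∩ A).card = n - 1) (hCB : (C ∩ B).card = n - 1) :
    A ∩ B ⊆ C ∨ C ⊆ A ∪ B := by
  by_cases h : C ⊆ A ∪ B
  · exact Or.inr h
  left
  obtain ⟨c, hcC, hcU⟩ := Finset.not_subset.mp h
  have h1 : C ∩ (A ∪ B) ⊆ C.erase c := by
    intro x hx
    rw [Finset.mem_erase]
    exact ⟨fun he => hcU (he ▸ (Finset.mem_inter.mp hx).2), (Finset.mem_inter.mp hx).1⟩
  have h1' : (C ∩ (A ∪ B)).card ≤ n - 1 := by
    have := Finset.card_le_card h1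
    rw [Finset.card_erase_of_mem hcC, hC] at this
    exact this
  have h2 : (C ∩ A) ∪ (C ∩ B) = C ∩ (A ∪ B) := (Finset.inter_union_distrib_left C A B).symm
  have h3 : (C ∩ A) ∩ (C ∩ B) = C ∩ (A ∩ B) := by
    ext x; simp only [Finset.mem_inter]; tauto
  have h4 := Finset.card_union_add_card_inter (C ∩ A) (C ∩ B)
  rw [h2, h3, hCA, hCB] at h4
  have h6 : C ∩ (A ∩ B) = A ∩ B :=
    Finset.eq_of_subset_of_card_le Finset.inter_subset_right (by omega)
  rw [← h6]
  exact Finset.inter_subset_left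

lemma aux_star_star {n : ℕ} (hn : 0 < n) {T C D : Finset ℕ}
    (hT : T.card = n - 1) (hTC : T ⊆ C) (hTD : T ⊆ D)
    (hC : C.card = n) (hD : D.card = n) (hne : C ≠ D) :
    (C ∩ D).card = n - 1 := by
  have h1 : n - 1 ≤ (C ∩ D).card := by
    have := Finset.card_le_card (Finset.subset_inter hTC hTD)
    omega
  have h2 : (C ∩ D).card ≤ n := by
    have := Finset.card_le_card (Finset.inter_subset_left : C ∩ D ⊆ C)
    omega
  have h3 : (C ∩ D).card ≠ n := by
    intro hcd
    apply hne
    have : C ∩ D = C := Finset.eq_of_subset_of_card_le Finset.inter_subset_left (by omega)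
    exact Finset.eq_of_subset_of_card_le (this ▸ Finset.inter_subset_right) (by omega)
  omega

lemma aux_cliq_cliq {n : ℕ} {U C D : Finset ℕ}
    (hU : U.card = n + 1) (hCU : C ⊆ U) (hDU : D ⊆ U)
    (hC : C.card = n) (hD : D.card = n) (hne : C ≠ D) :
    (C ∩ D).card = n - 1 := by
  have h1 : (C ∪ D).card ≤ n + 1 := by
    have := Finset.card_le_card (Finset.union_subset hCU hDU)
    omega
  have h4 := Finset.card_union_add_card_inter C D
  have h2 : (C ∩ D).card ≤ n := by
    have := Finset.card_le_card (Finset.inter_subset_left : C ∩ D ⊆ C)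
    omega
  have h3 : (C ∩ D).card ≠ n := by
    intro hcd
    apply hne
    have : C ∩ D = C := Finset.eq_of_subset_of_card_le Finset.inter_subset_left (by omega)
    exact Finset.eq_of_subset_of_card_le (this ▸ Finset.inter_subset_right) (by omega)
  omega

lemma aux_star_cliq {n : ℕ} {T U C D : Finset ℕ}
    (hT : T.card = n - 1) (hTU : T ⊆ U)
    (hTC : T ⊆ C) (hCU : ¬ C ⊆ U) (hDU : D ⊆ U) (hTD : ¬ T ⊆ D)
    (hC : C.card = n) :
    (C ∩ D).card ≠ n - 1 := by
  obtain ⟨t, htT, htD⟩ := Finset.not_subset.mp hTD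
  obtain ⟨c, hcC, hcU⟩ := Finset.not_subset.mp hCU
  have hn2 : 2 ≤ n := by
    have : 0 < T.card := Finset.card_pos.mpr ⟨t, htT⟩
    omega
  have h1 : C ∩ U ⊆ C.erase c := by
    intro x hx
    rw [Finset.mem_erase]
    exact ⟨fun he => hcU (he ▸ (Finset.mem_inter.mp hx).2), (Finset.mem_inter.mp hx).1⟩
  have h1' : (C ∩ U).card ≤ n - 1 := by
    have := Finset.card_le_card h1
    rw [Finset.card_erase_of_mem hcC, hC] at this
    exact this
  have h2 : C ∩ U = T := (Finset.eq_of_subset_of_card_le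
    (Finset.subset_inter hTC hTU) (by omega)).symm
  have h3 : C ∩ D ⊆ T.erase t := by
    intro x hx
    rw [Finset.mem_erase]
    obtain ⟨hxC, hxD⟩ := Finset.mem_inter.mp hx
    have hxT : x ∈ T := h2 ▸ Finset.mem_inter.mpr ⟨hxC, hDU hxD⟩
    exact ⟨fun he => htD (he ▸ hxD), hxT⟩
  have h4 : (C ∩ D).card ≤ n - 2 := by
    have := Finset.card_le_card h3
    rw [Finset.card_erase_of_mem htT, hT] at this
    omega
  omega

/-- if two distinct maxcliques of a JIS graph share exactly two vertices,
then no vertex of `L \ L'` is adjacent to a vertex of `L' \ L`. -/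
theorem maxcliques_share_two_no_adj {V : Type*} [Fintype V] (G : SimpleGraph V)
    (hG : IsJIS G) (L L' : Set V) (hL : IsMaxClique G L) (hL' : IsMaxClique G L')
    (hne : L ≠ L') (hshare : (L ∩ L').ncard = 2) :
    ∀ x ∈ L \ L', ∀ y ∈ L' \ L, ¬ G.Adj x y := by
  obtain ⟨n, hn, S, hSinj, hScard, hadj⟩ := hG
  obtain ⟨a, b, hab_ne, hab⟩ := Set.ncard_eq_two.mp hshare
  have haI : a ∈ L ∩ L' := by rw [hab]; exact Set.mem_insert a {b}
  have hbI : b ∈ L ∩ L' := by rw [hab]; exact Set.mem_insert_of_mem a rfl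
  have haL : a ∈ L := haI.1
  have haL' : a ∈ L' := haI.2
  have hbL : b ∈ L := hbI.1
  have hbL' : b ∈ L' := hbI.2
  have hAdjab : G.Adj a b := hL.1 haL hbL hab_ne
  have hT : (S a ∩ S b).card = n - 1 := (hadj a b hab_ne).mp hAdjab
  have hU : (S a ∪ S b).card = n + 1 := by
    have := Finset.card_union_add_card_inter (S a) (S b)
    rw [hT, hScard, hScard] at this; omega
  have hTU : S a ∩ S b ⊆ S a ∪ S b :=
    Finset.inter_subset_left.trans Finset.subset_union_left
  have hdich : ∀ z, G.Adj z a → G.Adj z b → (S a ∩ S b ⊆ S z ∨ S z ⊆ S a ∪ S b) := by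
    intro z hza hzb
    exact aux_dich hn (hScard a) (hScard b) (hScard z) hT
      ((hadj z a hza.ne).mp hza) ((hadj z b hzb.ne).mp hzb)
  have hnotboth : ∀ z, G.Adj z a → G.Adj z b →
      ¬(S a ∩ S b ⊆ S z ∧ S z ⊆ S a ∪ S b) := by
    rintro z hza hzb ⟨h1, h2⟩
    have hza' := (hadj z a hza.ne).mp hza
    have hzb' := (hadj z b hzb.ne).mp hzb
    have e1 : S z ∩ S a = S a ∩ S b := (Finset.eq_of_subset_of_card_le
      (Finset.subset_inter h1 Finset.inter_subset_left) (by rw [hza', hT])).symm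
    have e2 : S z ∩ S b = S a ∩ S b := (Finset.eq_of_subset_of_card_le
      (Finset.subset_inter h1 Finset.inter_subset_right) (by rw [hzb', hT])).symm
    have e3 : S z = S a ∩ S b := by
      have h5 : S z = S z ∩ (S a ∪ S b) := (Finset.inter_eq_left.mpr h2).symm
      rw [h5, Finset.inter_union_distrib_left, e1, e2, Finset.union_self]
    have := hScard z
    rw [e3, hT] at this
    omega
  intro x hx y hy hxy
  have hxa : x ≠ a := fun h => hx.2 (h ▸ haL')
  have hxb : x ≠ b := fun h => hx.2 (h ▸ hbL')
  have hya : y ≠ a := fun h => hy.2 (h ▸ haL)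
  have hyb : y ≠ b := fun h => hy.2 (h ▸ hbL)
  have hxA : G.Adj x a := hL.1 hx.1 haL hxa
  have hxB : G.Adj x b := hL.1 hx.1 hbL hxb
  have hyA : G.Adj y a := hL'.1 hy.1 haL' hya
  have hyB : G.Adj y b := hL'.1 hy.1 hbL' hyb
  have hxyne : x ≠ y := fun h => hx.2 (h ▸ hy.1)
  have hSxy : (S x ∩ S y).card = n - 1 := (hadj x y hxyne).mp hxy
  have key : ∀ z ∈ L', G.Adj x z := by
    rcases hdich x hxA hxB with hxs | hxc
    · -- x is star type
      have hxnc : ¬ S x ⊆ S a ∪ S b := fun h => hnotboth x hxA hxB ⟨hxs, h⟩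
      have hys : S a ∩ S b ⊆ S y := by
        rcases hdich y hyA hyB with h | h
        · exact h
        · exfalso
          have hync : ¬ S a ∩ S b ⊆ S y := fun h' => hnotboth y hyA hyB ⟨h', h⟩
          exact aux_star_cliq hT hTU hxs hxnc h hync (hScard x) hSxy
      intro z hz
      by_cases hza : z = a
      · exact hza ▸ hxA
      by_cases hzb : z = b
      · exact hzb ▸ hxB
      have hzA : G.Adj z a := hL'.1 hz haL' hza
      have hzB : G.Adj z b := hL'.1 hz hbL' hzb
      have hxz : x ≠ z := fun h => hx.2 (h ▸ hz)
      rcases hdich z hzA hzB with hzs | hzc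
      · exact (hadj x z hxz).mpr (aux_star_star hn hT hxs hzs (hScard x) (hScard z)
          (fun h => hxz (hSinj h)))
      · exfalso
        have hzns : ¬ S a ∩ S b ⊆ S z := fun h' => hnotboth z hzA hzB ⟨h', hzc⟩
        have hyz : y ≠ z := fun h => hzns (h ▸ hys)
        have hyAdjz : G.Adj y z := hL'.1 hy.1 hz hyz
        have hync2 : ¬ S y ⊆ S a ∪ S b := fun h => hnotboth y hyA hyB ⟨hys, h⟩
        exact aux_star_cliq hT hTU hys hync2 hzc hzns (hScard y)
          ((hadj y z hyz).mp hyAdjz)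
    · -- x is clique type
      have hxns : ¬ S a ∩ S b ⊆ S x := fun h => hnotboth x hxA hxB ⟨h, hxc⟩
      have hyc : S y ⊆ S a ∪ S b := by
        rcases hdich y hyA hyB with h | h
        · exfalso
          have hync : ¬ S y ⊆ S a ∪ S b := fun h' => hnotboth y hyA hyB ⟨h, h'⟩
          have : (S y ∩ S x).card = n - 1 := (hadj y x hxyne.symm).mp hxy.symm
          exact aux_star_cliq hT hTU h hync hxc hxns (hScard y) this
        · exact h
      intro z hz
      by_cases hza : z = a
      · exact hza ▸ hxA
      by_cases hzb : z = b
      · exact hzb ▸ hxB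
      have hzA : G.Adj z a := hL'.1 hz haL' hza
      have hzB : G.Adj z b := hL'.1 hz hbL' hzb
      have hxz : x ≠ z := fun h => hx.2 (h ▸ hz)
      rcases hdich z hzA hzB with hzs | hzc
      · exfalso
        have hznc : ¬ S z ⊆ S a ∪ S b := fun h => hnotboth z hzA hzB ⟨hzs, h⟩
        have hyns : ¬ S a ∩ S b ⊆ S y := fun h => hnotboth y hyA hyB ⟨h, hyc⟩
        have hzy : z ≠ y := fun h => hyns (h ▸ hzs)
        have hzAdjy : G.Adj z y := hL'.1 hz hy.1 hzy
        exact aux_star_cliq hT hTU hzs hznc hyc hyns (hScard z)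
          ((hadj z y hzy).mp hzAdjy)
      · exact (hadj x z hxz).mpr (aux_cliq_cliq hU hxc hzc (hScard x) (hScard z)
          (fun h => hxz (hSinj h)))
  have hclique : G.IsClique (insert x L') :=
    hL'.1.insert (fun z hz _ => key z hz)
  have heq : insert x L' = L' := hL'.2 _ hclique (Set.subset_insert x L')
  exact hx.2 (heq ▸ Set.mem_insert x L')
end

section
/- Suppose G is a JIS graph and L and L' are two distinct maxcliques in G that share exactly one vertex. Then every vertex in V(L) \ V(L') is adjacent to at most one vertex in V(L') \ V(L), and every vertex in V(L') \ V(L) is adjacent to at most one vertex in V(L) \ V(L'). -/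
lemma key_aux {V : Type*} [Fintype V] (G : SimpleGraph V)
    (hG : IsJIS G) (L L' : Set V) (hL : IsMaxClique G L) (hL' : IsMaxClique G L')
    (hu : (L ∩ L').Nonempty) :
    ∀ x ∈ L \ L', {y ∈ L' \ L | G.Adj x y}.ncard ≤ 1 := by
  intro x hx
  obtain ⟨hxL, hxL'⟩ := hx
  by_contra hcon
  push_neg at hcon
  rw [Set.one_lt_ncard_iff (Set.toFinite _)] at hcon
  obtain ⟨y1, y2, hy1, hy2, hne12⟩ := hcon
  obtain ⟨⟨hy1L', hy1L⟩, hxy1⟩ := hy1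
  obtain ⟨⟨hy2L', hy2L⟩, hxy2⟩ := hy2
  obtain ⟨u, huL, huL'⟩ := hu
  obtain ⟨n, hn, S, hinj, hcardS, hiff⟩ := hG
  -- basic distinctness
  have hxy1' : x ≠ y1 := fun h => hy1L (h ▸ hxL)
  have hxy2' : x ≠ y2 := fun h => hy2L (h ▸ hxL)
  have hxu : x ≠ u := fun h => hxL' (h ▸ huL')
  have huy1 : u ≠ y1 := fun h => hy1L (h ▸ huL)
  have huy2 : u ≠ y2 := fun h => hy2L (h ▸ huL)
  -- adjacencies
  have hy12 : G.Adj y1 y2 := hL'.1 hy1L' hy2L' hne12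
  have haxu : G.Adj x u := hL.1 hxL huL hxu
  have hauy1 : G.Adj u y1 := hL'.1 huL' hy1L' huy1
  have hauy2 : G.Adj u y2 := hL'.1 huL' hy2L' huy2
  set A := S y1 ∩ S y2 with hAdef
  set T := S y1 ∪ S y2 with hTdef
  have hA : A.card = n - 1 := (hiff y1 y2 hne12).mp hy12
  have hT : T.card = n + 1 := by
    have h := Finset.card_inter_add_card_union (S y1) (S y2)
    rw [hcardS, hcardS, ← hAdef, ← hTdef, hA] at h
    omega
  have hd1 : (S y1 \ S y2).card = 1 := by
    have h := Finset.card_sdiff_add_card_inter (S y1) (S y2)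
    rw [hcardS, ← hAdef, hA] at h
    omega
  have hd2 : (S y2 \ S y1).card = 1 := by
    have h := Finset.card_sdiff_add_card_inter (S y2) (S y1)
    rw [hcardS, Finset.inter_comm, ← hAdef, hA] at h
    omega
  obtain ⟨c1, hc1⟩ := Finset.card_eq_one.mp hd1
  obtain ⟨c2, hc2⟩ := Finset.card_eq_one.mp hd2
  have hc1m : c1 ∈ S y1 ∧ c1 ∉ S y2 :=
    Finset.mem_sdiff.mp (hc1 ▸ Finset.mem_singleton_self c1)
  have hc2m : c2 ∈ S y2 ∧ c2 ∉ S y1 :=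
    Finset.mem_sdiff.mp (hc2 ▸ Finset.mem_singleton_self c2)
  have hc12 : c1 ≠ c2 := fun h => hc1m.2 (h ▸ hc2m.1)
  have hAy1 : A ⊆ S y1 := by rw [hAdef]; exact Finset.inter_subset_left
  have hAy2 : A ⊆ S y2 := by rw [hAdef]; exact Finset.inter_subset_right
  have hc1A : c1 ∉ A := fun h => hc1m.2 (hAy2 h)
  have hc2A : c2 ∉ A := fun h => hc2m.2 (hAy1 h)
  have hy1eq : A ∪ {c1} = S y1 := by
    rw [hAdef, ← hc1, Finset.union_comm, Finset.sdiff_union_inter]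
  have hy2eq : A ∪ {c2} = S y2 := by
    rw [hAdef, Finset.inter_comm, ← hc2, Finset.union_comm, Finset.sdiff_union_inter]
  have hm1 : ∀ t, t ∈ S y1 ↔ t ∈ A ∨ t = c1 := fun t => by
    rw [← hy1eq]; simp; exact or_comm
  have hm2 : ∀ t, t ∈ S y2 ↔ t ∈ A ∨ t = c2 := fun t => by
    rw [← hy2eq]; simp; exact or_comm
  have hmT : ∀ t, t ∈ T ↔ t ∈ A ∨ t = c1 ∨ t = c2 := fun t => by
    rw [hTdef, Finset.mem_union, hm1, hm2]; tauto
  have hy1T : S y1 ⊆ T := by rw [hTdef]; exact Finset.subset_union_left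
  have hy2T : S y2 ⊆ T := by rw [hTdef]; exact Finset.subset_union_right
  -- helper: subset from cardinality of intersection
  have hsub_left : ∀ s t : Finset ℕ, s.card ≤ (s ∩ t).card → s ⊆ t := fun s t h =>
    Finset.inter_eq_left.mp (Finset.eq_of_subset_of_card_le Finset.inter_subset_left h)
  have hcard_lt : ∀ w z : V, w ≠ z → (S w ∩ S z).card < n := by
    intro w z hwz
    by_contra h
    push_neg at h
    have h1 : S w ⊆ S z := hsub_left _ _ (by rw [hcardS]; exact h)
    have h2 : S w = S z :=
      Finset.eq_of_subset_of_card_le h1 (by rw [hcardS, hcardS])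
    exact hwz (hinj h2)
  have hAadj : ∀ w z : V, w ≠ z → A ⊆ S w → A ⊆ S z → G.Adj w z := by
    intro w z hwz h1 h2
    refine (hiff w z hwz).mpr ?_
    have h3 : n - 1 ≤ (S w ∩ S z).card := by
      calc n - 1 = A.card := hA.symm
        _ ≤ _ := Finset.card_le_card (Finset.subset_inter h1 h2)
    have h4 := hcard_lt w z hwz
    omega
  have hTadj : ∀ w z : V, w ≠ z → S w ⊆ T → S z ⊆ T → G.Adj w z := by
    intro w z hwz h1 h2
    refine (hiff w z hwz).mpr ?_
    have h3 : (S w ∪ S z).card ≤ n + 1 := by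
      rw [← hT]; exact Finset.card_le_card (Finset.union_subset h1 h2)
    have h4 := Finset.card_inter_add_card_union (S w) (S z)
    rw [hcardS, hcardS] at h4
    have h5 := hcard_lt w z hwz
    omega
  have hext1 : ∀ w : V, A ⊆ S w → c1 ∈ S w → w = y1 := by
    intro w h1 h2
    have hsub : S y1 ⊆ S w := by
      rw [← hy1eq]
      exact Finset.union_subset h1 (Finset.singleton_subset_iff.mpr h2)
    exact (hinj (Finset.eq_of_subset_of_card_le hsub (by rw [hcardS, hcardS]))).symm
  have hext2 : ∀ w : V, A ⊆ S w → c2 ∈ S w → w = y2 := by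
    intro w h1 h2
    have hsub : S y2 ⊆ S w := by
      rw [← hy2eq]
      exact Finset.union_subset h1 (Finset.singleton_subset_iff.mpr h2)
    exact (hinj (Finset.eq_of_subset_of_card_le hsub (by rw [hcardS, hcardS]))).symm
  have hText1 : ∀ w : V, S w ⊆ T → c1 ∉ S w → w = y2 := by
    intro w h1 h2
    have hsub : S w ⊆ S y2 := by
      intro t ht
      rcases (hmT t).mp (h1 ht) with h | h | h
      · exact hAy2 h
      · exact absurd (h ▸ ht) h2
      · exact (hm2 t).mpr (Or.inr h)
    exact hinj (Finset.eq_of_subset_of_card_le hsub (by rw [hcardS, hcardS]))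
  have hText2 : ∀ w : V, S w ⊆ T → c2 ∉ S w → w = y1 := by
    intro w h1 h2
    have hsub : S w ⊆ S y1 := by
      intro t ht
      rcases (hmT t).mp (h1 ht) with h | h | h
      · exact hAy1 h
      · exact (hm1 t).mpr (Or.inr h)
      · exact absurd (h ▸ ht) h2
    exact hinj (Finset.eq_of_subset_of_card_le hsub (by rw [hcardS, hcardS]))
  have hboth : ∀ w : V, A ⊆ S w → c1 ∈ S w → c2 ∈ S w → False := by
    intro w h1 h2 h3
    have hsub : T ⊆ S w := by
      intro t ht
      rcases (hmT t).mp ht with h | h | h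
      · exact h1 h
      · exact h ▸ h2
      · exact h ▸ h3
    have := Finset.card_le_card hsub
    rw [hT, hcardS] at this
    omega
  have hpair : ({c1, c2} : Finset ℕ).card = 2 := by
    rw [Finset.card_insert_of_notMem (by simp [hc12]), Finset.card_singleton]
  have hadjF : ∀ w z : V, G.Adj w z → c1 ∈ S w → c2 ∈ S w → c1 ∉ S z → c2 ∉ S z → False := by
    intro w z hadj h1 h2 h3 h4
    have hcd : (S w ∩ S z).card = n - 1 := (hiff w z hadj.ne).mp hadj
    have hsub : S w ∩ S z ⊆ S w \ {c1, c2} := by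
      intro t ht
      rw [Finset.mem_inter] at ht
      rw [Finset.mem_sdiff]
      refine ⟨ht.1, ?_⟩
      simp only [Finset.mem_insert, Finset.mem_singleton]
      rintro (rfl | rfl)
      · exact h3 ht.2
      · exact h4 ht.2
    have hps : ({c1, c2} : Finset ℕ) ⊆ S w := by
      intro t ht
      simp only [Finset.mem_insert, Finset.mem_singleton] at ht
      rcases ht with rfl | rfl
      exacts [h1, h2]
    have h2n : 2 ≤ n := by
      have := Finset.card_le_card hps
      rw [hcardS, hpair] at this
      exact this
    have hcs : (S w \ {c1, c2}).card = n - 2 := by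
      rw [Finset.card_sdiff_of_subset hps, hcardS, hpair]
    have := Finset.card_le_card hsub
    rw [hcd, hcs] at this
    omega
  -- the triple classification
  have htriple : ∀ w : V, G.Adj w y1 → G.Adj w y2 → A ⊆ S w ∨ S w ⊆ T := by
    intro w h1 h2
    have e1 : (S w ∩ S y1).card = n - 1 := (hiff w y1 h1.ne).mp h1
    have e2 : (S w ∩ S y2).card = n - 1 := (hiff w y2 h2.ne).mp h2
    have split : ∀ c : ℕ, c ∉ A →
        (S w ∩ (A ∪ {c})).card = (S w ∩ A).card + (if c ∈ S w then 1 else 0) := by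
      intro c hc
      rw [Finset.inter_union_distrib_left, Finset.card_union_of_disjoint]
      · congr 1
        by_cases h : c ∈ S w
        · rw [if_pos h, Finset.inter_comm, Finset.singleton_inter_of_mem h,
            Finset.card_singleton]
        · rw [if_neg h, Finset.inter_comm, Finset.singleton_inter_of_notMem h,
            Finset.card_empty]
      · rw [Finset.disjoint_left]
        intro t ht hts
        rw [Finset.mem_inter] at ht hts
        rw [Finset.mem_singleton] at hts
        exact hc (hts.2 ▸ ht.2)
    have hAofk : (S w ∩ A).card = n - 1 → A ⊆ S w := fun h =>
      Finset.inter_eq_right.mp (Finset.eq_of_subset_of_card_le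
        Finset.inter_subset_right (le_of_eq (by rw [hA, h])))
    have e1' := split c1 hc1A
    rw [hy1eq, e1] at e1'
    have e2' := split c2 hc2A
    rw [hy2eq, e2] at e2'
    by_cases hw1 : c1 ∈ S w
    · by_cases hw2 : c2 ∈ S w
      · right
        rw [if_pos hw1] at e1'
        apply hsub_left
        have hTin : S w ∩ T = (S w ∩ A) ∪ {c1, c2} := by
          ext t
          simp only [Finset.mem_inter, hmT t, Finset.mem_union, Finset.mem_insert,
            Finset.mem_singleton]
          constructor
          · rintro ⟨htw, h | h | h⟩
            · exact Or.inl ⟨htw, h⟩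
            · exact Or.inr (Or.inl h)
            · exact Or.inr (Or.inr h)
          · rintro (⟨htw, h⟩ | rfl | rfl)
            · exact ⟨htw, Or.inl h⟩
            · exact ⟨hw1, Or.inr (Or.inl rfl)⟩
            · exact ⟨hw2, Or.inr (Or.inr rfl)⟩
        have hdisj : Disjoint (S w ∩ A) ({c1, c2} : Finset ℕ) := by
          rw [Finset.disjoint_left]
          intro t ht hts
          rw [Finset.mem_inter] at ht
          simp only [Finset.mem_insert, Finset.mem_singleton] at hts
          rcases hts with rfl | rfl
          · exact hc1A ht.2
          · exact hc2A ht.2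
        have : (S w ∩ T).card = (S w ∩ A).card + 2 := by
          rw [hTin, Finset.card_union_of_disjoint hdisj, hpair]
        rw [hcardS, this]
        omega
      · rw [if_neg hw2] at e2'
        exact Or.inl (hAofk e2'.symm)
    · rw [if_neg hw1] at e1'
      exact Or.inl (hAofk e1'.symm)
  have htx := htriple x hxy1 hxy2
  have htu := htriple u hauy1 hauy2
  have hz_cases : ∀ z ∈ L', A ⊆ S z ∨ S z ⊆ T := by
    intro z hz
    by_cases h1 : z = y1
    · exact Or.inl (h1 ▸ hAy1)
    by_cases h2 : z = y2
    · exact Or.inl (h2 ▸ hAy2)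
    exact htriple z (hL'.1 hz hy1L' h1) (hL'.1 hz hy2L' h2)
  -- the main case analysis
  have hfinal : G.IsClique (insert x L') := by
    rcases htx with hxA | hxT
    · -- A ⊆ S x
      have hc1x : c1 ∉ S x := fun h => hxy1' (hext1 x hxA h)
      have hc2x : c2 ∉ S x := fun h => hxy2' (hext2 x hxA h)
      have huA : A ⊆ S u := by
        rcases htu with h | h
        · exact h
        · exfalso
          have hc1u : c1 ∈ S u := by
            by_contra hc
            exact hy2L ((hText1 u h hc) ▸ huL)
          have hc2u : c2 ∈ S u := by
            by_contra hc
            exact hy1L ((hText2 u h hc) ▸ huL)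
          exact hadjF u x haxu.symm hc1u hc2u hc1x hc2x
      have hc1u : c1 ∉ S u := fun h => hy1L ((hext1 u huA h) ▸ huL)
      have hc2u : c2 ∉ S u := fun h => hy2L ((hext2 u huA h) ▸ huL)
      have hall : ∀ z ∈ L', A ⊆ S z := by
        intro z hz
        rcases hz_cases z hz with h | h
        · exact h
        · by_cases hz1 : z = y1
          · exact hz1 ▸ hAy1
          by_cases hz2 : z = y2
          · exact hz2 ▸ hAy2
          exfalso
          have hc1z : c1 ∈ S z := by
            by_contra hc
            exact hz2 (hText1 z h hc)
          have hc2z : c2 ∈ S z := by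
            by_contra hc
            exact hz1 (hText2 z h hc)
          have hzu : z ≠ u := by
            rintro rfl
            exact hboth z huA hc1z hc2z
          exact hadjF z u (hL'.1 hz huL' hzu) hc1z hc2z hc1u hc2u
      rw [SimpleGraph.isClique_iff]
      intro a ha b hb hab
      rcases Set.mem_insert_iff.mp ha with rfl | ha'
      · rcases Set.mem_insert_iff.mp hb with rfl | hb'
        · exact absurd rfl hab
        · exact hAadj a b hab hxA (hall b hb')
      · rcases Set.mem_insert_iff.mp hb with rfl | hb'
        · exact (hAadj b a (Ne.symm hab) hxA (hall a ha')).symm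
        · exact hL'.1 ha' hb' hab
    · -- S x ⊆ T
      have hc1x : c1 ∈ S x := by
        by_contra hc
        exact hxy2' (hText1 x hxT hc)
      have hc2x : c2 ∈ S x := by
        by_contra hc
        exact hxy1' (hText2 x hxT hc)
      have huT : S u ⊆ T := by
        rcases htu with h | h
        · exfalso
          have hc1u : c1 ∉ S u := fun hh => hy1L ((hext1 u h hh) ▸ huL)
          have hc2u : c2 ∉ S u := fun hh => hy2L ((hext2 u h hh) ▸ huL)
          exact hadjF x u haxu hc1x hc2x hc1u hc2u
        · exact h
      have hc1u : c1 ∈ S u := by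
        by_contra hc
        exact hy2L ((hText1 u huT hc) ▸ huL)
      have hc2u : c2 ∈ S u := by
        by_contra hc
        exact hy1L ((hText2 u huT hc) ▸ huL)
      have hall : ∀ z ∈ L', S z ⊆ T := by
        intro z hz
        by_cases hz1 : z = y1
        · exact hz1 ▸ hy1T
        by_cases hz2 : z = y2
        · exact hz2 ▸ hy2T
        rcases hz_cases z hz with h | h
        · exfalso
          have hc1z : c1 ∉ S z := fun hh => hz1 (hext1 z h hh)
          have hc2z : c2 ∉ S z := fun hh => hz2 (hext2 z h hh)
          have hzu : z ≠ u := by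
            rintro rfl
            exact hc1z hc1u
          exact hadjF u z (hL'.1 huL' hz hzu.symm) hc1u hc2u hc1z hc2z
        · exact h
      rw [SimpleGraph.isClique_iff]
      intro a ha b hb hab
      rcases Set.mem_insert_iff.mp ha with rfl | ha'
      · rcases Set.mem_insert_iff.mp hb with rfl | hb'
        · exact absurd rfl hab
        · exact hTadj a b hab hxT (hall b hb')
      · rcases Set.mem_insert_iff.mp hb with rfl | hb'
        · exact (hTadj b a (Ne.symm hab) hxT (hall a ha')).symm
        · exact hL'.1 ha' hb' hab
  have heqL : insert x L' = L' := hL'.2 _ hfinal (Set.subset_insert x L')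
  exact hxL' (heqL ▸ Set.mem_insert x L')

/-- if two distinct maxcliques of a JIS graph share exactly one vertex,
then each vertex in either of `L \ L'` and `L' \ L` is adjacent to at most one vertex
of the other set. -/
theorem maxcliques_share_one_adj_le_one {V : Type*} [Fintype V] (G : SimpleGraph V)
    (hG : IsJIS G) (L L' : Set V) (hL : IsMaxClique G L) (hL' : IsMaxClique G L')
    (hne : L ≠ L') (hshare : (L ∩ L').ncard = 1) :
    (∀ x ∈ L \ L', {y ∈ L' \ L | G.Adj x y}.ncard ≤ 1) ∧
    (∀ y ∈ L' \ L, {x ∈ L \ L' | G.Adj y x}.ncard ≤ 1) := by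
  have hne' : (L ∩ L').Nonempty :=
    Set.nonempty_of_ncard_ne_zero (by rw [hshare]; exact one_ne_zero)
  exact ⟨key_aux G hG L L' hL hL' hne',
    key_aux G hG L' L hL' hL (by rwa [Set.inter_comm] at hne')⟩
end

section
/- Let G be a finite simple graph and suppose L_1, …, L_k are pairwise distinct maxcliques in G, where k is odd and k ≥ 3, such that |V(L_i) ∩ V(L_{i+1})| = 2 for all 1 ≤ i ≤ k − 1 and |V(L_k) ∩ V(L_1)| = 2. Then G is not JIS. -/
open Finset

lemma aux_triple {n : ℕ} {X Y Z : Finset ℕ}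
    (hZ : Z.card = n)
    (hXY : (X ∩ Y).card = n - 1) (hXZ : (X ∩ Z).card = n - 1)
    (hYZ : (Y ∩ Z).card = n - 1) :
    (X ∩ Y ⊆ Z) ∨ (Z ⊆ X ∪ Y) := by
  by_cases hA : X ∩ Y ⊆ Z
  · exact Or.inl hA
  · right
    obtain ⟨a, haA, haZ⟩ := Finset.not_subset.mp hA
    have hApos : 0 < (X ∩ Y).card := Finset.card_pos.mpr ⟨a, haA⟩
    have hss : (X ∩ Y) ∩ Z ⊂ X ∩ Y := by
      refine (Finset.ssubset_iff_of_subset Finset.inter_subset_left).mpr ⟨a, haA, ?_⟩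
      simp [haZ]
    have h1 : ((X ∩ Y) ∩ Z).card < n - 1 := hXY ▸ Finset.card_lt_card hss
    have h2 : ((Z ∩ X) ∪ (Z ∩ Y)).card + ((Z ∩ X) ∩ (Z ∩ Y)).card
        = (Z ∩ X).card + (Z ∩ Y).card := Finset.card_union_add_card_inter _ _
    have h3 : (Z ∩ X) ∩ (Z ∩ Y) = (X ∩ Y) ∩ Z := by ext b; simp; tauto
    have h4 : (Z ∩ X).card = n - 1 := by rw [Finset.inter_comm]; exact hXZ
    have h5 : (Z ∩ Y).card = n - 1 := by rw [Finset.inter_comm]; exact hYZ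
    have h6 : (Z ∩ X) ∪ (Z ∩ Y) ⊆ Z :=
      Finset.union_subset Finset.inter_subset_left Finset.inter_subset_left
    have h7 : Z.card ≤ ((Z ∩ X) ∪ (Z ∩ Y)).card := by rw [h3] at h2; omega
    have h8 := Finset.eq_of_subset_of_card_le h6 h7
    intro b hb
    have hb2 : b ∈ (Z ∩ X) ∪ (Z ∩ Y) := h8.symm ▸ hb
    simp only [Finset.mem_union, Finset.mem_inter] at hb2 ⊢
    tauto

lemma aux_between {n : ℕ} {X Y Z : Finset ℕ} (hn : 0 < n)
    (hX : X.card = n) (hY : Y.card = n) (hZ : Z.card = n)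
    (hXY : (X ∩ Y).card = n - 1)
    (h1 : X ∩ Y ⊆ Z) (h2 : Z ⊆ X ∪ Y) :
    Z = X ∨ Z = Y := by
  have hns : ¬ Z ⊆ X ∩ Y := by
    intro h
    have := Finset.card_le_card h
    omega
  obtain ⟨t, htZ, htA⟩ := Finset.not_subset.mp hns
  have ht : t ∈ X ∪ Y := h2 htZ
  have hcardins : (insert t (X ∩ Y)).card = n := by
    rw [Finset.card_insert_of_notMem htA, hXY]; omega
  have hinsZ : insert t (X ∩ Y) ⊆ Z := Finset.insert_subset htZ h1
  have heqZ : insert t (X ∩ Y) = Z := Finset.eq_of_subset_of_card_le hinsZ (by omega)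
  rcases Finset.mem_union.mp ht with h | h
  · left
    have hinsX : insert t (X ∩ Y) ⊆ X := Finset.insert_subset h Finset.inter_subset_left
    have hx := Finset.eq_of_subset_of_card_le hinsX (by omega)
    rw [← heqZ, hx]
  · right
    have hinsY : insert t (X ∩ Y) ⊆ Y := Finset.insert_subset h Finset.inter_subset_right
    have hy := Finset.eq_of_subset_of_card_le hinsY (by omega)
    rw [← heqZ, hy]

lemma aux_clash {n : ℕ} {Xv Xw Xu Xz : Finset ℕ}
    (hu : Xu.card = n)
    (hA : (Xv ∩ Xw).card = n - 1)
    (hAu : Xv ∩ Xw ⊆ Xu)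
    (hzsub : Xz ⊆ Xv ∪ Xw)
    (hznA : ¬ Xv ∩ Xw ⊆ Xz)
    (huz : (Xu ∩ Xz).card = n - 1)
    (huv : Xu ≠ Xv) (huw : Xu ≠ Xw)
    (hv : Xv.card = n) (hw : Xw.card = n) : False := by
  obtain ⟨a, haA, haZ⟩ := Finset.not_subset.mp hznA
  have hn2 : 2 ≤ n := by
    have : 0 < (Xv ∩ Xw).card := Finset.card_pos.mpr ⟨a, haA⟩
    omega
  have h1 : ∀ t ∈ Xu, t ∉ Xv ∩ Xw → t ∉ Xz := by
    intro t htu htA htz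
    have hins : insert t (Xv ∩ Xw) ⊆ Xu := Finset.insert_subset htu hAu
    have hc : (insert t (Xv ∩ Xw)).card = n := by
      rw [Finset.card_insert_of_notMem htA, hA]; omega
    have heq : insert t (Xv ∩ Xw) = Xu := Finset.eq_of_subset_of_card_le hins (by omega)
    rcases Finset.mem_union.mp (hzsub htz) with h | h
    · have hins2 : insert t (Xv ∩ Xw) ⊆ Xv := Finset.insert_subset h Finset.inter_subset_left
      have hx := Finset.eq_of_subset_of_card_le hins2 (by omega)
      apply huv; rw [← heq, hx]
    · have hins2 : insert t (Xv ∩ Xw) ⊆ Xw := Finset.insert_subset h Finset.inter_subset_right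
      have hx := Finset.eq_of_subset_of_card_le hins2 (by omega)
      apply huw; rw [← heq, hx]
  have h2 : Xu ∩ Xz ⊆ (Xv ∩ Xw) ∩ Xz := by
    intro b hb
    obtain ⟨hbu, hbz⟩ := Finset.mem_inter.mp hb
    by_cases hbA : b ∈ Xv ∩ Xw
    · exact Finset.mem_inter.mpr ⟨hbA, hbz⟩
    · exact absurd hbz (h1 b hbu hbA)
  have h3 : (Xv ∩ Xw) ∩ Xz ⊂ Xv ∩ Xw :=
    (Finset.ssubset_iff_of_subset Finset.inter_subset_left).mpr ⟨a, haA, by simp [haZ]⟩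
  have hc1 := Finset.card_le_card h2
  have hc2 := Finset.card_lt_card h3
  omega

section GraphAux
variable {V : Type*} {G : SimpleGraph V} {n : ℕ} {S : V → Finset ℕ}

lemma star_or_clus
    (hinj : Function.Injective S) (hcard : ∀ x, (S x).card = n)
    (hiff : ∀ x y : V, x ≠ y → (G.Adj x y ↔ (S x ∩ S y).card = n - 1))
    {C : Set V} (hC : G.IsClique C) {a b : V} (ha : a ∈ C) (hb : b ∈ C) (hab : a ≠ b) :
    (∀ u ∈ C, S a ∩ S b ⊆ S u) ∨ (∀ u ∈ C, S u ⊆ S a ∪ S b) := by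
  by_cases hs : ∀ u ∈ C, S a ∩ S b ⊆ S u
  · exact Or.inl hs
  right
  push_neg at hs
  obtain ⟨z, hzC, hz⟩ := hs
  have hinterC : ∀ x y, x ∈ C → y ∈ C → x ≠ y → (S x ∩ S y).card = n - 1 :=
    fun x y hx hy hxy => (hiff x y hxy).mp (hC hx hy hxy)
  have hza : z ≠ a := by rintro rfl; exact hz Finset.inter_subset_left
  have hzb : z ≠ b := by rintro rfl; exact hz Finset.inter_subset_right
  have hzsub : S z ⊆ S a ∪ S b := by
    rcases aux_triple (hcard z) (hinterC a b ha hb hab)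
      (hinterC a z ha hzC (Ne.symm hza)) (hinterC b z hb hzC (Ne.symm hzb)) with h | h
    · exact absurd h hz
    · exact h
  intro u huC
  by_cases hua : u = a
  · subst hua; exact Finset.subset_union_left
  by_cases hub : u = b
  · subst hub; exact Finset.subset_union_right
  by_cases huz : u = z
  · subst huz; exact hzsub
  rcases aux_triple (hcard u) (hinterC a b ha hb hab)
    (hinterC a u ha huC (Ne.symm hua)) (hinterC b u hb huC (Ne.symm hub)) with h | h
  · exact (aux_clash (hcard u) (hinterC a b ha hb hab) h hzsub hz
      (hinterC u z huC hzC huz) (fun he => hua (hinj he)) (fun he => hub (hinj he))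
      (hcard a) (hcard b)).elim
  · exact h

lemma star_convert
    (hiff : ∀ x y : V, x ≠ y → (G.Adj x y ↔ (S x ∩ S y).card = n - 1))
    {C : Set V} (hC : G.IsClique C) {a b a' b' : V} (ha : a ∈ C) (hb : b ∈ C) (hab : a ≠ b)
    (ha' : a' ∈ C) (hb' : b' ∈ C) (hab' : a' ≠ b')
    (hstar : ∀ u ∈ C, S a ∩ S b ⊆ S u) :
    ∀ u ∈ C, S a' ∩ S b' ⊆ S u := by
  have h1 : S a ∩ S b ⊆ S a' ∩ S b' :=
    Finset.subset_inter (hstar a' ha') (hstar b' hb')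
  have hc1 : (S a ∩ S b).card = n - 1 := (hiff a b hab).mp (hC ha hb hab)
  have hc2 : (S a' ∩ S b').card = n - 1 := (hiff a' b' hab').mp (hC ha' hb' hab')
  have heq : S a ∩ S b = S a' ∩ S b' :=
    Finset.eq_of_subset_of_card_le h1 (by rw [hc1, hc2])
  intro u hu
  rw [← heq]
  exact hstar u hu

lemma clus_convert (hcard : ∀ x, (S x).card = n)
    (hiff : ∀ x y : V, x ≠ y → (G.Adj x y ↔ (S x ∩ S y).card = n - 1))
    {C : Set V} (hC : G.IsClique C) {a b a' b' : V} (ha : a ∈ C) (hb : b ∈ C) (hab : a ≠ b)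
    (ha' : a' ∈ C) (hb' : b' ∈ C) (hab' : a' ≠ b')
    (hclus : ∀ u ∈ C, S u ⊆ S a ∪ S b) :
    ∀ u ∈ C, S u ⊆ S a' ∪ S b' := by
  have hc1 : (S a ∩ S b).card = n - 1 := (hiff a b hab).mp (hC ha hb hab)
  have hc2 : (S a' ∩ S b').card = n - 1 := (hiff a' b' hab').mp (hC ha' hb' hab')
  have hu1 := Finset.card_union_add_card_inter (S a) (S b)
  have hu2 := Finset.card_union_add_card_inter (S a') (S b')
  rw [hcard, hcard, hc1] at hu1
  rw [hcard, hcard, hc2] at hu2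
  have h1 : S a' ∪ S b' ⊆ S a ∪ S b :=
    Finset.union_subset (hclus a' ha') (hclus b' hb')
  have heq : S a' ∪ S b' = S a ∪ S b :=
    Finset.eq_of_subset_of_card_le h1 (by omega)
  intro u hu
  rw [heq]
  exact hclus u hu

lemma union_clique_of_star
    (hle : ∀ x y : V, x ≠ y → (S x ∩ S y).card ≤ n - 1)
    (hiff : ∀ x y : V, x ≠ y → (G.Adj x y ↔ (S x ∩ S y).card = n - 1))
    {C D : Set V} {a b : V} (hA : (S a ∩ S b).card = n - 1)
    (hC : ∀ u ∈ C, S a ∩ S b ⊆ S u) (hD : ∀ u ∈ D, S a ∩ S b ⊆ S u) :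
    G.IsClique (C ∪ D) := by
  intro x hx y hy hxy
  have hax : S a ∩ S b ⊆ S x := by rcases hx with h | h; exacts [hC x h, hD x h]
  have hay : S a ∩ S b ⊆ S y := by rcases hy with h | h; exacts [hC y h, hD y h]
  have h1 : n - 1 ≤ (S x ∩ S y).card :=
    hA ▸ Finset.card_le_card (Finset.subset_inter hax hay)
  exact (hiff x y hxy).mpr (le_antisymm (hle x y hxy) h1)

lemma union_clique_of_clus (hn : 0 < n) (hcard : ∀ x, (S x).card = n)
    (hle : ∀ x y : V, x ≠ y → (S x ∩ S y).card ≤ n - 1)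
    (hiff : ∀ x y : V, x ≠ y → (G.Adj x y ↔ (S x ∩ S y).card = n - 1))
    {C D : Set V} {a b : V} (hB : (S a ∪ S b).card = n + 1)
    (hC : ∀ u ∈ C, S u ⊆ S a ∪ S b) (hD : ∀ u ∈ D, S u ⊆ S a ∪ S b) :
    G.IsClique (C ∪ D) := by
  intro x hx y hy hxy
  have hax : S x ⊆ S a ∪ S b := by rcases hx with h | h; exacts [hC x h, hD x h]
  have hay : S y ⊆ S a ∪ S b := by rcases hy with h | h; exacts [hC y h, hD y h]
  have h1 : (S x ∪ S y).card ≤ n + 1 :=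
    hB ▸ Finset.card_le_card (Finset.union_subset hax hay)
  have h2 := Finset.card_union_add_card_inter (S x) (S y)
  rw [hcard, hcard] at h2
  have h3 : n - 1 ≤ (S x ∩ S y).card := by omega
  exact (hiff x y hxy).mpr (le_antisymm (hle x y hxy) h3)

end GraphAux

/-- if a graph `G` has an odd cycle of `k ≥ 3` pairwise distinct maxcliques,
consecutive ones (cyclically) sharing exactly two vertices, then `G` is not JIS.
(Addition in `Fin k` is modulo `k`, so `hshare` covers both the consecutive pairs and
the wrap-around pair `L_k, L_1`.) -/
theorem odd_cycle_of_maxcliques_not_JIS {V : Type*} [Fintype V] (G : SimpleGraph V)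
    (k : ℕ) (hk : 3 ≤ k) (hodd : Odd k) (L : Fin k → Set V)
    (hmax : ∀ i, IsMaxClique G (L i))
    (hdist : Function.Injective L)
    (hshare : ∀ i : Fin k, (L i ∩ L (i + ⟨1, by omega⟩)).ncard = 2) :
    ¬ IsJIS G := by
  rintro ⟨n, hn, S, hinj, hcard, hiff⟩
  haveI : NeZero k := ⟨by omega⟩
  set one : Fin k := ⟨1, by omega⟩ with hone_def
  have hone : ∀ i : Fin k, i + one ≠ i := by
    intro i h
    have h0 : i + one = i + 0 := by simpa using h
    have : one = 0 := add_left_cancel h0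
    rw [Fin.ext_iff] at this
    simp [hone_def] at this
  -- choose the shared edges
  have hpair := fun i : Fin k => Set.ncard_eq_two.mp (hshare i)
  choose v w hvw hset using hpair
  have hvm : ∀ i, v i ∈ L i ∩ L (i + one) := by
    intro i; rw [hset i]; exact Set.mem_insert _ _
  have hwm : ∀ i, w i ∈ L i ∩ L (i + one) := by
    intro i; rw [hset i]; exact Set.mem_insert_of_mem _ rfl
  have hvm1 : ∀ i, v i ∈ L i := fun i => (hvm i).1
  have hvm2 : ∀ i, v i ∈ L (i + one) := fun i => (hvm i).2
  have hwm1 : ∀ i, w i ∈ L i := fun i => (hwm i).1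
  have hwm2 : ∀ i, w i ∈ L (i + one) := fun i => (hwm i).2
  -- basic cardinality facts
  have hle : ∀ x y : V, x ≠ y → (S x ∩ S y).card ≤ n - 1 := by
    intro x y hxy
    by_contra h
    push_neg at h
    have hsub : S x ∩ S y ⊆ S x := Finset.inter_subset_left
    have hcardle : (S x ∩ S y).card ≤ n := hcard x ▸ Finset.card_le_card hsub
    have hceq : (S x ∩ S y).card = n := by omega
    have h1 : S x ∩ S y = S x :=
      Finset.eq_of_subset_of_card_le hsub (by rw [hceq, hcard x])
    have hxs : S x ⊆ S y := by rw [← h1]; exact Finset.inter_subset_right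
    have h2 : S x = S y :=
      Finset.eq_of_subset_of_card_le hxs (by rw [hcard, hcard])
    exact hxy (hinj h2)
  have hAcard : ∀ i, (S (v i) ∩ S (w i)).card = n - 1 := fun i =>
    (hiff _ _ (hvw i)).mp ((hmax i).1 (hvm1 i) (hwm1 i) (hvw i))
  have hBcard : ∀ i, (S (v i) ∪ S (w i)).card = n + 1 := by
    intro i
    have h2 := Finset.card_union_add_card_inter (S (v i)) (S (w i))
    rw [hcard, hcard, hAcard i] at h2
    omega
  -- maximality contradiction from a clique containing both L i and L (i+one)
  have hmaxcon : ∀ i : Fin k, ¬ G.IsClique (L i ∪ L (i + one)) := by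
    intro i hcl
    have h1 := (hmax i).2 _ hcl Set.subset_union_left
    have h2 : L (i + one) ⊆ L i := h1 ▸ Set.subset_union_right
    have h3 := (hmax (i + one)).2 (L i) ((hmax i).1) h2
    exact hone i (hdist h3.symm)
  -- the key alternation step
  have step : ∀ i : Fin k,
      ((∀ u ∈ L (i + one), S (v (i + one)) ∩ S (w (i + one)) ⊆ S u) ↔
        ¬ (∀ u ∈ L i, S (v i) ∩ S (w i) ⊆ S u)) := by
    intro i
    constructor
    · intro ht' ht
      -- convert t (i+one) to a star over the shared edge (v i, w i)
      have hstar' : ∀ u ∈ L (i + one), S (v i) ∩ S (w i) ⊆ S u :=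
        star_convert hiff ((hmax (i + one)).1) (hvm1 (i + one)) (hwm1 (i + one))
          (hvw (i + one)) (hvm2 i) (hwm2 i) (hvw i) ht'
      exact hmaxcon i (union_clique_of_star hle hiff (hAcard i) ht hstar')
    · intro ht
      by_contra ht'
      -- L i is a cluster over its edge
      have hclus : ∀ u ∈ L i, S u ⊆ S (v i) ∪ S (w i) := by
        rcases star_or_clus hinj hcard hiff ((hmax i).1) (hvm1 i) (hwm1 i) (hvw i) with h | h
        · exact absurd h ht
        · exact h
      -- L (i+one) is not a star over edge (v i, w i), hence a cluster over it
      have hclus' : ∀ u ∈ L (i + one), S u ⊆ S (v i) ∪ S (w i) := by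
        rcases star_or_clus hinj hcard hiff ((hmax (i + one)).1) (hvm2 i) (hwm2 i)
          (hvw i) with h | h
        · exact absurd (star_convert hiff ((hmax (i + one)).1) (hvm2 i) (hwm2 i) (hvw i)
            (hvm1 (i + one)) (hwm1 (i + one)) (hvw (i + one)) h) ht'
        · exact h
      exact hmaxcon i (union_clique_of_clus hn hcard hle hiff (hBcard i) hclus hclus')
  -- parity argument around the odd cycle
  set T : Fin k → Prop := fun i => ∀ u ∈ L i, S (v i) ∩ S (w i) ⊆ S u with hT
  have stepT : ∀ i : Fin k, T (i + one) ↔ ¬ T i := step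
  have hk0 : 0 < k := by omega
  set g : ℕ → Fin k := fun m => ⟨m % k, Nat.mod_lt _ hk0⟩ with hg_def
  have hg : ∀ m : ℕ, g (m + 1) = g m + one := by
    intro m
    rw [Fin.ext_iff]
    show (m + 1) % k = ((g m) + one).val
    rw [Fin.val_add]
    show (m + 1) % k = (m % k + 1) % k
    conv_rhs => rw [Nat.mod_add_mod]
  have key : ∀ m : ℕ, (Even m → (T (g m) ↔ T (g 0))) ∧ (¬ Even m → ¬ (T (g m) ↔ T (g 0))) := by
    intro m
    induction m with
    | zero => exact ⟨fun _ => Iff.rfl, fun h => absurd Even.zero h⟩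
    | succ m ih =>
      have hstep' : T (g (m + 1)) ↔ ¬ T (g m) := by rw [hg m]; exact stepT (g m)
      constructor
      · intro he
        have hm : ¬ Even m := by
          intro h
          exact (Nat.even_add_one.mp he) h
        have := ih.2 hm
        tauto
      · intro he
        have hm : Even m := by
          by_contra h
          exact he (Nat.even_add_one.mpr h)
        have := ih.1 hm
        tauto
  have hgk : g k = g 0 := by
    rw [Fin.ext_iff]
    show k % k = 0 % k
    simp
  have hkodd : ¬ Even k := (Nat.not_even_iff_odd).mpr hodd
  exact (key k).2 hkodd (hgk ▸ Iff.rfl)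
end

section
/- For every integer n ≥ 3, the cycle graph C_n on n vertices is JIS. -/
/-- for every `n ≥ 3`, the cycle graph `C_n` on `n` vertices
(vertex `i` adjacent to `i ± 1` modulo `n`) is JIS. -/
theorem cycle_graph_isJIS (n : ℕ) (hn : 3 ≤ n) :
    letI : NeZero n := ⟨by omega⟩
    IsJIS (SimpleGraph.fromRel (fun i j : ZMod n => i + 1 = j)) := by
  haveI : NeZero n := ⟨by omega⟩
  show IsJIS (SimpleGraph.fromRel (fun i j : ZMod n => i + 1 = j))
  have hf : Function.Injective (ZMod.val : ZMod n → ℕ) := ZMod.val_injective n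
  have h1 : (1 : ZMod n) ≠ 0 := by
    intro h
    have := ZMod.val_cast_of_lt (show 1 < n by omega)
    simp [h] at this
  have h2 : (2 : ZMod n) ≠ 0 := by
    intro h
    have := ZMod.val_cast_of_lt (show 2 < n by omega)
    rw [show ((2 : ℕ) : ZMod n) = (2 : ZMod n) by push_cast; ring, h] at this
    simp at this
  have hshift : ∀ (a b : ZMod n), a = a + b → b = 0 := fun a b h => by
    have : a + 0 = a + b := by rwa [add_zero]
    exact (add_left_cancel this).symm
  refine ⟨2, two_pos, fun i => {i.val, (i + 1).val}, ?_, ?_, ?_⟩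
  · intro i j hij
    simp only [Finset.ext_iff, Finset.mem_insert, Finset.mem_singleton] at hij
    have hii := (hij i.val).mp (Or.inl rfl)
    have hjj := (hij j.val).mpr (Or.inl rfl)
    rcases hii with h | h
    · exact hf h
    · have hi : i = j + 1 := hf h
      rcases hjj with h' | h'
      · exact (hf h').symm
      · have hj : j = i + 1 := hf h'
        rw [hj] at hi
        exfalso
        exact h2 (hshift i 2 (hi.trans (by ring)))
  · intro i
    rw [Finset.card_pair]
    intro h
    have : i = i + 1 := hf h
    apply h1
    have : i + 0 = i + 1 := by rwa [add_zero]
    exact (add_left_cancel this).symm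
  · intro i j hij
    rw [SimpleGraph.fromRel_adj]
    have key : ∀ a b : ZMod n, a + 1 = b →
        ({a.val, (a + 1).val} ∩ {b.val, (b + 1).val} : Finset ℕ) = {(a + 1).val} := by
      intro a b hab
      subst hab
      ext x
      simp only [Finset.mem_inter, Finset.mem_insert, Finset.mem_singleton]
      have hab1 : a.val ≠ (a + 1).val := fun h => h1 (by
        have := hf h; exact add_left_cancel (show a + 0 = a + 1 by rwa [add_zero]) |>.symm ▸ rfl)
      have hab2 : a.val ≠ (a + 1 + 1).val := fun h =>
        h2 (hshift a 2 ((hf h).trans (by ring)))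
      have hab3 : (a + 1).val ≠ (a + 1 + 1).val := fun h => h1 (by
        have := hf h
        exact (add_left_cancel (show (a+1) + 0 = (a+1) + 1 by rwa [add_zero])).symm)
      constructor
      · rintro ⟨h | h, h' | h'⟩ <;> simp_all
      · rintro rfl
        exact ⟨Or.inr rfl, Or.inl rfl⟩
    constructor
    · rintro ⟨-, h | h⟩
      · rw [key i j h, Finset.card_singleton]
      · rw [Finset.inter_comm, key j i h, Finset.card_singleton]
    · intro hcard
      refine ⟨hij, ?_⟩
      by_contra hadj
      push_neg at hadj
      obtain ⟨ha, hb⟩ := hadj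
      have hempty : ({i.val, (i + 1).val} ∩ {j.val, (j + 1).val} : Finset ℕ) = ∅ := by
        ext x
        simp only [Finset.mem_inter, Finset.mem_insert, Finset.mem_singleton,
          Finset.notMem_empty, iff_false]
        rintro ⟨h | h, h' | h'⟩
        · exact hij (by rw [h] at h'; exact hf h')
        · exact hb (by have := hf (h'.symm.trans h); rw [this])
        · exact ha (by have := hf (h'.symm.trans h); rw [this])
        · exact hij (add_right_cancel (hf (h.symm.trans h')))
      rw [hempty] at hcard
      simp at hcard
end

section
/- Let G' be a finite simple graph, let w be a vertex of G' of degree at most 1, and let G be the induced subgraph of G' on the vertex set V(G') \ {w}. Then G' is JIS if and only if G is JIS. -/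
/-- if `w` is a vertex of degree at most 1 of a finite simple graph `G'`
and `G` is the induced subgraph of `G'` on the remaining vertices, then
`G'` is JIS if and only if `G` is JIS. -/
theorem isJIS_iff_isJIS_delete_low_degree_vertex {V : Type*} [Fintype V] [DecidableEq V]
    (G' : SimpleGraph V) [DecidableRel G'.Adj] (w : V) (hw : G'.degree w ≤ 1) :
    IsJIS G' ↔ IsJIS (G'.induce {v : V | v ≠ w}) := by
  constructor
  · rintro ⟨n, hn, S, hinj, hcard, hadj⟩
    refine ⟨n, hn, fun v => S v.val, fun a b h => Subtype.ext (hinj h),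
      fun v => hcard v.val, fun a b hab => ?_⟩
    have hne : (a : V) ≠ b := fun h => hab (Subtype.ext h)
    exact hadj a.val b.val hne
  · rintro ⟨n, hn, S, hinj, hcard, hadj⟩
    set M := (Finset.univ.sup (fun v : {v : V | v ≠ w} => (S v).sup id)) + 1 with hM
    have hbound : ∀ (v : {v : V | v ≠ w}) x, x ∈ S v → x < M := by
      intro v x hx
      have h1 : x ≤ (S v).sup id := Finset.le_sup (f := id) hx
      have h2 : (S v).sup id ≤ Finset.univ.sup (fun v : {v : V | v ≠ w} => (S v).sup id) :=
        Finset.le_sup (f := fun v : {v : V | v ≠ w} => (S v).sup id) (Finset.mem_univ v)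
      omega
    have hMnot : ∀ v, M ∉ S v := fun v h => absurd (hbound v M h) (lt_irrefl M)
    -- a set for the vertex w
    have key : ∀ (a : {v : V | v ≠ w}), ((S a ∩ insert M (S a)).card = n) := by
      intro a
      rw [Finset.inter_insert_of_notMem (hMnot a), Finset.inter_self]
      exact hcard a
    have hlt : ∀ a b : {v : V | v ≠ w}, a ≠ b → (S a ∩ S b).card ≠ n := by
      intro a b hab h
      have hsub : S a ∩ S b ⊆ S a := Finset.inter_subset_left
      have heq : S a ∩ S b = S a :=
        Finset.eq_of_subset_of_card_le hsub (by rw [h, hcard])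
      have : S a ⊆ S b := by rw [← heq]; exact Finset.inter_subset_right
      have : S a = S b := Finset.eq_of_subset_of_card_le this (by rw [hcard, hcard])
      exact hab (hinj this)
    obtain ⟨T, hTcard, hTM, hTadj⟩ : ∃ T : Finset ℕ, T.card = n + 1 ∧ M ∉ T ∧
        ∀ (v : {v : V | v ≠ w}), (G'.Adj w v ↔ (T ∩ insert M (S v)).card = n) := by
      by_cases hu : ∃ u, G'.Adj w u
      · obtain ⟨u, hu⟩ := hu
        have huw : u ≠ w := fun h => G'.irrefl (h ▸ hu)
        have huniq : ∀ x, G'.Adj w x → x = u := by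
          intro x hx
          have h1 : x ∈ G'.neighborFinset w := (SimpleGraph.mem_neighborFinset _ _ _).2 hx
          have h2 : u ∈ G'.neighborFinset w := (SimpleGraph.mem_neighborFinset _ _ _).2 hu
          have hw' : (G'.neighborFinset w).card ≤ 1 := hw
          exact Finset.card_le_one.mp hw' x h1 u h2
        set u' : {v : V | v ≠ w} := ⟨u, huw⟩ with hu'
        refine ⟨insert (M + 1) (S u'), ?_, ?_, ?_⟩
        · rw [Finset.card_insert_of_notMem (fun h => by have := hbound u' _ h; omega), hcard]
        · intro h
          rcases Finset.mem_insert.mp h with h | h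
          · omega
          · exact hMnot u' h
        · intro v
          have h1 : (M + 1) ∉ insert M (S v) := by
            intro h
            rcases Finset.mem_insert.mp h with h | h
            · omega
            · have := hbound v _ h; omega
          rw [Finset.insert_inter_of_notMem h1, Finset.inter_insert_of_notMem (hMnot u')]
          constructor
          · intro hadj'
            have : (v : V) = u := huniq v hadj'
            have hv : v = u' := Subtype.ext this
            rw [hv, Finset.inter_self, hcard]
          · intro hc
            by_cases hvu : v = u'
            · rw [hvu]; exact hu
            · exact absurd hc (hlt u' v (fun h => hvu h.symm))
      · push_neg at hu
        refine ⟨(Finset.range (n + 1)).image (· + (M + 1)), ?_, ?_, ?_⟩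
        · rw [Finset.card_image_of_injective _ (add_left_injective _), Finset.card_range]
        · intro h
          obtain ⟨x, _, hx⟩ := Finset.mem_image.mp h
          omega
        · intro v
          have hemp : (Finset.range (n + 1)).image (· + (M + 1)) ∩ insert M (S v) = ∅ := by
            rw [Finset.eq_empty_iff_forall_notMem]
            intro x hx
            obtain ⟨hx1, hx2⟩ := Finset.mem_inter.mp hx
            obtain ⟨y, _, hy⟩ := Finset.mem_image.mp hx1
            rcases Finset.mem_insert.mp hx2 with h | h
            · omega
            · have := hbound v _ h; omega
          rw [hemp]
          simp only [Finset.card_empty]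
          constructor
          · intro h; exact absurd h (hu v)
          · intro h; omega
    refine ⟨n + 1, by omega, fun v => if h : v = w then T else insert M (S ⟨v, h⟩), ?_, ?_, ?_⟩
    · intro a b h
      by_cases ha : a = w <;> by_cases hb : b = w
      · rw [ha, hb]
      · simp only [ha, dif_pos, dif_neg hb] at h
        exact absurd (h ▸ Finset.mem_insert_self M (S ⟨b, hb⟩)) hTM
      · simp only [hb, dif_pos, dif_neg ha] at h
        exact absurd (h.symm ▸ Finset.mem_insert_self M (S ⟨a, ha⟩)) hTM
      · simp only [dif_neg ha, dif_neg hb] at h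
        have h' : S ⟨a, ha⟩ = S ⟨b, hb⟩ := by
          have := congrArg (·.erase M) h
          simpa [Finset.erase_insert_of_ne, Finset.erase_insert,
            Finset.erase_eq_of_notMem (hMnot _)] using this
        have := hinj h'
        exact congrArg Subtype.val this
    · intro v
      by_cases h : v = w
      · simp [h, hTcard]
      · simp only [dif_neg h]
        rw [Finset.card_insert_of_notMem (hMnot _), hcard]
    · intro a b hab
      by_cases ha : a = w <;> by_cases hb : b = w
      · exact absurd (ha.trans hb.symm) hab
      · subst ha
        simp only [dif_pos, dif_neg hb]
        have := hTadj ⟨b, hb⟩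
        simpa using this
      · subst hb
        simp only [dif_pos, dif_neg ha]
        rw [G'.adj_comm, Finset.inter_comm]
        have := hTadj ⟨a, ha⟩
        simpa using this
      · simp only [dif_neg ha, dif_neg hb]
        have heq : insert M (S ⟨a, ha⟩) ∩ insert M (S ⟨b, hb⟩)
            = insert M (S ⟨a, ha⟩ ∩ S ⟨b, hb⟩) := by
          rw [Finset.insert_inter_of_mem (Finset.mem_insert_self M _),
            Finset.inter_insert_of_notMem (hMnot _)]
        rw [heq, Finset.card_insert_of_notMem
          (fun h => hMnot ⟨a, ha⟩ (Finset.mem_inter.mp h).1)]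
        have hne : (⟨a, ha⟩ : {v : V | v ≠ w}) ≠ ⟨b, hb⟩ := fun h => hab (congrArg Subtype.val h)
        have := hadj ⟨a, ha⟩ ⟨b, hb⟩ hne
        have hGadj : (G'.induce {v : V | v ≠ w}).Adj ⟨a, ha⟩ ⟨b, hb⟩ ↔ G'.Adj a b := Iff.rfl
        rw [hGadj] at this
        rw [this]
        omega
end

section
/- Every finite tree (a finite connected acyclic simple graph) is JIS. -/
open SimpleGraph Finset in
/-- every finite tree (finite connected acyclic simple graph) is JIS. -/
theorem tree_isJIS {V : Type*} [Fintype V] (G : SimpleGraph V) (hG : G.IsTree) :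
    IsJIS G := by
  classical
  haveI : Nonempty V := hG.isConnected.nonempty
  set N := Fintype.card V with hN
  have hNpos : 0 < N := Fintype.card_pos
  obtain ⟨f, hf⟩ := Countable.exists_injective_nat V
  let r : V := Classical.arbitrary V
  have hEU := hG.existsUnique_path
  let P : ∀ v : V, G.Walk r v := fun v => (hEU r v).choose
  have hP : ∀ v, (P v).IsPath := fun v => (hEU r v).choose_spec.1
  have hPu : ∀ v (q : G.Walk r v), q.IsPath → q = P v :=
    fun v q hq => (hEU r v).choose_spec.2 q hq
  let B : V → Finset V := fun v => (P v).support.toFinset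
  have hvB : ∀ v, v ∈ B v := fun v => by
    simp only [B, List.mem_toFinset]; exact Walk.end_mem_support _
  have hBcard : ∀ v, (B v).card = (P v).support.length := fun v =>
    List.toFinset_card_of_nodup (hP v).support_nodup
  -- decomposition lemma
  have decomp : ∀ v u (hu : u ∈ (P v).support),
      ∃ q : G.Walk u v, q.IsPath ∧ B v = B u ∪ q.support.tail.toFinset ∧
        Disjoint (B u) q.support.tail.toFinset ∧ (B v).card = (B u).card + q.length := by
    intro v u hu
    have hsplit := (P v).take_spec hu
    set p₁ := (P v).takeUntil u hu with hp₁def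
    set q := (P v).dropUntil u hu with hqdef
    have hp₁ : p₁.IsPath := (hP v).takeUntil hu
    have hq : q.IsPath := (hP v).dropUntil hu
    have hp₁P : p₁ = P u := hPu u p₁ hp₁
    have hsupp : (P v).support = (P u).support ++ q.support.tail := by
      conv_lhs => rw [← hsplit]
      rw [Walk.support_append, hp₁P]
    have hnodup : ((P u).support ++ q.support.tail).Nodup := by
      rw [← hsupp]; exact (hP v).support_nodup
    rw [List.nodup_append] at hnodup
    have hdisj : Disjoint (B u) q.support.tail.toFinset := by
      rw [List.disjoint_toFinset_iff_disjoint]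
      intro a ha hb
      exact hnodup.2.2 a ha a hb rfl
    refine ⟨q, hq, ?_, hdisj, ?_⟩
    · show (P v).support.toFinset = _
      rw [hsupp, List.toFinset_append]
    · rw [hBcard, hBcard, hsupp, List.length_append]
      have htail : q.support.tail.length = q.length := by
        rw [List.length_tail, Walk.length_support]; omega
      omega
  -- injectivity of B
  have hBinj : Function.Injective B := by
    intro v w hvw
    have hv : v ∈ (P w).support := by
      have := hvB v; rw [hvw] at this; simpa only [B, List.mem_toFinset] using this
    have hw : w ∈ (P v).support := by
      have := hvB w; rw [← hvw] at this; simpa only [B, List.mem_toFinset] using this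
    obtain ⟨q, -, -, -, hc⟩ := decomp w v hv
    obtain ⟨q', -, -, -, hc'⟩ := decomp v w hw
    have : q.length = 0 := by omega
    exact Walk.eq_of_length_eq_zero this
  -- key structural characterization of adjacency
  have keyfwd : ∀ v w, G.Adj v w →
      (B w = B v ∪ {w} ∧ w ∉ B v) ∨ (B v = B w ∪ {v} ∧ v ∉ B w) := by
    intro v w hadj
    by_cases hw : w ∈ (P v).support
    · right
      obtain ⟨q, hq, hBeq, hdisj, -⟩ := decomp v w hw
      have hqs : q = Walk.cons hadj.symm Walk.nil := by
        have := hG.IsAcyclic.path_unique ⟨q, hq⟩ (Path.singleton hadj.symm)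
        simpa [Path.singleton] using congrArg Subtype.val this
      subst hqs
      simp only [Walk.support_cons, Walk.support_nil, List.tail_cons] at hBeq hdisj
      refine ⟨by simpa using hBeq, ?_⟩
      simpa using Finset.disjoint_singleton_right.mp hdisj
    · left
      have hpath : ((P v).concat hadj).IsPath := by
        rw [Walk.isPath_def, Walk.support_concat,
          List.nodup_append]
        refine ⟨(hP v).support_nodup, List.nodup_singleton w, ?_⟩
        intro x hx y hy hxy
        rw [List.mem_singleton] at hy
        subst hy
        subst hxy
        exact hw hx
      have hPw : (P v).concat hadj = P w := hPu w _ hpath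
      constructor
      · show (P w).support.toFinset = _
        rw [← hPw, Walk.support_concat, List.toFinset_append]
        rfl
      · simpa only [B, List.mem_toFinset] using hw
  -- backward: card relations imply adjacency
  have keybwd : ∀ v w, v ≠ w → (B v ⊆ B w) → (B w).card = (B v).card + 1 → G.Adj v w := by
    intro v w hne hsub hcard
    have hv : v ∈ (P w).support := by
      have := hsub (hvB v); simpa only [B, List.mem_toFinset] using this
    obtain ⟨q, -, -, -, hc⟩ := decomp w v hv
    have : q.length = 1 := by omega
    exact Walk.adj_of_length_eq_one this
  -- the encoded sets
  let g0 : V → ℕ := fun x => 2 * f x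
  let g1 : V → ℕ := fun x => 2 * f x + 1
  have hg0 : Function.Injective g0 := fun a b h => hf (by simp only [g0] at h; omega)
  have hg1 : Function.Injective g1 := fun a b h => hf (by simp only [g1] at h; omega)
  have hdisj01 : ∀ s t : Finset V, Disjoint (s.image g0) (t.image g1) := by
    intro s t
    rw [Finset.disjoint_left]
    rintro x hx hx'
    obtain ⟨a, -, ha⟩ := Finset.mem_image.mp hx
    obtain ⟨b, -, hb⟩ := Finset.mem_image.mp hx'
    simp only [g0] at ha
    simp only [g1] at hb
    omega
  let S : V → Finset ℕ := fun v => (B v).image g0 ∪ ((B v)ᶜ).image g1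
  have hmemS : ∀ v x, g0 x ∈ S v ↔ x ∈ B v := by
    intro v x
    simp only [S, Finset.mem_union, Finset.mem_image]
    constructor
    · rintro (⟨a, ha, hax⟩ | ⟨a, ha, hax⟩)
      · rwa [hg0 hax] at ha
      · exfalso; simp only [g0, g1] at hax ⊢; omega
    · intro h; exact Or.inl ⟨x, h, rfl⟩
  have hScard : ∀ v, (S v).card = N := by
    intro v
    rw [Finset.card_union_of_disjoint (hdisj01 _ _),
      Finset.card_image_of_injective _ hg0, Finset.card_image_of_injective _ hg1,
      Finset.card_compl]
    have := Finset.card_le_univ (B v)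
    omega
  have hSinter : ∀ v w, (S v ∩ S w).card =
      (B v ∩ B w).card + ((B v)ᶜ ∩ (B w)ᶜ).card := by
    intro v w
    have heq : S v ∩ S w = (B v ∩ B w).image g0 ∪ ((B v)ᶜ ∩ (B w)ᶜ).image g1 := by
      show ((B v).image g0 ∪ ((B v)ᶜ).image g1) ∩ ((B w).image g0 ∪ ((B w)ᶜ).image g1) = _
      have e1 : (B v).image g0 ∩ ((B w)ᶜ).image g1 = ∅ :=
        Finset.disjoint_iff_inter_eq_empty.mp (hdisj01 _ _)
      have e2 : ((B v)ᶜ).image g1 ∩ (B w).image g0 = ∅ :=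
        Finset.disjoint_iff_inter_eq_empty.mp (hdisj01 _ _).symm
      rw [Finset.union_inter_distrib_right, Finset.inter_union_distrib_left,
        Finset.inter_union_distrib_left,
        ← Finset.image_inter _ _ hg0, ← Finset.image_inter _ _ hg1, e1, e2]
      simp
    rw [heq, Finset.card_union_of_disjoint (hdisj01 _ _),
      Finset.card_image_of_injective _ hg0, Finset.card_image_of_injective _ hg1]
  have hSinj : Function.Injective S := by
    intro v w h
    apply hBinj
    ext x
    rw [← hmemS v x, ← hmemS w x, h]
  refine ⟨N, hNpos, S, hSinj, hScard, ?_⟩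
  intro v w hne
  rw [hSinter]
  constructor
  · intro hadj
    rcases keyfwd v w hadj with ⟨hBeq, hnm⟩ | ⟨hBeq, hnm⟩
    · have hsub : B v ⊆ B w := by rw [hBeq]; exact Finset.subset_union_left
      have hc : (B w).card = (B v).card + 1 := by
        rw [hBeq, Finset.card_union_of_disjoint (Finset.disjoint_singleton_right.mpr hnm),
          Finset.card_singleton]
      have h1 : B v ∩ B w = B v := Finset.inter_eq_left.mpr hsub
      have h2 : (B v)ᶜ ∩ (B w)ᶜ = (B w)ᶜ :=
        Finset.inter_eq_right.mpr (Finset.compl_subset_compl.mpr hsub)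
      rw [h1, h2, Finset.card_compl]
      have := Finset.card_le_univ (B w)
      omega
    · have hsub : B w ⊆ B v := by rw [hBeq]; exact Finset.subset_union_left
      have hc : (B v).card = (B w).card + 1 := by
        rw [hBeq, Finset.card_union_of_disjoint (Finset.disjoint_singleton_right.mpr hnm),
          Finset.card_singleton]
      have h1 : B v ∩ B w = B w := Finset.inter_eq_right.mpr hsub
      have h2 : (B v)ᶜ ∩ (B w)ᶜ = (B v)ᶜ :=
        Finset.inter_eq_left.mpr (Finset.compl_subset_compl.mpr hsub)
      rw [h1, h2, Finset.card_compl]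
      have := Finset.card_le_univ (B v)
      omega
  · intro hcard
    have hcompl : (B v)ᶜ ∩ (B w)ᶜ = (B v ∪ B w)ᶜ := (Finset.compl_union _ _).symm
    rw [hcompl, Finset.card_compl] at hcard
    have hle : (B v ∪ B w).card ≤ N := Finset.card_le_univ _
    have hiu : (B v ∩ B w).card + (B v ∪ B w).card = (B v).card + (B w).card :=
      Finset.card_inter_add_card_union _ _
    have huc : (B v ∪ B w).card = (B v ∩ B w).card + 1 := by omega
    have hvi : (B v ∩ B w).card ≤ (B v).card := Finset.card_le_card Finset.inter_subset_left
    have hwi : (B v ∩ B w).card ≤ (B w).card := Finset.card_le_card Finset.inter_subset_right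
    have hvu : (B v).card ≤ (B v ∪ B w).card := Finset.card_le_card Finset.subset_union_left
    have hwu : (B w).card ≤ (B v ∪ B w).card := Finset.card_le_card Finset.subset_union_right
    -- one of B v, B w equals the intersection
    rcases Nat.lt_or_ge (B v).card (B w).card with hlt | hge
    · -- card B v = inter card, B v ⊆ B w
      have hveq : (B v).card = (B v ∩ B w).card := by omega
      have h1 : B v ∩ B w = B v :=
        Finset.eq_of_subset_of_card_le Finset.inter_subset_left (by omega)
      have hsub : B v ⊆ B w := by
        intro x hx; rw [← h1] at hx; exact (Finset.mem_inter.mp hx).2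
      exact keybwd v w hne hsub (by omega)
    · have hne' : (B v).card ≠ (B w).card := by
        intro h
        have hor : (B v).card = (B v ∩ B w).card ∨ (B v).card = (B v ∩ B w).card + 1 := by
          omega
        rcases hor with h' | h'
        · -- both equal intersection: B v = B w
          have h1 : B v ∩ B w = B v :=
            Finset.eq_of_subset_of_card_le Finset.inter_subset_left (by omega)
          have h2 : B v ∩ B w = B w :=
            Finset.eq_of_subset_of_card_le Finset.inter_subset_right (by omega)
          exact hne (hBinj (h1.symm.trans h2))
        · -- both equal union: B v = B w
          have h1 : B v = B v ∪ B w :=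
            Finset.eq_of_subset_of_card_le Finset.subset_union_left (by omega)
          have h2 : B w = B v ∪ B w :=
            Finset.eq_of_subset_of_card_le Finset.subset_union_right (by omega)
          exact hne (hBinj (h1.trans h2.symm))
      have hweq : (B w).card = (B v ∩ B w).card := by omega
      have h1 : B v ∩ B w = B w :=
        Finset.eq_of_subset_of_card_le Finset.inter_subset_right (by omega)
      have hsub : B w ⊆ B v := by
        intro x hx; rw [← h1] at hx; exact (Finset.mem_inter.mp hx).1
      exact (keybwd w v (Ne.symm hne) hsub (by omega)).symm
end

section
/- Let G and H be finite simple graphs and let G ⊕ H denote their disjoint union (the graph on the disjoint union of the vertex sets whose edges are the edges of G together with the edges of H, with no edges between the two parts). Then G ⊕ H is JIS if and only if both G and H are JIS. -/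
/-- Auxiliary labeling predicate with fixed cardinality. -/
def Lab {V : Type*} (G : SimpleGraph V) (n : ℕ) : Prop :=
  ∃ S : V → Finset ℕ, Function.Injective S ∧
    (∀ v, (S v).card = n) ∧
    ∀ v w : V, v ≠ w → (G.Adj v w ↔ (S v ∩ S w).card = n - 1)

lemma insert_inter_insert {a : ℕ} (A B : Finset ℕ) :
    insert a A ∩ insert a B = insert a (A ∩ B) := by
  ext x; simp [Finset.mem_insert, Finset.mem_inter]; tauto

lemma lab_succ {V : Type*} (G : SimpleGraph V) {n : ℕ} (hn : 0 < n)
    (h : Lab G n) : Lab G (n + 1) := by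
  obtain ⟨S, hinj, hcard, hadj⟩ := h
  refine ⟨fun v => insert 0 ((S v).image (· + 1)), ?_, ?_, ?_⟩
  · intro v w hvw
    apply hinj
    have h0 : ∀ u : V, (0:ℕ) ∉ (S u).image (· + 1) := by
      intro u; simp
    have := congrArg (Finset.erase · 0) hvw
    simp only [Finset.erase_insert (h0 v), Finset.erase_insert (h0 w)] at this
    exact Finset.image_injective (add_left_injective 1) this
  · intro v
    rw [Finset.card_insert_of_notMem (by simp),
      Finset.card_image_of_injective _ (add_left_injective 1), hcard]
  · intro v w hvw
    rw [hadj v w hvw]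
    rw [insert_inter_insert, ← Finset.image_inter _ _ (add_left_injective 1),
      Finset.card_insert_of_notMem (by simp),
      Finset.card_image_of_injective _ (add_left_injective 1)]
    omega

lemma lab_of_le {V : Type*} (G : SimpleGraph V) {n m : ℕ} (hn : 0 < n)
    (h : Lab G n) (hm : n ≤ m) : Lab G m := by
  induction m with
  | zero => omega
  | succ k ih =>
    rcases Nat.lt_or_ge n (k+1) with hlt | hge
    · exact lab_succ G (by omega) (ih (by omega))
    · have : n = k + 1 := by omega
      exact this ▸ h

/-- the disjoint union `G ⊕ H` of two finite simple graphs is JIS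
if and only if both `G` and `H` are JIS. -/
theorem sum_isJIS_iff {α β : Type*} [Fintype α] [Fintype β]
    (G : SimpleGraph α) (H : SimpleGraph β) :
    IsJIS (G ⊕g H) ↔ IsJIS G ∧ IsJIS H := by
  constructor
  · rintro ⟨n, hn, S, hinj, hcard, hadj⟩
    constructor
    · exact ⟨n, hn, fun a => S (Sum.inl a),
        fun a b hab => Sum.inl_injective (hinj hab),
        fun a => hcard _,
        fun v w hvw => by simpa using hadj (Sum.inl v) (Sum.inl w) (by simpa)⟩
    · exact ⟨n, hn, fun a => S (Sum.inr a),
        fun a b hab => Sum.inr_injective (hinj hab),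
        fun a => hcard _,
        fun v w hvw => by simpa using hadj (Sum.inr v) (Sum.inr w) (by simpa)⟩
  · rintro ⟨⟨n, hn, hG⟩, ⟨m, hm, hH⟩⟩
    have hGL : Lab G (max n m) := lab_of_le G hn hG (le_max_left n m)
    have hHL : Lab H (max n m) := lab_of_le H hm hH (le_max_right n m)
    set N := max n m with hNdef
    have hN : 0 < N := lt_of_lt_of_le hn (le_max_left n m)
    obtain ⟨S₁, hinj₁, hcard₁, hadj₁⟩ := hGL
    obtain ⟨S₂, hinj₂, hcard₂, hadj₂⟩ := hHL
    have hf : Function.Injective (fun x : ℕ => 2 * x + 2) := by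
      intro a b h; simp only [] at h; omega
    have hg : Function.Injective (fun x : ℕ => 2 * x + 3) := by
      intro a b h; simp only [] at h; omega
    refine ⟨N + 1, by omega, Sum.elim
      (fun a => insert 0 ((S₁ a).image (fun x => 2 * x + 2)))
      (fun b => insert 1 ((S₂ b).image (fun x => 2 * x + 3))), ?_, ?_, ?_⟩
    · have key : ∀ (a : α) (b : β),
          insert 0 ((S₁ a).image (fun x => 2 * x + 2)) ≠
          insert 1 ((S₂ b).image (fun x => 2 * x + 3)) := by
        intro a b h
        have h1 : (1:ℕ) ∈ insert 1 ((S₂ b).image (fun x => 2 * x + 3)) :=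
          Finset.mem_insert_self _ _
        rw [← h] at h1
        simp only [Finset.mem_insert, Finset.mem_image] at h1
        omega
      rintro (a | a) (b | b) h
      · simp only [Sum.elim_inl] at h
        have h0 : ∀ c : Finset ℕ, (0:ℕ) ∉ c.image (fun x => 2 * x + 2) := by
          intro c; simp
        have := congrArg (Finset.erase · 0) h
        simp only [Finset.erase_insert (h0 _)] at this
        exact congrArg Sum.inl (hinj₁ (Finset.image_injective hf this))
      · exact absurd h (key a b)
      · exact absurd h.symm (key b a)
      · simp only [Sum.elim_inr] at h
        have h1 : ∀ c : Finset ℕ, (1:ℕ) ∉ c.image (fun x => 2 * x + 3) := by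
          intro c; simp
        have := congrArg (Finset.erase · 1) h
        simp only [Finset.erase_insert (h1 _)] at this
        exact congrArg Sum.inr (hinj₂ (Finset.image_injective hg this))
    · rintro (a | b)
      · simp only [Sum.elim_inl]
        rw [Finset.card_insert_of_notMem (by simp),
          Finset.card_image_of_injective _ hf, hcard₁]
      · simp only [Sum.elim_inr]
        rw [Finset.card_insert_of_notMem (by simp),
          Finset.card_image_of_injective _ hg, hcard₂]
    · have cross : ∀ (a : α) (b : β),
          (insert 0 ((S₁ a).image (fun x => 2 * x + 2)) ∩
           insert 1 ((S₂ b).image (fun x => 2 * x + 3))) = ∅ := by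
        intro a b
        rw [Finset.eq_empty_iff_forall_notMem]
        intro x hx
        simp only [Finset.mem_inter, Finset.mem_insert, Finset.mem_image] at hx
        rcases hx with ⟨h1 | ⟨y, _, hy⟩, h2 | ⟨z, _, hz⟩⟩ <;> omega
      rintro (a | a) (b | b) hvw
      · simp only [Sum.elim_inl, SimpleGraph.sum_adj]
        rw [hadj₁ a b (fun h => hvw (congrArg Sum.inl h))]
        rw [insert_inter_insert, ← Finset.image_inter _ _ hf,
          Finset.card_insert_of_notMem (by simp),
          Finset.card_image_of_injective _ hf]
        omega
      · simp only [Sum.elim_inl, Sum.elim_inr, SimpleGraph.sum_adj, cross a b]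
        simp
        omega
      · simp only [Sum.elim_inl, Sum.elim_inr, SimpleGraph.sum_adj,
          Finset.inter_comm, cross b a]
        simp
        omega
      · simp only [Sum.elim_inr, SimpleGraph.sum_adj]
        rw [hadj₂ a b (fun h => hvw (congrArg Sum.inr h))]
        rw [insert_inter_insert, ← Finset.image_inter _ _ hg,
          Finset.card_insert_of_notMem (by simp),
          Finset.card_image_of_injective _ hg]
        omega
end

section
/- If G and G' are finite JIS graphs, then their Cartesian (box) product G □ G' is JIS. -/
/-- the Cartesian (box) product of two finite JIS graphs is JIS. -/
theorem boxProd_isJIS {α β : Type*} [Fintype α] [Fintype β]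
    (G : SimpleGraph α) (G' : SimpleGraph β) (hG : IsJIS G) (hG' : IsJIS G') :
    IsJIS (G □ G') := by
  obtain ⟨n, hn, S, hSinj, hScard, hSadj⟩ := hG
  obtain ⟨m, hm, T, hTinj, hTcard, hTadj⟩ := hG'
  have he1 : Function.Injective (fun x : ℕ => 2 * x) := fun a b h => by simpa using h
  have he2 : Function.Injective (fun x : ℕ => 2 * x + 1) := fun a b h => by simpa using h
  set U : α × β → Finset ℕ :=
    fun p => (S p.1).image (fun x => 2 * x) ∪ (T p.2).image (fun x => 2 * x + 1) with hU
  have hdisj : ∀ (s t : Finset ℕ),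
      Disjoint (s.image (fun x => 2 * x)) (t.image (fun x => 2 * x + 1)) := by
    intro s t
    rw [Finset.disjoint_left]
    rintro a ha hb
    simp only [Finset.mem_image] at ha hb
    obtain ⟨x, _, rfl⟩ := ha
    obtain ⟨y, _, hy⟩ := hb
    omega
  have hUcard : ∀ p : α × β, (U p).card = n + m := by
    intro p
    rw [hU, Finset.card_union_of_disjoint (hdisj _ _),
      Finset.card_image_of_injective _ he1, Finset.card_image_of_injective _ he2,
      hScard, hTcard]
  have hUint : ∀ p q : α × β,
      (U p ∩ U q).card = (S p.1 ∩ S q.1).card + (T p.2 ∩ T q.2).card := by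
    intro p q
    have : U p ∩ U q =
        ((S p.1 ∩ S q.1).image (fun x => 2 * x)) ∪
        ((T p.2 ∩ T q.2).image (fun x => 2 * x + 1)) := by
      ext a
      simp only [hU, Finset.mem_inter, Finset.mem_union, Finset.mem_image]
      constructor
      · rintro ⟨h1 | h1, h2 | h2⟩
        · obtain ⟨x, hx, rfl⟩ := h1
          obtain ⟨y, hy, hxy⟩ := h2
          have : x = y := by omega
          subst this
          exact Or.inl ⟨x, ⟨hx, hy⟩, rfl⟩
        · obtain ⟨x, hx, rfl⟩ := h1
          obtain ⟨y, hy, hxy⟩ := h2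
          omega
        · obtain ⟨x, hx, rfl⟩ := h1
          obtain ⟨y, hy, hxy⟩ := h2
          omega
        · obtain ⟨x, hx, rfl⟩ := h1
          obtain ⟨y, hy, hxy⟩ := h2
          have : x = y := by omega
          subst this
          exact Or.inr ⟨x, ⟨hx, hy⟩, rfl⟩
      · rintro (⟨x, ⟨hx1, hx2⟩, rfl⟩ | ⟨x, ⟨hx1, hx2⟩, rfl⟩)
        · exact ⟨Or.inl ⟨x, hx1, rfl⟩, Or.inl ⟨x, hx2, rfl⟩⟩
        · exact ⟨Or.inr ⟨x, hx1, rfl⟩, Or.inr ⟨x, hx2, rfl⟩⟩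
    rw [this, Finset.card_union_of_disjoint (hdisj _ _),
      Finset.card_image_of_injective _ he1, Finset.card_image_of_injective _ he2]
  have hSlt : ∀ v y : α, v ≠ y → (S v ∩ S y).card < n := by
    intro v y hvy
    rcases lt_or_ge (S v ∩ S y).card n with h | h
    · exact h
    · exfalso
      have h1 : S v ∩ S y = S v :=
        Finset.eq_of_subset_of_card_le Finset.inter_subset_left (by rw [hScard]; exact h)
      have h2 : S v ⊆ S y := by rw [← h1]; exact Finset.inter_subset_right
      have := Finset.eq_of_subset_of_card_le h2 (by rw [hScard, hScard])
      exact hvy (hSinj this)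
  have hTlt : ∀ v y : β, v ≠ y → (T v ∩ T y).card < m := by
    intro v y hvy
    rcases lt_or_ge (T v ∩ T y).card m with h | h
    · exact h
    · exfalso
      have h1 : T v ∩ T y = T v :=
        Finset.eq_of_subset_of_card_le Finset.inter_subset_left (by rw [hTcard]; exact h)
      have h2 : T v ⊆ T y := by rw [← h1]; exact Finset.inter_subset_right
      have := Finset.eq_of_subset_of_card_le h2 (by rw [hTcard, hTcard])
      exact hvy (hTinj this)
  refine ⟨n + m, by omega, U, ?_, hUcard, ?_⟩
  · -- injectivity
    intro p q hpq
    have h1 : (S p.1).image (fun x => 2 * x) = (S q.1).image (fun x => 2 * x) := by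
      ext a
      constructor
      · intro ha
        have : a ∈ U q := by rw [← hpq, hU]; exact Finset.mem_union_left _ ha
        rw [hU] at this
        rcases Finset.mem_union.mp this with h | h
        · exact h
        · exfalso
          simp only [Finset.mem_image] at ha h
          obtain ⟨x, _, rfl⟩ := ha
          obtain ⟨y, _, hy⟩ := h
          omega
      · intro ha
        have : a ∈ U p := by rw [hpq, hU]; exact Finset.mem_union_left _ ha
        rw [hU] at this
        rcases Finset.mem_union.mp this with h | h
        · exact h
        · exfalso
          simp only [Finset.mem_image] at ha h
          obtain ⟨x, _, rfl⟩ := ha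
          obtain ⟨y, _, hy⟩ := h
          omega
    have h2 : (T p.2).image (fun x => 2 * x + 1) = (T q.2).image (fun x => 2 * x + 1) := by
      have := hpq
      rw [hU] at this
      have h1' := h1
      -- U p = U q and even parts equal; derive odd parts
      ext a
      constructor
      · intro ha
        have hm : a ∈ U q := by rw [← hpq, hU]; exact Finset.mem_union_right _ ha
        rw [hU] at hm
        rcases Finset.mem_union.mp hm with h | h
        · exfalso
          simp only [Finset.mem_image] at ha h
          obtain ⟨x, _, rfl⟩ := ha
          obtain ⟨y, _, hy⟩ := h
          omega
        · exact h
      · intro ha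
        have hm : a ∈ U p := by rw [hpq, hU]; exact Finset.mem_union_right _ ha
        rw [hU] at hm
        rcases Finset.mem_union.mp hm with h | h
        · exfalso
          simp only [Finset.mem_image] at ha h
          obtain ⟨x, _, rfl⟩ := ha
          obtain ⟨y, _, hy⟩ := h
          omega
        · exact h
    have e1 : S p.1 = S q.1 := Finset.image_injective he1 h1
    have e2 : T p.2 = T q.2 := Finset.image_injective he2 h2
    exact Prod.ext (hSinj e1) (hTinj e2)
  · -- adjacency
    intro p q hpq
    rw [SimpleGraph.boxProd_adj, hUint]
    by_cases h1 : p.1 = q.1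
    · by_cases h2 : p.2 = q.2
      · exact absurd (Prod.ext h1 h2) hpq
      · have hS : S p.1 ∩ S q.1 = S p.1 := by rw [h1, Finset.inter_self]
        rw [hS, hScard]
        have ht := hTadj p.2 q.2 h2
        have htlt := hTlt p.2 q.2 h2
        constructor
        · rintro (⟨hadj, _⟩ | ⟨hadj, _⟩)
          · exact absurd h1 (G.ne_of_adj hadj)
          · have := ht.mp hadj; omega
        · intro hc
          exact Or.inr ⟨ht.mpr (by omega), h1⟩
    · by_cases h2 : p.2 = q.2
      · have hT : T p.2 ∩ T q.2 = T p.2 := by rw [h2, Finset.inter_self]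
        rw [hT, hTcard]
        have hs := hSadj p.1 q.1 h1
        have hslt := hSlt p.1 q.1 h1
        constructor
        · rintro (⟨hadj, _⟩ | ⟨hadj, _⟩)
          · have := hs.mp hadj; omega
          · exact absurd h2 (G'.ne_of_adj hadj)
        · intro hc
          exact Or.inl ⟨hs.mpr (by omega), h2⟩
      · have hslt := hSlt p.1 q.1 h1
        have htlt := hTlt p.2 q.2 h2
        constructor
        · rintro (⟨_, h⟩ | ⟨_, h⟩)
          · exact absurd h h2
          · exact absurd h h1
        · intro hc
          omega
end

section
/- The complete bipartite graph K_{2,3} is not JIS. -/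
lemma inter_card_lt_of_ne {n : ℕ} {X Y : Finset ℕ} (hX : X.card = n) (hY : Y.card = n)
    (hXY : X ≠ Y) : (X ∩ Y).card < n := by
  refine lt_of_le_of_ne (hX ▸ Finset.card_le_card Finset.inter_subset_left) ?_
  intro h
  have h1 : X ∩ Y = X :=
    Finset.eq_of_subset_of_card_le Finset.inter_subset_left (by omega)
  have hs : X ⊆ Y := Finset.inter_eq_left.mp h1
  exact hXY (Finset.eq_of_subset_of_card_le hs (by omega))

/-- the complete bipartite graph `K_{2,3}` is not JIS. -/
theorem completeBipartite_two_three_not_isJIS :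
    ¬ IsJIS (completeBipartiteGraph (Fin 2) (Fin 3)) := by
  rintro ⟨n, hn, S, hinj, hcard, hadj⟩
  set A := S (Sum.inl 0) with hA
  set B := S (Sum.inl 1) with hB
  set T : Fin 3 → Finset ℕ := fun i => S (Sum.inr i) with hT
  have hne01 : (Sum.inl 0 : Fin 2 ⊕ Fin 3) ≠ Sum.inl 1 := by simp
  have hAB : A ≠ B := fun h => hne01 (hinj h)
  -- A and B are not adjacent
  have hABcard : (A ∩ B).card ≠ n - 1 := by
    intro h
    have := (hadj _ _ hne01).mpr h
    simp [completeBipartiteGraph] at this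
  have hABlt : (A ∩ B).card < n := inter_card_lt_of_ne (hcard _) (hcard _) hAB
  have hABle : (A ∩ B).card + 2 ≤ n := by omega
  -- each right vertex is adjacent to A and B
  have hTA : ∀ i, (T i ∩ A).card = n - 1 := by
    intro i
    have hne : (Sum.inl 0 : Fin 2 ⊕ Fin 3) ≠ Sum.inr i := by simp
    have := (hadj _ _ hne).mp (by simp [completeBipartiteGraph])
    rwa [Finset.inter_comm] at this
  have hTB : ∀ i, (T i ∩ B).card = n - 1 := by
    intro i
    have hne : (Sum.inl 1 : Fin 2 ⊕ Fin 3) ≠ Sum.inr i := by simp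
    have := (hadj _ _ hne).mp (by simp [completeBipartiteGraph])
    rwa [Finset.inter_comm] at this
  -- A ∩ B ⊆ T i, and |A ∩ B| = n - 2
  have hsub : ∀ i, (T i ∩ A) ∩ (T i ∩ B) = A ∩ B := by
    intro i
    have hu : ((T i ∩ A) ∪ (T i ∩ B)).card ≤ n := by
      rw [← hcard (Sum.inr i)]
      exact Finset.card_le_card
        (Finset.union_subset Finset.inter_subset_left Finset.inter_subset_left)
    have hie := Finset.card_union_add_card_inter (T i ∩ A) (T i ∩ B)
    rw [hTA i, hTB i] at hie
    have hss : (T i ∩ A) ∩ (T i ∩ B) ⊆ A ∩ B := by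
      intro x hx
      simp only [Finset.mem_inter] at hx ⊢
      exact ⟨hx.1.2, hx.2.2⟩
    refine Finset.eq_of_subset_of_card_le hss (by omega)
  have hsubT : ∀ i, A ∩ B ⊆ T i := by
    intro i
    rw [← hsub i]
    exact (Finset.inter_subset_left).trans Finset.inter_subset_left
  have hCcard : (A ∩ B).card = n - 2 := by
    have hu : ((T 0 ∩ A) ∪ (T 0 ∩ B)).card ≤ n := by
      rw [← hcard (Sum.inr 0)]
      exact Finset.card_le_card
        (Finset.union_subset Finset.inter_subset_left Finset.inter_subset_left)
    have hie := Finset.card_union_add_card_inter (T 0 ∩ A) (T 0 ∩ B)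
    rw [hTA 0, hTB 0, hsub 0] at hie
    omega
  -- distinct right vertices intersect exactly in A ∩ B
  have hTT : ∀ i j : Fin 3, i ≠ j → T i ∩ T j = A ∩ B := by
    intro i j hij
    have hne : (Sum.inr i : Fin 2 ⊕ Fin 3) ≠ Sum.inr j := by simpa using hij
    have hTne : T i ≠ T j := fun h => hne (hinj h)
    have h1 : (T i ∩ T j).card ≠ n - 1 := by
      intro h
      have := (hadj _ _ hne).mpr h
      simp [completeBipartiteGraph] at this
    have h2 : (T i ∩ T j).card < n := inter_card_lt_of_ne (hcard _) (hcard _) hTne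
    have hss : A ∩ B ⊆ T i ∩ T j := Finset.subset_inter (hsubT i) (hsubT j)
    exact (Finset.eq_of_subset_of_card_le hss (by omega)).symm
  -- the singletons
  set E : Fin 3 → Finset ℕ := fun i => (T i ∩ A) \ (A ∩ B) with hE
  have hEcard : ∀ i, (E i).card = 1 := by
    intro i
    have hs : A ∩ B ⊆ T i ∩ A := Finset.subset_inter (hsubT i) Finset.inter_subset_left
    have := Finset.card_sdiff_of_subset hs
    rw [hTA i, hCcard] at this
    simp only [hE]
    omega
  have hEdisj : ∀ i j : Fin 3, i ≠ j → Disjoint (E i) (E j) := by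
    intro i j hij
    rw [Finset.disjoint_left]
    intro x hxi hxj
    simp only [hE, Finset.mem_sdiff, Finset.mem_inter] at hxi hxj
    have : x ∈ T i ∩ T j := Finset.mem_inter.mpr ⟨hxi.1.1, hxj.1.1⟩
    rw [hTT i j hij] at this
    exact hxi.2 (Finset.mem_inter.mp this)
  have hEsub : ∀ i, E i ⊆ A \ (A ∩ B) := by
    intro i
    exact Finset.sdiff_subset_sdiff Finset.inter_subset_right (le_refl _)
  have hDcard : (A \ (A ∩ B)).card = 2 := by
    have := Finset.card_sdiff_of_subset (Finset.inter_subset_left : A ∩ B ⊆ A)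
    rw [hcard, hCcard] at this
    omega
  have hd01 : Disjoint (E 0) (E 1) := hEdisj 0 1 (by decide)
  have hd2 : Disjoint (E 0 ∪ E 1) (E 2) :=
    Finset.disjoint_union_left.mpr ⟨hEdisj 0 2 (by decide), hEdisj 1 2 (by decide)⟩
  have hcard3 : (E 0 ∪ E 1 ∪ E 2).card = 3 := by
    rw [Finset.card_union_of_disjoint hd2, Finset.card_union_of_disjoint hd01,
      hEcard, hEcard, hEcard]
  have hle : (E 0 ∪ E 1 ∪ E 2).card ≤ (A \ (A ∩ B)).card :=
    Finset.card_le_card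
      (Finset.union_subset (Finset.union_subset (hEsub 0) (hEsub 1)) (hEsub 2))
  omega
end

section
/- The graph Δ_2 is not JIS. -/
/-- The graph `Δ i` (`i ≥ 2`): vertices `0, …, i+1` represent `v 1, …, v (i+2)`, and the
last vertex `i+2` represents `w`.  Edges: `v j — v (j+1)` for `1 ≤ j ≤ i+1`,
`v j — v (j+2)` for `1 ≤ j ≤ i` (a chain of `i` consecutively adjacent triangles),
together with `w — v 1` and `w — v (i+2)`. -/
def DeltaGraph (i : ℕ) : SimpleGraph (Fin (i + 3)) :=
  SimpleGraph.fromRel (fun a b =>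
    (b.val = a.val + 1 ∧ b.val ≤ i + 1) ∨
    (b.val = a.val + 2 ∧ b.val ≤ i + 1) ∨
    (a.val = i + 2 ∧ (b.val = 0 ∨ b.val = i + 1)))


lemma sum_sq_eq_inter (U : Finset ℕ) (S : Fin 5 → Finset ℕ) (hS : ∀ i, S i ⊆ U)
    (u : Fin 5 → ℤ) :
    ∑ x ∈ U, (∑ i, if x ∈ S i then u i else 0) ^ 2
      = ∑ i, ∑ j, u i * u j * ((S i ∩ S j).card : ℤ) := by
  have step1 : ∀ x, (∑ i, if x ∈ S i then u i else 0) ^ 2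
      = ∑ i, ∑ j, if x ∈ S i ∩ S j then u i * u j else 0 := by
    intro x
    rw [sq, Finset.sum_mul_sum]
    refine Finset.sum_congr rfl fun i _ => Finset.sum_congr rfl fun j _ => ?_
    by_cases hi : x ∈ S i <;> by_cases hj : x ∈ S j <;>
      simp [hi, hj, Finset.mem_inter]
  calc ∑ x ∈ U, (∑ i, if x ∈ S i then u i else 0) ^ 2
      = ∑ x ∈ U, ∑ i, ∑ j, if x ∈ S i ∩ S j then u i * u j else 0 :=
        Finset.sum_congr rfl fun x _ => step1 x
    _ = ∑ i, ∑ j, ∑ x ∈ U, if x ∈ S i ∩ S j then u i * u j else 0 := by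
        rw [Finset.sum_comm]
        exact Finset.sum_congr rfl fun i _ => Finset.sum_comm
    _ = ∑ i, ∑ j, u i * u j * ((S i ∩ S j).card : ℤ) := by
        refine Finset.sum_congr rfl fun i _ => Finset.sum_congr rfl fun j _ => ?_
        rw [Finset.sum_ite_mem,
          Finset.inter_eq_right.mpr (fun x hx => hS i (Finset.mem_inter.1 hx).1),
          Finset.sum_const, nsmul_eq_mul, mul_comm]

instance deltaAdjDecidable (i : ℕ) : DecidableRel (DeltaGraph i).Adj := fun a b =>
  decidable_of_iff' _ (SimpleGraph.fromRel_adj _ a b)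

/-- the graph `Δ 2` is not JIS. -/
theorem delta_two_not_isJIS : ¬ IsJIS (DeltaGraph 2) := by
  rintro ⟨n, hn, S, hinj, hcard, hadj⟩
  -- every pairwise intersection of distinct sets has card < n
  have lt_n : ∀ v w : Fin 5, v ≠ w → (S v ∩ S w).card < n := by
    intro v w hvw
    rcases lt_or_eq_of_le (le_trans (Finset.card_le_card
      (Finset.inter_subset_left : S v ∩ S w ⊆ S v)) (le_of_eq (hcard v))) with h | h
    · exact h
    · exfalso
      have h1 : S v ∩ S w = S v :=
        Finset.eq_of_subset_of_card_le Finset.inter_subset_left (by rw [hcard v, h])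
      have h2 : S v ⊆ S w := h1 ▸ Finset.inter_subset_right
      have h3 : S v = S w :=
        Finset.eq_of_subset_of_card_le h2 (by rw [hcard v, hcard w])
      exact hvw (hinj h3)
  -- edges: intersection has card n - 1 (as integers)
  have edge : ∀ v w : Fin 5, v ≠ w → (DeltaGraph 2).Adj v w →
      ((S v ∩ S w).card : ℤ) = (n : ℤ) - 1 := by
    intro v w hvw ha
    have h := (hadj v w hvw).mp ha
    omega
  -- non-edges with a common neighbor m: intersection has card n - 2, and n ≥ 2
  have nonedge : ∀ v w m : Fin 5, v ≠ w → ¬ (DeltaGraph 2).Adj v w →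
      v ≠ m → m ≠ w → (DeltaGraph 2).Adj v m → (DeltaGraph 2).Adj m w →
      ((S v ∩ S w).card : ℤ) = (n : ℤ) - 2 ∧ 2 ≤ n := by
    intro v w m hvw hna hvm hmw ha1 ha2
    have hne : (S v ∩ S w).card ≠ n - 1 := fun h => hna ((hadj v w hvw).mpr h)
    have hlt := lt_n v w hvw
    have hlow : (S v ∩ S m).card + (S m ∩ S w).card ≤ n + (S v ∩ S w).card := by
      have := Finset.card_union_add_card_inter (S v ∩ S m) (S m ∩ S w)
      have hu : ((S v ∩ S m) ∪ (S m ∩ S w)).card ≤ n := by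
        rw [← hcard m]
        exact Finset.card_le_card (Finset.union_subset
          Finset.inter_subset_right Finset.inter_subset_left)
      have hi : ((S v ∩ S m) ∩ (S m ∩ S w)).card ≤ (S v ∩ S w).card := by
        refine Finset.card_le_card fun x hx => ?_
        simp only [Finset.mem_inter] at hx ⊢
        exact ⟨hx.1.1, hx.2.2⟩
      omega
    have e1 := edge v m hvm ha1
    have e2 := edge m w hmw ha2
    omega
  -- the seven edges
  have a01 : (DeltaGraph 2).Adj 0 1 := by decide
  have a12 : (DeltaGraph 2).Adj 1 2 := by decide
  have a23 : (DeltaGraph 2).Adj 2 3 := by decide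
  have a02 : (DeltaGraph 2).Adj 0 2 := by decide
  have a13 : (DeltaGraph 2).Adj 1 3 := by decide
  have a40 : (DeltaGraph 2).Adj 4 0 := by decide
  have a43 : (DeltaGraph 2).Adj 4 3 := by decide
  have na03 : ¬ (DeltaGraph 2).Adj 0 3 := by decide
  have na41 : ¬ (DeltaGraph 2).Adj 4 1 := by decide
  have na42 : ¬ (DeltaGraph 2).Adj 4 2 := by decide
  -- intersection cardinalities
  have e01 := edge 0 1 (by decide) a01
  have e12 := edge 1 2 (by decide) a12
  have e23 := edge 2 3 (by decide) a23
  have e02 := edge 0 2 (by decide) a02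
  have e13 := edge 1 3 (by decide) a13
  have e40 := edge 4 0 (by decide) a40
  have e43 := edge 4 3 (by decide) a43
  have e10 := edge 1 0 (by decide) a01.symm
  have e21 := edge 2 1 (by decide) a12.symm
  have e32 := edge 3 2 (by decide) a23.symm
  have e20 := edge 2 0 (by decide) a02.symm
  have e31 := edge 3 1 (by decide) a13.symm
  have e04 := edge 0 4 (by decide) a40.symm
  have e34 := edge 3 4 (by decide) a43.symm
  have f03 := nonedge 0 3 2 (by decide) na03 (by decide) (by decide) a02 a23
  have f41 := nonedge 4 1 0 (by decide) na41 (by decide) (by decide) a40 a01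
  have f42 := nonedge 4 2 3 (by decide) na42 (by decide) (by decide) a43 a23.symm
  have f30 := nonedge 3 0 2 (by decide) (fun h => na03 h.symm) (by decide) (by decide) a23.symm a02.symm
  have f14 := nonedge 1 4 0 (by decide) (fun h => na41 h.symm) (by decide) (by decide) a01.symm a40.symm
  have f24 := nonedge 2 4 3 (by decide) (fun h => na42 h.symm) (by decide) (by decide) a23 a43.symm
  -- diagonal
  have d : ∀ v : Fin 5, ((S v ∩ S v).card : ℤ) = (n : ℤ) := by
    intro v; rw [Finset.inter_self, hcard v]
  -- the quadratic form
  set U : Finset ℕ := Finset.univ.biUnion S with hU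
  have hS : ∀ i, S i ⊆ U := fun i => Finset.subset_biUnion_of_mem S (Finset.mem_univ i)
  have key := sum_sq_eq_inter U S hS ![-2, 1, 1, -2, 2]
  have nonneg : (0 : ℤ) ≤ ∑ x ∈ U, (∑ i, if x ∈ S i then (![-2, 1, 1, -2, 2] : Fin 5 → ℤ) i else 0) ^ 2 :=
    Finset.sum_nonneg fun x _ => sq_nonneg _
  rw [key] at nonneg
  simp only [Fin.sum_univ_five, Matrix.cons_val_zero, Matrix.cons_val_one, Matrix.head_cons,
    Matrix.cons_val_two, Matrix.tail_cons, Matrix.cons_val_three, Matrix.cons_val_four,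
    Matrix.head_fin_const] at nonneg
  have hd0 := d 0; have hd1 := d 1; have hd2 := d 2; have hd3 := d 3; have hd4 := d 4
  linarith [f03.1, f41.1, f42.1, f30.1, f14.1, f24.1]
end

section
/- The graph Δ_4 is not JIS. -/
open scoped symmDiff

lemma card_symmDiff_aux (A B : Finset ℕ) :
    (A ∆ B).card + 2 * (A ∩ B).card = A.card + B.card := by
  have h2 : (A ∩ B) ⊆ (A ∪ B) := Finset.inter_subset_union
  have h3 := Finset.card_sdiff_of_subset h2
  have h4 := Finset.card_union_add_card_inter A B
  have h5 : (A ∩ B).card ≤ (A ∪ B).card := Finset.card_le_card h2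
  rw [symmDiff_eq_sup_sdiff_inf]
  show ((A ∪ B) \ (A ∩ B)).card + _ = _
  omega

lemma split_card {X Y : Finset ℕ} (h : Y ⊆ X) (h1 : X.card = Y.card + 1) :
    ∃ a, a ∉ Y ∧ X = insert a Y := by
  have hc : (X \ Y).card = 1 := by rw [Finset.card_sdiff_of_subset h]; omega
  obtain ⟨a, ha⟩ := Finset.card_eq_one.mp hc
  have hmem : a ∈ X \ Y := ha ▸ Finset.mem_singleton_self a
  refine ⟨a, (Finset.mem_sdiff.mp hmem).2, ?_⟩
  rw [← Finset.union_sdiff_of_subset h, ha]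
  ext x; simp [Finset.mem_union, Finset.mem_insert, or_comm]

lemma card_inter1 (d : ℕ) (T : Finset ℕ) :
    (({d} : Finset ℕ) ∩ T).card = if d ∈ T then 1 else 0 := by
  split_ifs with h
  · rw [Finset.singleton_inter_of_mem h]; simp
  · rw [Finset.singleton_inter_of_notMem h]; simp

lemma card_inter2 {a b : ℕ} (T : Finset ℕ) (hab : a ≠ b) :
    (({a, b} : Finset ℕ) ∩ T).card =
      (if a ∈ T then 1 else 0) + (if b ∈ T then 1 else 0) := by
  classical
  rw [← Finset.filter_mem_eq_inter, Finset.card_filter]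
  rw [show ({a,b} : Finset ℕ) = insert a {b} from rfl]
  rw [Finset.sum_insert (by simp [hab])]
  simp
  exact card_inter1 b T

lemma card_inter4 {a b c d : ℕ} (T : Finset ℕ) (hab : a ≠ b) (hac : a ≠ c)
    (had : a ≠ d) (hbc : b ≠ c) (hbd : b ≠ d) (hcd : c ≠ d) :
    (({a, b, c, d} : Finset ℕ) ∩ T).card =
      (if a ∈ T then 1 else 0) + (if b ∈ T then 1 else 0) +
      (if c ∈ T then 1 else 0) + (if d ∈ T then 1 else 0) := by
  classical
  rw [← Finset.filter_mem_eq_inter, Finset.card_filter]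
  rw [show ({a,b,c,d} : Finset ℕ) = insert a (insert b (insert c {d})) from rfl]
  rw [Finset.sum_insert (by simp [hab, hac, had]),
      Finset.sum_insert (by simp [hbc, hbd]),
      Finset.sum_insert (by simp [hcd])]
  simp [add_assoc]
  exact card_inter1 d T

/-- from a symmDiff card and the two cards, compute the intersection card -/
lemma interCard {A B : Finset ℕ} {d a b : ℕ} (hd : (A ∆ B).card = d)
    (ha : A.card = a) (hb : B.card = b) (k : ℕ) (hk : d + 2 * k = a + b) :
    (A ∩ B).card = k := by
  have := card_symmDiff_aux A B
  omega

/-- a vertex adjacent to one of `A.card = 2` whose card is neither 0 nor 2 has card 4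
and contains it. -/
lemma bigCard {C B : Finset ℕ} (hd : (C ∆ B).card = 2) (hb : B.card = 2)
    (h0 : C.card ≠ 0) (h2 : C.card ≠ 2) : C.card = 4 ∧ B ⊆ C := by
  have h := card_symmDiff_aux C B
  have hle : (C ∩ B).card ≤ B.card := Finset.card_le_card Finset.inter_subset_right
  refine ⟨by omega, Finset.inter_eq_right.mp
    (Finset.eq_of_subset_of_card_le Finset.inter_subset_right (by omega))⟩

lemma subAdj {D A : Finset ℕ} (h : A ⊆ D) (ha : A.card = 2) (hd : D.card = 4) :
    (D ∆ A).card = 2 := by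
  have h2 := card_symmDiff_aux D A
  rw [Finset.inter_eq_right.mpr h] at h2
  omega

lemma pair_subset {x y : ℕ} {X : Finset ℕ} (hx : x ∈ X) (hy : y ∈ X) :
    ({x, y} : Finset ℕ) ⊆ X := by
  intro z hz
  simp only [Finset.mem_insert, Finset.mem_singleton] at hz
  rcases hz with rfl | rfl <;> assumption

lemma triple_subset {x y w : ℕ} {X : Finset ℕ} (hx : x ∈ X) (hy : y ∈ X)
    (hw : w ∈ X) : ({x, y, w} : Finset ℕ) ⊆ X := by
  intro z hz
  simp only [Finset.mem_insert, Finset.mem_singleton] at hz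
  rcases hz with rfl | rfl | rfl <;> assumption

lemma quad_subset {x y w v : ℕ} {X : Finset ℕ} (hx : x ∈ X) (hy : y ∈ X)
    (hw : w ∈ X) (hv : v ∈ X) : ({x, y, w, v} : Finset ℕ) ⊆ X := by
  intro z hz
  simp only [Finset.mem_insert, Finset.mem_singleton] at hz
  rcases hz with rfl | rfl | rfl | rfl <;> assumption

lemma card_triple {a b c : ℕ} (h1 : a ≠ b) (h2 : a ≠ c) (h3 : b ≠ c) :
    ({a, b, c} : Finset ℕ).card = 3 := by
  rw [show ({a,b,c} : Finset ℕ) = insert a (insert b {c}) from rfl,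
    Finset.card_insert_of_notMem (by simp [h1, h2]),
    Finset.card_insert_of_notMem (by simp [h3]), Finset.card_singleton]

lemma card_quad {a b c d : ℕ} (h1 : a ≠ b) (h2 : a ≠ c) (h3 : a ≠ d)
    (h4 : b ≠ c) (h5 : b ≠ d) (h6 : c ≠ d) :
    ({a, b, c, d} : Finset ℕ).card = 4 := by
  rw [show ({a,b,c,d} : Finset ℕ) = insert a (insert b (insert c {d})) from rfl,
    Finset.card_insert_of_notMem (by simp [h1, h2, h3]),
    Finset.card_insert_of_notMem (by simp [h4, h5]),
    Finset.card_insert_of_notMem (by simp [h6]), Finset.card_singleton]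

lemma not_card3_of_subset_pair {X : Finset ℕ} {q s : ℕ}
    (hsub : X ⊆ ({q, s} : Finset ℕ)) (h3 : X.card = 3) : False := by
  have h1 := Finset.card_le_card hsub
  have h2 : ({q, s} : Finset ℕ).card ≤ 2 := (Finset.card_insert_le _ _).trans (by simp)
  omega

lemma not_card3_of_quad_subset {X Q : Finset ℕ} (hsub : Q ⊆ X) (hq : Q.card = 4)
    (h3 : X.card = 3) : False := by
  have := Finset.card_le_card hsub
  omega

lemma sum_ind {P Q : Prop} [Decidable P] [Decidable Q]
    (h : (if P then 1 else 0) + 1 + (if Q then 1 else 0) + 0 = 3) : P ∧ Q := by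
  split_ifs at h with h1 h2
  · exact ⟨h1, h2⟩
  all_goals omega

lemma balance_contra {S0 : Finset ℕ} {p q s t u : ℕ}
    (hps : p ≠ s) (hqs : q ≠ s) (hpq : p ≠ q)
    (htp : t ≠ p) (htq : t ≠ q) (hts : t ≠ s)
    (hus : u ≠ s) (huq : u ≠ q) (hut : u ≠ t) (hup : u ≠ p)
    (balA : 2 * ((({p, s} : Finset ℕ)) ∩ S0).card = 2)
    (balB : 2 * ((({q, s} : Finset ℕ)) ∩ S0).card = 2)
    (balC : 2 * ((({t, p, q, s} : Finset ℕ)) ∩ S0).card = 4)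
    (balD : 2 * ((({u, s, q, t} : Finset ℕ)) ∩ S0).card = 4)
    (balE : 2 * ((({p, u, q, t} : Finset ℕ)) ∩ S0).card = 4) : False := by
  rw [card_inter2 S0 hps] at balA
  rw [card_inter2 S0 hqs] at balB
  rw [card_inter4 S0 htp htq hts hpq hps hqs] at balC
  rw [card_inter4 S0 hus huq hut hqs.symm hts.symm htq.symm] at balD
  rw [card_inter4 S0 hup.symm hpq htp.symm huq hut htq.symm] at balE
  split_ifs at balA balB balC balD balE <;> omega

set_option maxHeartbeats 1000000 in
/-- the combinatorial core: no family of "displacement" sets with these cards exists -/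
lemma delta_core (S0 A B C D E W : Finset ℕ)
    (hA2 : A.card = 2) (hB2 : B.card = 2) (hW2 : W.card = 2)
    (hCne2 : C.card ≠ 2) (hCne0 : C.card ≠ 0)
    (hDne2 : D.card ≠ 2) (hDne0 : D.card ≠ 0)
    (hEne2 : E.card ≠ 2) (hEne0 : E.card ≠ 0)
    (dAB : (A ∆ B).card = 2) (dAC : (A ∆ C).card = 2) (dBC : (B ∆ C).card = 2)
    (dBD : (B ∆ D).card = 2) (dCD : (C ∆ D).card = 2) (dCE : (C ∆ E).card = 2)
    (dDE : (D ∆ E).card = 2) (dEW : (E ∆ W).card = 2)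
    (dADne2 : (A ∆ D).card ≠ 2) (dAEne2 : (A ∆ E).card ≠ 2)
    (dBEne2 : (B ∆ E).card ≠ 2)
    (balA : 2 * (A ∩ S0).card = A.card) (balB : 2 * (B ∩ S0).card = B.card)
    (balC : 2 * (C ∩ S0).card = C.card) (balD : 2 * (D ∩ S0).card = D.card)
    (balE : 2 * (E ∩ S0).card = E.card) : False := by
  -- Step 1 : A = {p, s}, B = {q, s}
  have iAB : (A ∩ B).card = 1 := interCard dAB hA2 hB2 1 (by norm_num)
  obtain ⟨s, hs⟩ := Finset.card_eq_one.mp iAB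
  have hsA : s ∈ A := Finset.mem_of_mem_inter_left (hs ▸ Finset.mem_singleton_self s)
  have hsB : s ∈ B := Finset.mem_of_mem_inter_right (hs ▸ Finset.mem_singleton_self s)
  obtain ⟨p, hpns, hAeq⟩ := split_card (Finset.singleton_subset_iff.mpr hsA) (by simp [hA2])
  obtain ⟨q, hqns, hBeq⟩ := split_card (Finset.singleton_subset_iff.mpr hsB) (by simp [hB2])
  have hps : p ≠ s := by simpa using hpns
  have hqs : q ≠ s := by simpa using hqns
  have hpA : p ∈ A := by rw [hAeq]; exact Finset.mem_insert_self p {s}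
  have hqB : q ∈ B := by rw [hBeq]; exact Finset.mem_insert_self q {s}
  have hpq : p ≠ q := by
    intro h
    have hpB : p ∈ B := by rw [h]; exact hqB
    have h2 : p ∈ A ∩ B := Finset.mem_inter.mpr ⟨hpA, hpB⟩
    rw [hs] at h2
    exact hps (by simpa using h2)
  -- Step 2 : C = {t, p, q, s}
  have dCB : (C ∆ B).card = 2 := by rw [symmDiff_comm]; exact dBC
  obtain ⟨hC4, hBsubC⟩ := bigCard dCB hB2 hCne0 hCne2
  have dCA : (C ∆ A).card = 2 := by rw [symmDiff_comm]; exact dAC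
  have hCA2 : (C ∩ A).card = 2 := interCard dCA hC4 hA2 2 (by norm_num)
  have hAsubC : A ⊆ C :=
    Finset.inter_eq_right.mp
      (Finset.eq_of_subset_of_card_le Finset.inter_subset_right (hA2 ▸ hCA2.ge))
  have hpC : p ∈ C := hAsubC hpA
  have hsC : s ∈ C := hAsubC hsA
  have hqC : q ∈ C := hBsubC hqB
  have hcard3 : ({p, q, s} : Finset ℕ).card = 3 := card_triple hpq hps hqs
  obtain ⟨t, htn, hCeq⟩ := split_card (triple_subset hpC hqC hsC) (by rw [hC4, hcard3])
  obtain ⟨htp, htq, hts⟩ : t ≠ p ∧ t ≠ q ∧ t ≠ s := by simpa using htn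
  have htC : t ∈ C := by rw [hCeq]; exact Finset.mem_insert_self t _
  -- Step 3 : D = {u, s, q, t}
  have dDB : (D ∆ B).card = 2 := by rw [symmDiff_comm]; exact dBD
  obtain ⟨hD4, hBsubD⟩ := bigCard dDB hB2 hDne0 hDne2
  have dDC : (D ∆ C).card = 2 := by rw [symmDiff_comm]; exact dCD
  have hDC3 : (D ∩ C).card = 3 := interCard dDC hD4 hC4 3 (by norm_num)
  have hsD : s ∈ D := hBsubD hsB
  have hqD : q ∈ D := hBsubD hqB
  have dDAne2 : (D ∆ A).card ≠ 2 := by rw [symmDiff_comm]; exact dADne2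
  have hpD : p ∉ D := by
    intro hpD
    exact dDAne2 (subAdj (hAeq ▸ pair_subset hpD hsD) hA2 hD4)
  have htD : t ∈ D := by
    by_contra htD
    have hsub : D ∩ C ⊆ ({q, s} : Finset ℕ) := by
      intro x hx
      have hxD := Finset.mem_of_mem_inter_left hx
      have hxC := Finset.mem_of_mem_inter_right hx
      rw [hCeq] at hxC
      simp only [Finset.mem_insert, Finset.mem_singleton] at hxC ⊢
      rcases hxC with rfl | rfl | rfl | rfl
      · exact absurd hxD htD
      · exact absurd hxD hpD
      · exact Or.inl rfl
      · exact Or.inr rfl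
    exact not_card3_of_subset_pair hsub hDC3
  have hcard3' : ({s, q, t} : Finset ℕ).card = 3 :=
    card_triple hqs.symm hts.symm htq.symm
  obtain ⟨u, hun, hDeq⟩ := split_card (triple_subset hsD hqD htD) (by rw [hD4, hcard3'])
  obtain ⟨hus, huq, hut⟩ : u ≠ s ∧ u ≠ q ∧ u ≠ t := by simpa using hun
  have huD : u ∈ D := by rw [hDeq]; exact Finset.mem_insert_self u _
  have hup : u ≠ p := fun h => hpD (h ▸ huD)
  have huC : u ∉ C := by
    intro huC
    have hsub : ({u, s, q, t} : Finset ℕ) ⊆ D ∩ C := by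
      refine quad_subset (Finset.mem_inter.mpr ⟨huD, huC⟩) (Finset.mem_inter.mpr ⟨hsD, hsC⟩)
        (Finset.mem_inter.mpr ⟨hqD, hqC⟩) (Finset.mem_inter.mpr ⟨htD, htC⟩)
    exact not_card3_of_quad_subset hsub (card_quad hus huq hut hqs.symm hts.symm htq.symm) hDC3
  -- Step 4 : E
  obtain ⟨hE4, _⟩ := bigCard dEW hW2 hEne0 hEne2
  have dEC : (E ∆ C).card = 2 := by rw [symmDiff_comm]; exact dCE
  have hEC3 : (E ∩ C).card = 3 := interCard dEC hE4 hC4 3 (by norm_num)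
  have dED : (E ∆ D).card = 2 := by rw [symmDiff_comm]; exact dDE
  have hED3 : (E ∩ D).card = 3 := interCard dED hE4 hD4 3 (by norm_num)
  have dEAne2 : (E ∆ A).card ≠ 2 := by rw [symmDiff_comm]; exact dAEne2
  have dEBne2 : (E ∆ B).card ≠ 2 := by rw [symmDiff_comm]; exact dBEne2
  by_cases hpE : p ∈ E
  · by_cases hsE : s ∈ E
    · -- then A ⊆ E, contradicting non-adjacency of v₂ and v₆
      exact dEAne2 (subAdj (hAeq ▸ pair_subset hpE hsE) hA2 hE4)
    · by_cases huE : u ∈ E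
      · -- main case : E = {p, u, q, t}, contradiction via balance
        have hsum : (if t ∈ E then 1 else 0) + (if p ∈ E then 1 else 0) +
            (if q ∈ E then 1 else 0) + (if s ∈ E then 1 else 0) = 3 := by
          rw [← card_inter4 E htp htq hts hpq hps hqs, ← hCeq, Finset.inter_comm]
          exact hEC3
        rw [if_pos hpE, if_neg hsE] at hsum
        obtain ⟨htE, hqE⟩ := sum_ind hsum
        have hc4 : ({p, u, q, t} : Finset ℕ).card = 4 :=
          card_quad hup.symm hpq htp.symm huq hut htq.symm
        have hEeq : ({p, u, q, t} : Finset ℕ) = E :=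
          Finset.eq_of_subset_of_card_le (quad_subset hpE huE hqE htE) (by rw [hE4, hc4])
        rw [hA2, hAeq] at balA
        rw [hB2, hBeq] at balB
        rw [hC4, hCeq] at balC
        rw [hD4, hDeq] at balD
        rw [hE4, ← hEeq] at balE
        exact balance_contra hps hqs hpq htp htq hts hus huq hut hup balA balB balC balD balE
      · -- u ∉ E : then E ∩ D = {s, q, t}, so s ∈ E, contradiction
        have hsub : E ∩ D ⊆ ({s, q, t} : Finset ℕ) := by
          intro x hx
          have hxE := Finset.mem_of_mem_inter_left hx
          have hxD := Finset.mem_of_mem_inter_right hx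
          rw [hDeq] at hxD
          simp only [Finset.mem_insert, Finset.mem_singleton] at hxD ⊢
          rcases hxD with rfl | rfl | rfl | rfl
          · exact absurd hxE huE
          · exact Or.inl rfl
          · exact Or.inr (Or.inl rfl)
          · exact Or.inr (Or.inr rfl)
        have heq : E ∩ D = ({s, q, t} : Finset ℕ) :=
          Finset.eq_of_subset_of_card_le hsub (by rw [hcard3', hED3])
        have hsE' : s ∈ E ∩ D := by rw [heq]; exact Finset.mem_insert_self s _
        exact hsE (Finset.mem_of_mem_inter_left hsE')
  · -- p ∉ E : then E ∩ C = {t, q, s}, so B ⊆ E, contradiction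
    have hsub : E ∩ C ⊆ ({t, q, s} : Finset ℕ) := by
      intro x hx
      have hxE := Finset.mem_of_mem_inter_left hx
      have hxC := Finset.mem_of_mem_inter_right hx
      rw [hCeq] at hxC
      simp only [Finset.mem_insert, Finset.mem_singleton] at hxC ⊢
      rcases hxC with rfl | rfl | rfl | rfl
      · exact Or.inl rfl
      · exact absurd hxE hpE
      · exact Or.inr (Or.inl rfl)
      · exact Or.inr (Or.inr rfl)
    have hcard3'' : ({t, q, s} : Finset ℕ).card = 3 := card_triple htq hts hqs
    have heq : E ∩ C = ({t, q, s} : Finset ℕ) :=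
      Finset.eq_of_subset_of_card_le hsub (by rw [hcard3'', hEC3])
    have hsE : s ∈ E := by
      have h : s ∈ E ∩ C := by
        rw [heq]; simp only [Finset.mem_insert, Finset.mem_singleton]; tauto
      exact Finset.mem_of_mem_inter_left h
    have hqE : q ∈ E := by
      have h : q ∈ E ∩ C := by
        rw [heq]; simp only [Finset.mem_insert, Finset.mem_singleton]; tauto
      exact Finset.mem_of_mem_inter_left h
    exact dEBne2 (subAdj (hBeq ▸ pair_subset hqE hsE) hB2 hE4)

set_option maxHeartbeats 1000000 in
/-- the graph `Δ 4` is not JIS. -/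
theorem delta_four_not_isJIS : ¬ IsJIS (DeltaGraph 4) := by
  rintro ⟨n, hn, S, hinj, hScard, hadj⟩
  have key : ∀ i j : Fin 7, (S 0 ∆ S i) ∆ (S 0 ∆ S j) = S i ∆ S j := by
    intro i j
    rw [symmDiff_comm (S 0) (S i), symmDiff_assoc, symmDiff_symmDiff_cancel_left]
  have hadj' : ∀ i j : Fin 7, (DeltaGraph 4).Adj i j → (S i ∆ S j).card = 2 := by
    intro i j h
    have hm := (hadj i j h.ne).mp h
    have hc := card_symmDiff_aux (S i) (S j)
    have hi := hScard i; have hj := hScard j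
    omega
  have hnadj : ∀ i j : Fin 7, i ≠ j → ¬ (DeltaGraph 4).Adj i j →
      (S i ∆ S j).card ≠ 2 := by
    intro i j hne h h2
    have hc := card_symmDiff_aux (S i) (S j)
    have hi := hScard i; have hj := hScard j
    exact h ((hadj i j hne).mpr (by omega))
  have hne0 : ∀ i j : Fin 7, i ≠ j → (S i ∆ S j).card ≠ 0 := by
    intro i j hne h0
    have h1 : S i ∆ S j = ⊥ := by
      rw [Finset.bot_eq_empty]; exact Finset.card_eq_zero.mp h0
    exact hne (hinj (symmDiff_eq_bot.mp h1))
  have hbal : ∀ j : Fin 7, 2 * ((S 0 ∆ S j) ∩ S 0).card = (S 0 ∆ S j).card := by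
    intro j
    have h1 : (S 0 ∆ S j) ∩ S 0 = S 0 \ S j := by
      ext x; simp [Finset.mem_symmDiff, Finset.mem_sdiff]; tauto
    have h2 := Finset.card_sdiff_add_card_inter (S 0) (S j)
    have h3 := card_symmDiff_aux (S 0) (S j)
    have hi := hScard 0; have hj := hScard j
    rw [h1]; omega
  refine delta_core (S 0) (S 0 ∆ S 1) (S 0 ∆ S 2) (S 0 ∆ S 3) (S 0 ∆ S 4)
    (S 0 ∆ S 5) (S 0 ∆ S 6)
    (hadj' 0 1 (by rw [DeltaGraph, SimpleGraph.fromRel_adj]; decide))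
    (hadj' 0 2 (by rw [DeltaGraph, SimpleGraph.fromRel_adj]; decide))
    (hadj' 0 6 (by rw [DeltaGraph, SimpleGraph.fromRel_adj]; decide))
    (hnadj 0 3 (by decide) (by rw [DeltaGraph, SimpleGraph.fromRel_adj]; decide))
    (hne0 0 3 (by decide))
    (hnadj 0 4 (by decide) (by rw [DeltaGraph, SimpleGraph.fromRel_adj]; decide))
    (hne0 0 4 (by decide))
    (hnadj 0 5 (by decide) (by rw [DeltaGraph, SimpleGraph.fromRel_adj]; decide))
    (hne0 0 5 (by decide))
    (by rw [key 1 2]; exact hadj' 1 2 (by rw [DeltaGraph, SimpleGraph.fromRel_adj]; decide))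
    (by rw [key 1 3]; exact hadj' 1 3 (by rw [DeltaGraph, SimpleGraph.fromRel_adj]; decide))
    (by rw [key 2 3]; exact hadj' 2 3 (by rw [DeltaGraph, SimpleGraph.fromRel_adj]; decide))
    (by rw [key 2 4]; exact hadj' 2 4 (by rw [DeltaGraph, SimpleGraph.fromRel_adj]; decide))
    (by rw [key 3 4]; exact hadj' 3 4 (by rw [DeltaGraph, SimpleGraph.fromRel_adj]; decide))
    (by rw [key 3 5]; exact hadj' 3 5 (by rw [DeltaGraph, SimpleGraph.fromRel_adj]; decide))
    (by rw [key 4 5]; exact hadj' 4 5 (by rw [DeltaGraph, SimpleGraph.fromRel_adj]; decide))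
    (by rw [key 5 6]; exact hadj' 5 6 (by rw [DeltaGraph, SimpleGraph.fromRel_adj]; decide))
    (by rw [key 1 4]; exact hnadj 1 4 (by decide) (by rw [DeltaGraph, SimpleGraph.fromRel_adj]; decide))
    (by rw [key 1 5]; exact hnadj 1 5 (by decide) (by rw [DeltaGraph, SimpleGraph.fromRel_adj]; decide))
    (by rw [key 2 5]; exact hnadj 2 5 (by decide) (by rw [DeltaGraph, SimpleGraph.fromRel_adj]; decide))
    (hbal 1) (hbal 2) (hbal 3) (hbal 4) (hbal 5)
end

section
/- The graph Δ_3 is JIS. -/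
/-- the graph `Δ 3` is JIS. -/
theorem delta_three_isJIS : IsJIS (DeltaGraph 3) := by
  refine ⟨2, two_pos, ![{0,1},{0,2},{0,3},{2,3},{3,4},{1,4}], ?_, ?_, ?_⟩
  · decide
  · decide
  · intro v w _
    unfold DeltaGraph
    rw [SimpleGraph.fromRel_adj]
    revert v w
    decide
end

section
/- Let G be a JIS graph with n vertices (n ≥ 1). Then there exists a positive integer m ≤ n and an injective assignment v ↦ S_v of m-element subsets of {1, 2, …, 2n} to the vertices of G such that two distinct vertices v and w are adjacent if and only if |S_v ∩ S_w| = m − 1; that is, G is isomorphic to an induced subgraph of the Johnson graph J(m, 2n). -/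
open Finset

private lemma jis_walk_boundary {V : Type*} {G : SimpleGraph V} {s : Finset V} :
    ∀ {x y : V}, G.Walk x y → x ∈ s → y ∉ s → ∃ a b, a ∈ s ∧ b ∉ s ∧ G.Adj a b := by
  intro x y p
  induction p with
  | nil => intro hx hy; exact absurd hx hy
  | @cons u v w h q ih =>
    intro hx hy
    by_cases hv : v ∈ s
    · exact ih hv hy
    · exact ⟨u, v, hx, hv, h⟩

private lemma jis_grow {V : Type*} [Fintype V] [DecidableEq V] {G : SimpleGraph V}
    [DecidableRel G.Reachable]
    {A : V → Finset ℕ} {N : ℕ} (hN : 0 < N) (hA : ∀ v, (A v).card = N)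
    (hadj : ∀ a b : V, G.Adj a b → (A a ∩ A b).card = N - 1) (v0 : V)
    (Hc : (Finset.univ.filter (fun u => G.Reachable v0 u)).Nonempty) :
    ∀ (k : ℕ) (s : Finset V) (hne : s.Nonempty), v0 ∈ s → (∀ u ∈ s, G.Reachable v0 u) →
    (A v0 \ s.inf' hne A).card + 1 ≤ s.card →
    ((s.biUnion A) \ s.inf' hne A).card + 2 ≤ 2 * s.card →
    ((Finset.univ.filter (fun u => G.Reachable v0 u)) \ s).card ≤ k →
    (A v0 \ ((Finset.univ.filter (fun u => G.Reachable v0 u)).inf' Hc A)).card + 1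
        ≤ (Finset.univ.filter (fun u => G.Reachable v0 u)).card ∧
    (((Finset.univ.filter (fun u => G.Reachable v0 u)).biUnion A)
        \ ((Finset.univ.filter (fun u => G.Reachable v0 u)).inf' Hc A)).card + 2
        ≤ 2 * (Finset.univ.filter (fun u => G.Reachable v0 u)).card := by
  set C := Finset.univ.filter (fun u => G.Reachable v0 u) with hC
  intro k
  induction k with
  | zero =>
    intro s hne hv0 hreach h1 h2 hk
    have hsub : C ⊆ s := by
      rw [← Finset.sdiff_eq_empty_iff_subset]
      exact Finset.card_eq_zero.mp (Nat.le_zero.mp hk)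
    have hsub2 : s ⊆ C := by
      intro u hu; rw [hC, Finset.mem_filter]; exact ⟨Finset.mem_univ u, hreach u hu⟩
    have hEq : s = C := Finset.Subset.antisymm hsub2 hsub
    have hinf : s.inf' hne A = C.inf' Hc A := Finset.inf'_congr hne hEq (fun _ _ => rfl)
    rw [hinf, hEq] at h1 h2
    exact ⟨h1, h2⟩
  | succ k ih =>
    intro s hne hv0 hreach h1 h2 hk
    by_cases hsub : C ⊆ s
    · have hsub2 : s ⊆ C := by
        intro u hu; rw [hC, Finset.mem_filter]; exact ⟨Finset.mem_univ u, hreach u hu⟩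
      have hEq : s = C := Finset.Subset.antisymm hsub2 hsub
      have hinf : s.inf' hne A = C.inf' Hc A := Finset.inf'_congr hne hEq (fun _ _ => rfl)
      rw [hinf, hEq] at h1 h2
      exact ⟨h1, h2⟩
    · obtain ⟨w, hwC, hws⟩ := Finset.not_subset.mp hsub
      have hrw : G.Reachable v0 w := by
        rw [hC, Finset.mem_filter] at hwC; exact hwC.2
      obtain ⟨p⟩ := hrw
      obtain ⟨a, b, ha, hb, hab⟩ := jis_walk_boundary p hv0 hws
      -- the new set
      have hne' : (insert b s).Nonempty := ⟨b, Finset.mem_insert_self _ _⟩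
      have hcard' : (insert b s).card = s.card + 1 := Finset.card_insert_of_notMem hb
      set K := s.inf' hne A with hKdef
      have hK' : (insert b s).inf' hne' A = A b ∩ K := by
        rw [Finset.inf'_insert hne A]; rfl
      have hKsub : ∀ u ∈ s, K ⊆ A u := fun u hu => Finset.inf'_le A hu
      -- |A a \ A b| = 1 and |A b \ A a| = 1
      have hone : ∀ x y : V, G.Adj x y → (A x \ A y).card = 1 := by
        intro x y hxy
        have := Finset.card_inter_add_card_sdiff (A x) (A y)
        rw [hadj x y hxy, hA x] at this
        omega
      have hKK : (K \ (A b ∩ K)).card ≤ 1 := by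
        have hsub3 : K \ (A b ∩ K) ⊆ A a \ A b := by
          intro x hx
          rw [Finset.mem_sdiff, Finset.mem_inter] at hx
          rw [Finset.mem_sdiff]
          refine ⟨hKsub a ha hx.1, fun hxb => hx.2 ⟨hxb, hx.1⟩⟩
        calc (K \ (A b ∩ K)).card ≤ (A a \ A b).card := Finset.card_le_card hsub3
          _ = 1 := hone a b hab
      have h1' : (A v0 \ (insert b s).inf' hne' A).card + 1 ≤ (insert b s).card := by
        rw [hK', hcard']
        have hsub4 : A v0 \ (A b ∩ K) ⊆ (A v0 \ K) ∪ (K \ (A b ∩ K)) := by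
          intro x hx
          rw [Finset.mem_sdiff] at hx
          rw [Finset.mem_union, Finset.mem_sdiff, Finset.mem_sdiff]
          by_cases hxK : x ∈ K
          · exact Or.inr ⟨hxK, hx.2⟩
          · exact Or.inl ⟨hx.1, hxK⟩
        have := Finset.card_le_card hsub4
        have := Finset.card_union_le (A v0 \ K) (K \ (A b ∩ K))
        omega
      have h2' : ((insert b s).biUnion A \ (insert b s).inf' hne' A).card + 2
          ≤ 2 * (insert b s).card := by
        rw [hK', hcard', Finset.biUnion_insert]
        have hsub5 : (A b ∪ s.biUnion A) \ (A b ∩ K) ⊆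
            ((s.biUnion A \ K) ∪ (K \ (A b ∩ K))) ∪ (A b \ A a) := by
          intro x hx
          rw [Finset.mem_sdiff, Finset.mem_union] at hx
          rw [Finset.mem_union, Finset.mem_union, Finset.mem_sdiff, Finset.mem_sdiff,
            Finset.mem_sdiff]
          by_cases hxU : x ∈ s.biUnion A
          · by_cases hxK : x ∈ K
            · exact Or.inl (Or.inr ⟨hxK, hx.2⟩)
            · exact Or.inl (Or.inl ⟨hxU, hxK⟩)
          · have hxb : x ∈ A b := by
              rcases hx.1 with h | h
              · exact h
              · exact absurd h hxU
            refine Or.inr ⟨hxb, fun hxa => hxU ?_⟩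
            exact Finset.mem_biUnion.mpr ⟨a, ha, hxa⟩
        have hc1 := Finset.card_le_card hsub5
        have hc2 := Finset.card_union_le ((s.biUnion A \ K) ∪ (K \ (A b ∩ K))) (A b \ A a)
        have hc3 := Finset.card_union_le (s.biUnion A \ K) (K \ (A b ∩ K))
        have hc4 : (A b \ A a).card = 1 := hone b a hab.symm
        omega
      -- measure decreases
      have hbC : b ∈ C := by
        rw [hC, Finset.mem_filter]
        exact ⟨Finset.mem_univ b, (hreach a ha).trans hab.reachable⟩
      have hmeas : (C \ insert b s).card < (C \ s).card := by
        apply Finset.card_lt_card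
        constructor
        · intro x hx
          rw [Finset.mem_sdiff] at hx ⊢
          exact ⟨hx.1, fun hxs => hx.2 (Finset.mem_insert_of_mem hxs)⟩
        · intro hcon
          have : b ∈ C \ insert b s := hcon (Finset.mem_sdiff.mpr ⟨hbC, hb⟩)
          rw [Finset.mem_sdiff] at this
          exact this.2 (Finset.mem_insert_self _ _)
      exact ih (insert b s) hne' (Finset.mem_insert_of_mem hv0)
        (by
          intro u hu
          rcases Finset.mem_insert.mp hu with rfl | hu
          · exact (hreach a ha).trans hab.reachable
          · exact hreach u hu)
        h1' h2' (by rw [← hC] at hk ⊢; omega)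

open Finset

section Main
variable {V : Type*} [Fintype V]

private theorem jis_main_thm (G : SimpleGraph V)
    (hG : ∃ n : ℕ, 0 < n ∧ ∃ S : V → Finset ℕ, Function.Injective S ∧
      (∀ v, (S v).card = n) ∧
      ∀ v w : V, v ≠ w → (G.Adj v w ↔ (S v ∩ S w).card = n - 1))
    (hn : 1 ≤ Fintype.card V) :
    ∃ m : ℕ, 0 < m ∧ m ≤ Fintype.card V ∧
      ∃ S : V → Finset ℕ, Function.Injective S ∧
        (∀ v, S v ⊆ Finset.Icc 1 (2 * Fintype.card V)) ∧
        (∀ v, (S v).card = m) ∧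
        ∀ v w : V, v ≠ w → (G.Adj v w ↔ (S v ∩ S w).card = m - 1) := by
  classical
  obtain ⟨N, hN, A, hAinj, hAcard, hAadj⟩ := hG
  have hadj' : ∀ a b : V, G.Adj a b → (A a ∩ A b).card = N - 1 := by
    intro a b hab
    exact (hAadj a b hab.ne).mp hab
  -- component API
  obtain ⟨compF, K, hself, hKcongr, hcompFcongr, hmemIff, hKsub, hbound1, hbound2⟩ :
      ∃ (compF : V → Finset V) (K : V → Finset ℕ),
        (∀ v, v ∈ compF v) ∧
        (∀ u w : V, G.Reachable u w → K u = K w) ∧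
        (∀ u w : V, G.Reachable u w → compF u = compF w) ∧
        (∀ v u : V, u ∈ compF v ↔ G.Reachable v u) ∧
        (∀ v u : V, u ∈ compF v → K v ⊆ A u) ∧
        (∀ v, (A v \ K v).card + 1 ≤ (compF v).card) ∧
        (∀ v, ((compF v).biUnion A \ K v).card + 2 ≤ 2 * (compF v).card) := by
    refine ⟨fun v => Finset.univ.filter (fun u => G.Reachable v u),
      fun v => (Finset.univ.filter (fun u => G.Reachable v u)).inf'
        ⟨v, by simp [SimpleGraph.Reachable.refl]⟩ A, ?_, ?_, ?_, ?_, ?_, ?_, ?_⟩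
    · intro v; simp [SimpleGraph.Reachable.refl]
    · intro u w huw
      have hEq : Finset.univ.filter (fun x => G.Reachable u x)
          = Finset.univ.filter (fun x => G.Reachable w x) := by
        ext x
        simp only [Finset.mem_filter, Finset.mem_univ, true_and]
        exact ⟨fun h => huw.symm.trans h, fun h => huw.trans h⟩
      exact Finset.inf'_congr _ hEq (fun _ _ => rfl)
    · intro u w huw
      ext x
      simp only [Finset.mem_filter, Finset.mem_univ, true_and]
      exact ⟨fun h => huw.symm.trans h, fun h => huw.trans h⟩
    · intro v u; simp
    · intro v u hu
      exact Finset.inf'_le A hu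
    · intro v
      exact (jis_grow hN hAcard hadj' v ⟨v, by simp [SimpleGraph.Reachable.refl]⟩
        (Fintype.card V) {v} ⟨v, Finset.mem_singleton_self v⟩ (Finset.mem_singleton_self v)
        (by intro u hu; rw [Finset.mem_singleton] at hu; subst hu; exact SimpleGraph.Reachable.refl u)
        (by simp) (by simp [hAcard v])
        (by
          calc ((Finset.univ.filter (fun u => G.Reachable v u)) \ {v}).card
              ≤ Finset.univ.card := Finset.card_le_card (fun x hx => Finset.mem_univ x)
            _ = Fintype.card V := rfl)).1
    · intro v
      exact (jis_grow hN hAcard hadj' v ⟨v, by simp [SimpleGraph.Reachable.refl]⟩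
        (Fintype.card V) {v} ⟨v, Finset.mem_singleton_self v⟩ (Finset.mem_singleton_self v)
        (by intro u hu; rw [Finset.mem_singleton] at hu; subst hu; exact SimpleGraph.Reachable.refl u)
        (by simp) (by simp [hAcard v])
        (by
          calc ((Finset.univ.filter (fun u => G.Reachable v u)) \ {v}).card
              ≤ Finset.univ.card := Finset.card_le_card (fun x hx => Finset.mem_univ x)
            _ = Fintype.card V := rfl)).2
  -- trivial case: one vertex
  by_cases hn1 : Fintype.card V = 1
  · obtain ⟨x, hx⟩ := Fintype.card_eq_one_iff.mp hn1
    refine ⟨1, Nat.one_pos, by omega, fun _ => {1}, ?_, ?_, ?_, ?_⟩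
    · intro u w _
      rw [hx u, hx w]
    · intro v y hy
      rw [Finset.mem_singleton] at hy
      subst hy
      rw [Finset.mem_Icc]
      omega
    · intro v
      simp
    · intro v w hvw
      exact absurd (by rw [hx v, hx w]) hvw
  have hn2 : 2 ≤ Fintype.card V := by omega
  -- vertex index
  set idx := fun v : V => ((Fintype.equivFin V) v : ℕ) with hidx
  have hidxinj : Function.Injective idx := by
    intro u w h
    exact (Fintype.equivFin V).injective (Fin.val_injective h)
  -- component id
  set cid := fun v : V => ((compF v).image idx).min'
      ⟨idx v, Finset.mem_image_of_mem idx (hself v)⟩ with hcid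
  have hcidcongr : ∀ u w : V, G.Reachable u w → cid u = cid w := by
    intro u w h
    simp only [hcid, hcompFcongr u w h]
  have hcidsep : ∀ u w : V, cid u = cid w → G.Reachable u w := by
    intro u w h
    have h1 := Finset.min'_mem ((compF u).image idx)
      ⟨idx u, Finset.mem_image_of_mem idx (hself u)⟩
    have h2 := Finset.min'_mem ((compF w).image idx)
      ⟨idx w, Finset.mem_image_of_mem idx (hself w)⟩
    simp only [hcid] at h
    obtain ⟨z, hz, hze⟩ := Finset.mem_image.mp h1
    obtain ⟨z', hz', hze'⟩ := Finset.mem_image.mp h2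
    have : z = z' := hidxinj (by rw [hze, hze']; exact h)
    subst this
    exact ((hmemIff u z).mp hz).trans (((hmemIff w z).mp hz').symm)
  -- basic quantities
  set m := fun v : V => (A v \ K v).card with hm
  have hmN : ∀ v, m v + (K v).card = N := by
    intro v
    have h1 : K v ⊆ A v := hKsub v v (hself v)
    have h2 := Finset.card_sdiff_of_subset h1
    have h3 := Finset.card_le_card h1
    simp only [hm]
    rw [h2, hAcard v]
    rw [hAcard v] at h3
    omega
  have hmcongr : ∀ u w : V, G.Reachable u w → m u = m w := by
    intro u w h
    have h1 := hmN u
    have h2 := hmN w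
    rw [hKcongr u w h] at h1
    omega
  set bmp := fun v : V => if m v = 0 then 2 else 1 with hbmp
  have hbmp12 : ∀ v, bmp v = 1 ∨ bmp v = 2 := by
    intro v; simp only [hbmp]; split <;> simp
  have hbmpcongr : ∀ u w : V, G.Reachable u w → bmp u = bmp w := by
    intro u w h; simp only [hbmp, hmcongr u w h]
  set m' := fun v : V => m v + bmp v with hm'
  have hm'congr : ∀ u w : V, G.Reachable u w → m' u = m' w := by
    intro u w h; simp only [hm', hmcongr u w h, hbmpcongr u w h]
  have hm'2 : ∀ v, 2 ≤ m' v := by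
    intro v; simp only [hm', hbmp]; split <;> omega
  -- encodings
  set φ := fun (v : V) (x : ℕ) => Nat.pair 0 (Nat.pair (cid v) x) with hφ
  set ψ := fun (v : V) (x : ℕ) => Nat.pair 1 (Nat.pair (cid v) x) with hψ
  have hφinj : ∀ v, Function.Injective (φ v) := by
    intro v x y h
    simp only [hφ, Nat.pair_eq_pair] at h
    exact h.2.2
  have hψinj : ∀ v, Function.Injective (ψ v) := by
    intro v x y h
    simp only [hψ, Nat.pair_eq_pair] at h
    exact h.2.2
  set imgB := fun v : V => (A v \ K v).image (φ v) with himgB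
  set P := fun v : V => (Finset.range (bmp v)).image (ψ v) with hP
  set core := fun v : V => imgB v ∪ P v with hcore
  have himgBcard : ∀ v, (imgB v).card = m v := by
    intro v
    simp only [himgB, hm]
    exact Finset.card_image_of_injective _ (hφinj v)
  have hPcard : ∀ v, (P v).card = bmp v := by
    intro v
    simp only [hP]
    rw [Finset.card_image_of_injective _ (hψinj v), Finset.card_range]
  have hPB : ∀ u w : V, Disjoint (imgB u) (P w) := by
    intro u w
    rw [Finset.disjoint_left]
    intro x hx hx'
    simp only [himgB, hP, Finset.mem_image] at hx hx'
    obtain ⟨a, _, ha⟩ := hx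
    obtain ⟨c, _, hc⟩ := hx'
    rw [← hc] at ha
    simp only [hφ, hψ, Nat.pair_eq_pair] at ha
    omega
  have hcorecard : ∀ v, (core v).card = m' v := by
    intro v
    simp only [hcore]
    rw [Finset.card_union_of_disjoint (hPB v v), himgBcard, hPcard, hm']
  have hcoremem : ∀ v x, x ∈ core v → ∃ i y, (i = 0 ∨ i = 1) ∧ x = Nat.pair i (Nat.pair (cid v) y) := by
    intro v x hx
    simp only [hcore, Finset.mem_union, himgB, hP, Finset.mem_image] at hx
    rcases hx with ⟨a, _, ha⟩ | ⟨a, _, ha⟩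
    · exact ⟨0, a, Or.inl rfl, ha.symm⟩
    · exact ⟨1, a, Or.inr rfl, ha.symm⟩
  have hblock : ∀ u w : V, cid u ≠ cid w → Disjoint (core u) (core w) := by
    intro u w h
    rw [Finset.disjoint_left]
    intro x hxu hxw
    obtain ⟨i, y, _, hiy⟩ := hcoremem u x hxu
    obtain ⟨i', y', _, hiy'⟩ := hcoremem w x hxw
    rw [hiy] at hiy'
    simp only [Nat.pair_eq_pair] at hiy'
    exact h hiy'.2.1
  have hPcongr : ∀ u w : V, G.Reachable u w → P u = P w := by
    intro u w h
    simp only [hP, hψ, hbmpcongr u w h, hcidcongr u w h]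
  -- the component with maximal m'
  haveI : Nonempty V := Fintype.card_pos_iff.mp (by omega)
  obtain ⟨v0, -, hmax⟩ := Finset.exists_max_image Finset.univ m' Finset.univ_nonempty
  set M := m' v0 with hM
  have hmax' : ∀ v, m' v ≤ M := fun v => hmax v (Finset.mem_univ v)
  have hM2 : 2 ≤ M := hm'2 v0
  have hMn : M ≤ Fintype.card V := by
    rcases hbmp12 v0 with h1 | h2
    · have := hbound1 v0
      have hc : (compF v0).card ≤ Fintype.card V := by
        rw [← Finset.card_univ]
        exact Finset.card_le_card (Finset.subset_univ _)
      have hmv : m v0 = (A v0 \ K v0).card := rfl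
      simp only [hM, hm']
      omega
    · have hm0 : m v0 = 0 := by
        by_contra hmm
        simp only [hbmp, if_neg hmm] at h2
        omega
      simp only [hM, hm', hm0, h2]
      omega
  set W := core v0 with hW
  have hWcard : W.card = M := hcorecard v0
  -- filler chooser
  set Fn := fun j : ℕ => if h : j ≤ W.card then (Finset.exists_subset_card_eq (s := W) h).choose else ∅
    with hFn
  have hFnspec : ∀ j, j ≤ W.card → Fn j ⊆ W ∧ (Fn j).card = j := by
    intro j hj
    simp only [hFn, dif_pos hj]
    obtain ⟨h1, h2⟩ := (Finset.exists_subset_card_eq (s := W) hj).choose_spec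
    exact ⟨h1, h2⟩
  set F := fun v : V => Fn (M - m' v) with hF
  have hFsub : ∀ v, F v ⊆ W := by
    intro v
    exact (hFnspec _ (by rw [hWcard]; omega)).1
  have hFcard : ∀ v, (F v).card = M - m' v := by
    intro v
    exact (hFnspec _ (by rw [hWcard]; omega)).2
  have hFcongr : ∀ u w : V, G.Reachable u w → F u = F w := by
    intro u w h
    simp only [hF, hm'congr u w h]
  have hF0 : ∀ v, G.Reachable v v0 → F v = ∅ := by
    intro v h
    have h1 : m' v = M := by rw [hM]; exact hm'congr v v0 h
    have h2 : (F v).card = 0 := by rw [hFcard v, h1]; omega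
    exact Finset.card_eq_zero.mp h2
  have hFdisj : ∀ v, Disjoint (core v) (F v) := by
    intro v
    by_cases h : G.Reachable v v0
    · rw [hF0 v h]
      exact Finset.disjoint_empty_right _
    · have hne : cid v ≠ cid v0 := fun hc => h (hcidsep v v0 hc)
      exact Disjoint.mono_right (hFsub v) (hblock v v0 hne)
  -- the final (pre-relabeling) sets
  set S0 := fun v : V => core v ∪ F v with hS0
  have hS0card : ∀ v, (S0 v).card = M := by
    intro v
    simp only [hS0]
    rw [Finset.card_union_of_disjoint (hFdisj v), hcorecard, hFcard]
    have := hmax' v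
    omega
  -- general set identity
  have hgenInter : ∀ (a b c : Finset ℕ), (a ∪ c) ∩ (b ∪ c) = (a ∩ b) ∪ c := by
    intro a b c
    ext x
    simp only [Finset.mem_inter, Finset.mem_union]
    tauto
  have hAinterlt : ∀ u w : V, u ≠ w → (A u ∩ A w).card < N := by
    intro u w hne
    have h1 : A u ∩ A w ⊆ A u := Finset.inter_subset_left
    have h2 := Finset.card_le_card h1
    rw [hAcard u] at h2
    rcases lt_or_eq_of_le h2 with h | h
    · exact h
    · exfalso
      have h3 : A u ∩ A w = A u := Finset.eq_of_subset_of_card_le h1 (by rw [hAcard u, h])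
      have h4 : A u ⊆ A w := by rw [← h3]; exact Finset.inter_subset_right
      have h5 : A u = A w := Finset.eq_of_subset_of_card_le h4 (by rw [hAcard u, hAcard w])
      exact hne (hAinj h5)
  have hKinter : ∀ u w : V, G.Reachable u w → K u ⊆ A u ∩ A w := by
    intro u w hr
    exact Finset.subset_inter (hKsub u u (hself u)) (hKsub u w ((hmemIff u w).mpr hr))
  have hsamecard : ∀ u w : V, u ≠ w → G.Reachable u w →
      (S0 u ∩ S0 w).card = (A u ∩ A w).card - (K u).card + bmp u + (M - m' u) := by
    intro u w hne hr
    have hKuw : K w = K u := hKcongr w u hr.symm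
    have hφuw : φ w = φ u := by
      simp only [hφ, hcidcongr w u hr.symm]
    have hS0u : S0 u = imgB u ∪ (P u ∪ F u) := by
      simp only [hS0, hcore, Finset.union_assoc]
    have hS0w : S0 w = imgB w ∪ (P u ∪ F u) := by
      simp only [hS0, hcore, Finset.union_assoc, hPcongr w u hr.symm, hFcongr w u hr.symm]
    have himgw : imgB w = (A w \ K w).image (φ u) := by
      simp only [himgB, hφuw]
    have hinter : S0 u ∩ S0 w = ((A u \ K u) ∩ (A w \ K w)).image (φ u) ∪ (P u ∪ F u) := by
      rw [hS0u, hS0w, hgenInter]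
      congr 1
      rw [Finset.image_inter _ _ (hφinj u), ← himgw]
    have hX : (A u \ K u) ∩ (A w \ K w) = (A u ∩ A w) \ K u := by
      ext x
      simp only [Finset.mem_inter, Finset.mem_sdiff, hKuw]
      tauto
    have hXcard : ((A u \ K u) ∩ (A w \ K w)).card = (A u ∩ A w).card - (K u).card := by
      rw [hX]
      exact Finset.card_sdiff_of_subset (hKinter u w hr)
    -- disjointness
    have hd1 : Disjoint (imgB u) (F u) :=
      Disjoint.mono_left (Finset.subset_union_left) (hFdisj u)
    have hd2 : Disjoint (P u) (F u) :=
      Disjoint.mono_left (Finset.subset_union_right) (hFdisj u)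
    have hd3 : Disjoint (((A u \ K u) ∩ (A w \ K w)).image (φ u)) (P u ∪ F u) := by
      have hsub : ((A u \ K u) ∩ (A w \ K w)).image (φ u) ⊆ imgB u := by
        simp only [himgB]
        exact Finset.image_subset_image (Finset.inter_subset_left)
      exact Disjoint.mono_left hsub (Finset.disjoint_union_right.mpr ⟨hPB u u, hd1⟩)
    rw [hinter, Finset.card_union_of_disjoint hd3, Finset.card_union_of_disjoint hd2,
      Finset.card_image_of_injective _ (hφinj u), hXcard, hPcard, hFcard]
    omega
  have hsameiff : ∀ u w : V, u ≠ w → G.Reachable u w →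
      ((S0 u ∩ S0 w).card = M - 1 ↔ (A u ∩ A w).card = N - 1) ∧ (S0 u ∩ S0 w).card < M := by
    intro u w hne hr
    have h1 := hsamecard u w hne hr
    have h2 := hAinterlt u w hne
    have h3 := hmN u
    have h5 := Finset.card_le_card (hKinter u w hr)
    have h6 := hmax' u
    have h7 : m' u = m u + bmp u := rfl
    have h8 := hm'2 u
    exact ⟨by omega, by omega⟩
  have hcross : ∀ u w : V, ¬G.Reachable u w → (S0 u ∩ S0 w).card + 2 ≤ M := by
    have key : ∀ u w : V, ¬G.Reachable u w → ¬G.Reachable u v0 →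
        (S0 u ∩ S0 w).card + 2 ≤ M := by
      intro u w hnr hu0
      have hcidne : cid u ≠ cid w := fun h => hnr (hcidsep u w h)
      have hcu0 : cid u ≠ cid v0 := fun h => hu0 (hcidsep u v0 h)
      have hsub : S0 u ∩ S0 w ⊆ F u := by
        intro x hx
        rw [Finset.mem_inter] at hx
        have h1 := hx.1
        have h2 := hx.2
        simp only [hS0, Finset.mem_union] at h1 h2
        rcases h1 with h1 | h1
        · rcases h2 with h2 | h2
          · exact absurd h2 (Finset.disjoint_left.mp (hblock u w hcidne) h1)
          · have hx0 : x ∈ core v0 := hFsub w h2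
            exact absurd hx0 (Finset.disjoint_left.mp (hblock u v0 hcu0) h1)
        · exact h1
      have hc1 := Finset.card_le_card hsub
      have hc2 := hFcard u
      have hc3 := hm'2 u
      have hc4 := hmax' u
      omega
    intro u w hnr
    by_cases hu0 : G.Reachable u v0
    · have hw0 : ¬G.Reachable w v0 := fun h => hnr (hu0.trans h.symm)
      have := key w u (fun h => hnr h.symm) hw0
      rw [Finset.inter_comm] at this
      exact this
    · exact key u w hnr hu0
  have hlt : ∀ u w : V, u ≠ w → (S0 u ∩ S0 w).card < M := by
    intro u w hne
    by_cases hr : G.Reachable u w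
    · exact (hsameiff u w hne hr).2
    · have := hcross u w hr
      omega
  have hadjS0 : ∀ u w : V, u ≠ w → (G.Adj u w ↔ (S0 u ∩ S0 w).card = M - 1) := by
    intro u w hne
    by_cases hr : G.Reachable u w
    · rw [hAadj u w hne]
      exact ((hsameiff u w hne hr).1).symm
    · constructor
      · intro h
        exact absurd h.reachable hr
      · intro h
        exfalso
        have := hcross u w hr
        omega

  -- union bound
  set UT := Finset.univ.biUnion S0 with hUT
  have hS0UT : ∀ v, S0 v ⊆ UT := fun v x hx =>
    Finset.mem_biUnion.mpr ⟨v, Finset.mem_univ v, hx⟩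
  have hUTsub : UT ⊆ Finset.univ.biUnion core := by
    intro x hx
    simp only [hUT, Finset.mem_biUnion] at hx ⊢
    obtain ⟨v, -, hv⟩ := hx
    simp only [hS0, Finset.mem_union] at hv
    rcases hv with h | h
    · exact ⟨v, Finset.mem_univ v, h⟩
    · exact ⟨v0, Finset.mem_univ v0, hFsub v h⟩
  set Rset := Finset.univ.image cid with hRset
  have hcov : Finset.univ.biUnion core ⊆ Rset.biUnion
      (fun j => (Finset.univ.filter (fun v => cid v = j)).biUnion core) := by
    intro x hx
    simp only [Finset.mem_biUnion] at hx ⊢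
    obtain ⟨v, -, hv⟩ := hx
    exact ⟨cid v, Finset.mem_image_of_mem cid (Finset.mem_univ v),
      ⟨v, Finset.mem_filter.mpr ⟨Finset.mem_univ v, rfl⟩, hv⟩⟩
  have hperfiber : ∀ j ∈ Rset, ((Finset.univ.filter (fun v => cid v = j)).biUnion core).card
      ≤ 2 * (Finset.univ.filter (fun v => cid v = j)).card := by
    intro j hj
    obtain ⟨vj, -, hvj⟩ := Finset.mem_image.mp hj
    have hfib : Finset.univ.filter (fun v => cid v = j) = compF vj := by
      ext v
      simp only [Finset.mem_filter, Finset.mem_univ, true_and, hmemIff]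
      constructor
      · intro h
        exact hcidsep vj v (by rw [h, hvj])
      · intro h
        rw [← hvj]
        exact (hcidcongr vj v h).symm
    rw [hfib]
    have hsub2 : (compF vj).biUnion core ⊆
        (((compF vj).biUnion A) \ K vj).image (φ vj) ∪ P vj := by
      intro x hx
      rw [Finset.mem_biUnion] at hx
      obtain ⟨u, hu, hxu⟩ := hx
      have hru : G.Reachable vj u := (hmemIff vj u).mp hu
      simp only [hcore, Finset.mem_union] at hxu
      rcases hxu with h | h
      · apply Finset.mem_union_left
        simp only [himgB] at h
        rw [Finset.mem_image] at h
        obtain ⟨y, hy, hyx⟩ := h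
        refine Finset.mem_image.mpr ⟨y, ?_, ?_⟩
        · rw [Finset.mem_sdiff] at hy ⊢
          refine ⟨Finset.mem_biUnion.mpr ⟨u, hu, hy.1⟩, ?_⟩
          rw [hKcongr vj u hru]
          exact hy.2
        · rw [← hyx]
          simp only [hφ, hcidcongr u vj hru.symm]
      · apply Finset.mem_union_right
        rw [← hPcongr u vj hru.symm]
        exact h
    have hc1 := Finset.card_le_card hsub2
    have hc2 := Finset.card_union_le ((((compF vj).biUnion A) \ K vj).image (φ vj)) (P vj)
    have hc3 := Finset.card_image_le (s := ((compF vj).biUnion A) \ K vj) (f := φ vj)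
    have hc4 := hbound2 vj
    have hc5 := hPcard vj
    have hc6 := hbmp12 vj
    omega
  have hfiberwise : Fintype.card V = ∑ j ∈ Rset, (Finset.univ.filter (fun v => cid v = j)).card := by
    rw [← Finset.card_univ]
    exact Finset.card_eq_sum_card_fiberwise
      (fun x _ => Finset.mem_image_of_mem cid (Finset.mem_univ x))
  have hUTcard : UT.card ≤ 2 * Fintype.card V := by
    calc UT.card ≤ (Rset.biUnion
          (fun j => (Finset.univ.filter (fun v => cid v = j)).biUnion core)).card :=
        Finset.card_le_card (hUTsub.trans hcov)
      _ ≤ ∑ j ∈ Rset, ((Finset.univ.filter (fun v => cid v = j)).biUnion core).card :=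
        Finset.card_biUnion_le
      _ ≤ ∑ j ∈ Rset, 2 * (Finset.univ.filter (fun v => cid v = j)).card :=
        Finset.sum_le_sum hperfiber
      _ = 2 * ∑ j ∈ Rset, (Finset.univ.filter (fun v => cid v = j)).card := by
        rw [Finset.mul_sum]
      _ = 2 * Fintype.card V := by rw [← hfiberwise]
  -- relabel into Icc 1 (2n)
  have hIccCard : (Finset.Icc 1 (2 * Fintype.card V)).card = 2 * Fintype.card V := by
    rw [Nat.card_Icc]
    omega
  obtain ⟨t', ht'sub, ht'card⟩ := Finset.exists_subset_card_eq
    (by rw [hIccCard]; exact hUTcard : UT.card ≤ (Finset.Icc 1 (2 * Fintype.card V)).card)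
  have e := Finset.equivOfCardEq (ht'card.symm)
  set f := fun x : ℕ => if h : x ∈ UT then (e ⟨x, h⟩ : ℕ) else 0 with hf
  have hfmem : ∀ x ∈ UT, f x ∈ t' := by
    intro x hx
    simp only [hf, dif_pos hx]
    exact (e ⟨x, hx⟩).2
  have hfinj : ∀ x ∈ UT, ∀ y ∈ UT, f x = f y → x = y := by
    intro x hx y hy h
    simp only [hf, dif_pos hx, dif_pos hy] at h
    have h2 := e.injective (Subtype.ext h)
    exact Subtype.ext_iff.mp h2
  set S := fun v : V => (S0 v).image f with hS
  have hSimginter : ∀ u w : V, S u ∩ S w = (S0 u ∩ S0 w).image f := by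
    intro u w
    ext y
    simp only [hS, Finset.mem_inter, Finset.mem_image]
    constructor
    · rintro ⟨⟨a, ha, rfl⟩, ⟨b, hb, hba⟩⟩
      have hba' : a = b := hfinj a (hS0UT u ha) b (hS0UT w hb) hba.symm
      subst hba'
      exact ⟨a, ⟨ha, hb⟩, rfl⟩
    · rintro ⟨a, ⟨ha1, ha2⟩, rfl⟩
      exact ⟨⟨a, ha1, rfl⟩, ⟨a, ha2, rfl⟩⟩
  have hSintercard : ∀ u w : V, (S u ∩ S w).card = (S0 u ∩ S0 w).card := by
    intro u w
    rw [hSimginter]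
    apply Finset.card_image_of_injOn
    intro x hx y hy h
    exact hfinj x (hS0UT u (Finset.mem_inter.mp hx).1) y (hS0UT u (Finset.mem_inter.mp hy).1) h
  have hScard : ∀ v, (S v).card = M := by
    intro v
    rw [hS]
    have : ((S0 v).image f).card = (S0 v).card :=
      Finset.card_image_of_injOn (fun x hx y hy h => hfinj x (hS0UT v hx) y (hS0UT v hy) h)
    rw [this, hS0card]
  refine ⟨M, by omega, hMn, S, ?_, ?_, hScard, ?_⟩
  · intro u w h
    by_contra hne
    have h1 := hlt u w hne
    have h2 := hSintercard u w
    rw [h, Finset.inter_self, hScard w] at h2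
    omega
  · intro v x hx
    simp only [hS, Finset.mem_image] at hx
    obtain ⟨a, ha, rfl⟩ := hx
    exact ht'sub (hfmem a (hS0UT v ha))
  · intro v w hvw
    rw [hadjS0 v w hvw, hSintercard]
end Main


/-- every JIS graph of order `n ≥ 1` is, for some `m ≤ n`, isomorphic to an
induced subgraph of the Johnson graph `J(m, 2n)`, i.e. it can be realized by `m`-element
subsets of `{1, …, 2n}`. -/
theorem isJIS_realized_in_johnson {V : Type*} [Fintype V] (G : SimpleGraph V)
    (hG : IsJIS G) (hn : 1 ≤ Fintype.card V) :
    ∃ m : ℕ, 0 < m ∧ m ≤ Fintype.card V ∧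
      ∃ S : V → Finset ℕ, Function.Injective S ∧
        (∀ v, S v ⊆ Finset.Icc 1 (2 * Fintype.card V)) ∧
        (∀ v, (S v).card = m) ∧
        ∀ v w : V, v ≠ w → (G.Adj v w ↔ (S v ∩ S w).card = m - 1) := by
  exact jis_main_thm G hG hn
end

section
/- Let G be a connected JIS graph with n vertices, where n ≥ 2. Then there exists a positive integer m ≤ n − 1 and an injective assignment v ↦ S_v of m-element subsets of {1, 2, …, 2n − 1} to the vertices of G such that two distinct vertices v and w are adjacent if and only if |S_v ∩ S_w| = m − 1; that is, G is isomorphic to an induced subgraph of the Johnson graph J(m, 2n − 1). -/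
open Finset

/-- Growing a connected set of vertices one at a time: bounds for the union and the
intersection of the label sets. -/
lemma jis_grow_s17 {V : Type*} [Fintype V] [DecidableEq V] (G : SimpleGraph V)
    (hconn : G.Connected) (S : V → Finset ℕ) (k : ℕ)
    (hk : ∀ v, (S v).card = k)
    (hstep : ∀ v w : V, G.Adj v w → (S v \ S w).card ≤ 1) :
    ∀ t : ℕ, t + 1 ≤ Fintype.card V →
      ∃ A : Finset V, ∃ hA : A.Nonempty, A.card = t + 1 ∧
        (A.sup S).card ≤ k + t ∧ k ≤ (A.inf' hA S).card + t := by
  intro t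
  induction t with
  | zero =>
    intro _
    obtain ⟨v⟩ := hconn.nonempty
    exact ⟨{v}, singleton_nonempty v, by simp, by simp [hk v], by simp [hk v]⟩
  | succ t ih =>
    intro ht
    obtain ⟨A, hA, hcard, hsup, hinf⟩ := ih (by omega)
    have hAne : A ≠ univ := by
      intro h; rw [h, card_univ] at hcard; omega
    obtain ⟨w, hw⟩ : ∃ w, w ∉ A := by
      by_contra h; push_neg at h
      exact hAne (eq_univ_iff_forall.mpr h)
    obtain ⟨u, hu⟩ := hA
    obtain ⟨p⟩ := hconn u w
    obtain ⟨d, _, hds, hdt⟩ := p.exists_boundary_dart (↑A : Set V) hu hw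
    have hds' : d.fst ∈ A := hds
    have hdt' : d.snd ∉ A := hdt
    have hadj : G.Adj d.fst d.snd := d.adj
    refine ⟨insert d.snd A, insert_nonempty _ _, ?_, ?_, ?_⟩
    · rw [card_insert_of_notMem hdt', hcard]
    · rw [sup_insert]
      have h1 : (S d.snd \ A.sup S).card ≤ 1 := by
        refine le_trans (card_le_card (sdiff_subset_sdiff (Finset.Subset.refl _) ?_))
          (hstep _ _ hadj.symm)
        exact (le_sup hds' : S d.fst ⊆ A.sup S)
      have h2 : (S d.snd \ A.sup S).card + (A.sup S).card = (S d.snd ∪ A.sup S).card :=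
        card_sdiff_add_card _ _
      have : (S d.snd ⊔ A.sup S : Finset ℕ) = S d.snd ∪ A.sup S := rfl
      rw [this]
      omega
    · have hA2 : A.Nonempty := ⟨u, hu⟩
      set X := A.inf' hA2 S with hX
      have hinf' : k ≤ X.card + t := hinf
      rw [inf'_insert (H := hA2)]
      have hXa : X ⊆ S d.fst := inf'_le _ hds'
      have h1 : (X \ S d.snd).card ≤ 1 := by
        refine le_trans (card_le_card (sdiff_subset_sdiff hXa (Finset.Subset.refl _)))
          (hstep _ _ hadj)
      have h2 : (X ∩ S d.snd).card + (X \ S d.snd).card = X.card :=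
        card_inter_add_card_sdiff _ _
      have h3 : (S d.snd ⊓ X : Finset ℕ) = X ∩ S d.snd := inter_comm _ _
      rw [h3]
      omega

/-- every connected JIS graph of order `n ≥ 2` is, for some `m ≤ n - 1`,
isomorphic to an induced subgraph of the Johnson graph `J(m, 2n - 1)`, i.e. it can be
realized by `m`-element subsets of `{1, …, 2n - 1}`. -/
theorem connected_isJIS_realized_in_johnson {V : Type*} [Fintype V] (G : SimpleGraph V)
    (hG : IsJIS G) (hconn : G.Connected) (hn : 2 ≤ Fintype.card V) :
    ∃ m : ℕ, 0 < m ∧ m ≤ Fintype.card V - 1 ∧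
      ∃ S : V → Finset ℕ, Function.Injective S ∧
        (∀ v, S v ⊆ Finset.Icc 1 (2 * Fintype.card V - 1)) ∧
        (∀ v, (S v).card = m) ∧
        ∀ v w : V, v ≠ w → (G.Adj v w ↔ (S v ∩ S w).card = m - 1) := by
  classical
  obtain ⟨k, hkpos, S, hSinj, hScard, hSadj⟩ := hG
  set n := Fintype.card V with hndef
  -- adjacent vertices have label sets differing in one element
  have hstep : ∀ v w : V, G.Adj v w → (S v \ S w).card ≤ 1 := by
    intro v w hadj
    have hne : v ≠ w := hadj.ne
    have hcap : (S v ∩ S w).card = k - 1 := (hSadj v w hne).mp hadj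
    have h1 : (S v \ (S v ∩ S w)).card = (S v).card - (S v ∩ S w).card :=
      card_sdiff_of_subset (inter_subset_left)
    have h2 : S v \ (S v ∩ S w) = S v \ S w := by
      ext x; simp only [mem_sdiff, mem_inter]; tauto
    rw [h2] at h1
    rw [h1, hScard v, hcap]
    omega
  obtain ⟨A, hA, hAcard, hsup, hinf⟩ := jis_grow_s17 G hconn S k hScard hstep (n - 1) (by omega)
  have hAuniv : A = univ := by
    apply Finset.eq_univ_of_card
    rw [hAcard]; omega
  subst hAuniv
  set core := univ.inf' hA S with hcore
  set U := univ.sup S with hU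
  have hcore_sub : ∀ v, core ⊆ S v := fun v => inf'_le _ (mem_univ v)
  have hsub_U : ∀ v, S v ⊆ U := fun v => le_sup (mem_univ v)
  have hcore_card : k ≤ core.card + (n - 1) := hinf
  have hU_card : U.card ≤ k + (n - 1) := hsup
  -- core is strictly smaller than k
  have hcore_lt : core.card < k := by
    by_contra h
    push_neg at h
    have hall : ∀ v, S v = core := by
      intro v
      exact (Finset.eq_of_subset_of_card_le (hcore_sub v) (by rw [hScard v]; exact h)).symm
    obtain ⟨v, w, hvw⟩ := Fintype.exists_pair_of_one_lt_card (by omega : 1 < Fintype.card V)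
    exact hvw (hSinj ((hall v).trans (hall w).symm))
  set m := k - core.card with hm
  have hmpos : 0 < m := by omega
  have hmle : m ≤ n - 1 := by omega
  -- the trimmed sets
  set S1 : V → Finset ℕ := fun v => S v \ core with hS1
  have hS1card : ∀ v, (S1 v).card = m := by
    intro v; rw [hS1]; simp only
    rw [card_sdiff_of_subset (hcore_sub v), hScard v]
  have hS1recover : ∀ v, S1 v ∪ core = S v := fun v => sdiff_union_of_subset (hcore_sub v)
  have hS1inj : Function.Injective S1 := by
    intro v w h
    apply hSinj
    rw [← hS1recover v, ← hS1recover w, h]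
  have hS1inter : ∀ v w, (S1 v ∩ S1 w).card = (S v ∩ S w).card - core.card := by
    intro v w
    have h1 : S1 v ∩ S1 w = (S v ∩ S w) \ core := by
      ext x; simp only [hS1, mem_sdiff, mem_inter]; tauto
    rw [h1, card_sdiff_of_subset (subset_inter (hcore_sub v) (hcore_sub w))]
  have hcore_le_inter : ∀ v w : V, core.card ≤ (S v ∩ S w).card :=
    fun v w => card_le_card (subset_inter (hcore_sub v) (hcore_sub w))
  have hS1adj : ∀ v w : V, v ≠ w → (G.Adj v w ↔ (S1 v ∩ S1 w).card = m - 1) := by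
    intro v w hne
    rw [hSadj v w hne, hS1inter v w]
    have := hcore_le_inter v w
    omega
  -- the ground set
  set L := U \ core with hL
  have hS1subL : ∀ v, S1 v ⊆ L :=
    fun v => sdiff_subset_sdiff (hsub_U v) (Finset.Subset.refl _)
  have hcoreU : core ⊆ U := by
    obtain ⟨v0, _⟩ := hA
    exact (hcore_sub v0).trans (hsub_U v0)
  have hLcard : L.card ≤ 2 * n - 1 := by
    rw [hL, card_sdiff_of_subset hcoreU]
    have := card_le_card hcoreU
    omega
  set T := Finset.Icc 1 (2 * n - 1) with hT
  have hTcard : T.card = 2 * n - 1 := by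
    rw [hT, Nat.card_Icc]
    omega
  obtain ⟨T', hT'sub, hT'card⟩ := exists_subset_card_eq (show L.card ≤ T.card by omega)
  have hLT' : L.card = T'.card := hT'card.symm
  have hcardeq : Fintype.card L = Fintype.card T' := by
    simp only [Fintype.card_coe]; exact hLT'
  set e := Fintype.equivOfCardEq hcardeq with he
  set f : ℕ → ℕ := fun x => if h : x ∈ L then ((e ⟨x, h⟩ : T') : ℕ) else 0 with hf
  have hfinj : Set.InjOn f (L : Set ℕ) := by
    intro x hx y hy hxy
    have hx' : x ∈ L := hx
    have hy' : y ∈ L := hy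
    simp only [hf] at hxy
    rw [dif_pos hx', dif_pos hy'] at hxy
    have := e.injective (Subtype.ext hxy)
    exact Subtype.ext_iff.mp this
  have hfmem : ∀ x ∈ L, f x ∈ T := by
    intro x hx
    simp only [hf]
    rw [dif_pos hx]
    exact hT'sub (e ⟨x, hx⟩).2
  set S2 : V → Finset ℕ := fun v => (S1 v).image f with hS2
  refine ⟨m, hmpos, hmle, S2, ?_, ?_, ?_, ?_⟩
  · intro v w h
    apply hS1inj
    have hinjv : Set.InjOn f (S1 v : Set ℕ) := hfinj.mono (by exact_mod_cast hS1subL v)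
    ext x
    constructor
    · intro hx
      have : f x ∈ S2 w := by rw [← h]; exact mem_image_of_mem f hx
      obtain ⟨y, hy, hxy⟩ := mem_image.mp this
      have : y = x := hfinj (by exact_mod_cast hS1subL w hy) (by exact_mod_cast hS1subL v hx) hxy
      rwa [← this]
    · intro hx
      have : f x ∈ S2 v := by rw [h]; exact mem_image_of_mem f hx
      obtain ⟨y, hy, hxy⟩ := mem_image.mp this
      have : y = x := hfinj (by exact_mod_cast hS1subL v hy) (by exact_mod_cast hS1subL w hx) hxy
      rwa [← this]
  · intro v x hx
    obtain ⟨y, hy, hxy⟩ := mem_image.mp hx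
    rw [← hxy]
    exact hfmem y (hS1subL v hy)
  · intro v
    rw [hS2]
    simp only
    rw [card_image_of_injOn (hfinj.mono (by exact_mod_cast hS1subL v)), hS1card v]
  · intro v w hne
    have himg : (S1 v ∩ S1 w).image f = (S1 v).image f ∩ (S1 w).image f := by
      apply image_inter_of_injOn
      intro a ha b hb
      apply hfinj
      · rcases Finset.mem_union.mp (by exact_mod_cast ha) with h | h
        · exact_mod_cast hS1subL v h
        · exact_mod_cast hS1subL w h
      · rcases Finset.mem_union.mp (by exact_mod_cast hb) with h | h
        · exact_mod_cast hS1subL v h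
        · exact_mod_cast hS1subL w h
    have hcard2 : (S2 v ∩ S2 w).card = (S1 v ∩ S1 w).card := by
      rw [hS2]; simp only
      rw [← himg, card_image_of_injOn
        (hfinj.mono (by exact_mod_cast (inter_subset_left.trans (hS1subL v))))]
    rw [hcard2]
    exact hS1adj v w hne
end
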